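/- arXiv:2007.14578 — 8 statements merged into one kernel-verified Lean document; each statement's English description precedes it below -/
import Mathlib

section
/- Let n ≥ 1, p ∈ [1,∞], and let f, g, h : ℝ^n → ℝ be measurable functions such that f is continuously differentiable with gradient ∇f ∈ L^p(ℝ^n), g ∈ L^∞(ℝ^n), h ∈ L^1(ℝ^n), and the function x ↦ ‖x‖·|h(x)| belongs to L^1(ℝ^n). Then ‖h*(fg) − f·(h*g)‖_{L^p(ℝ^n)} ≤ ‖x·h(x)‖_{L^1_x(ℝ^n)} · ‖∇f‖_{L^p(ℝ^n)} · ‖g‖_{L^∞(ℝ^n)}. -/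
open MeasureTheory
open scoped ENNReal

section aux

theorem mink_aux {α β : Type*} [MeasurableSpace α] [MeasurableSpace β]
    (μ : Measure α) (ν : Measure β) [SigmaFinite μ] [SFinite ν]
    {r : ℝ} (hr : 1 ≤ r) {F : α → β → ℝ≥0∞} (hF : Measurable (Function.uncurry F)) :
    (∫⁻ x, (∫⁻ y, F x y ∂ν) ^ r ∂μ) ^ (1/r) ≤ ∫⁻ y, (∫⁻ x, F x y ^ r ∂μ) ^ (1/r) ∂ν := by
  have hr0 : (0:ℝ) < r := lt_of_lt_of_le one_pos hr
  set G : α → ℝ≥0∞ := fun x => ∫⁻ y, F x y ∂ν with hG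
  have hGm : Measurable G := hF.lintegral_prod_right
  set R : ℝ≥0∞ := ∫⁻ y, (∫⁻ x, F x y ^ r ∂μ) ^ (1/r) ∂ν with hR
  rcases eq_or_lt_of_le hr with hr1 | hr1
  · subst hr1
    rw [hR]
    simp only [one_div, inv_one, ENNReal.rpow_one]
    rw [lintegral_lintegral_swap (hF.aemeasurable)]
  -- r > 1 case
  have hrne : r ≠ 0 := ne_of_gt hr0
  set q : ℝ := r / (r - 1) with hq
  have hconj : r.HolderConjugate q := Real.HolderConjugate.conjExponent hr1
  have hqr : (r - 1) * q = r := by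
    rw [hq, mul_comm, div_mul_cancel₀ _ (sub_ne_zero.mpr (ne_of_gt hr1))]
  -- truncations
  set s : ℕ → Set α := spanningSets μ with hs
  set Gm : ℕ → α → ℝ≥0∞ := fun m x => (s m).indicator (fun x => min (G x) (m : ℝ≥0∞)) x with hGm'
  have hGmm : ∀ m, Measurable (Gm m) :=
    fun m => (hGm.min measurable_const).indicator (measurableSet_spanningSets μ m)
  have hGmle : ∀ m x, Gm m x ≤ G x := by
    intro m x
    by_cases hx : x ∈ s m
    · simp [hGm', Set.indicator_of_mem hx]
    · simp [hGm', Set.indicator_of_notMem hx]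
  have hAmfin : ∀ m, ∫⁻ x, Gm m x ^ r ∂μ < ∞ := by
    intro m
    have hb : ∀ x, Gm m x ^ r ≤ (s m).indicator (fun _ => (m:ℝ≥0∞) ^ r) x := by
      intro x
      by_cases hx : x ∈ s m
      · simp only [hGm', Set.indicator_of_mem hx]
        exact ENNReal.rpow_le_rpow (min_le_right _ _) hr0.le
      · simp [hGm', Set.indicator_of_notMem hx, ENNReal.zero_rpow_of_pos hr0]
    calc ∫⁻ x, Gm m x ^ r ∂μ ≤ ∫⁻ x, (s m).indicator (fun _ => (m:ℝ≥0∞) ^ r) x ∂μ :=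
          lintegral_mono hb
      _ = (m:ℝ≥0∞) ^ r * μ (s m) := by
          rw [lintegral_indicator (measurableSet_spanningSets μ m), lintegral_const,
            Measure.restrict_apply_univ]
      _ < ∞ := ENNReal.mul_lt_top
          (ENNReal.rpow_lt_top_of_nonneg hr0.le (by simp))
          (measure_spanningSets_lt_top μ m)
  -- main estimate per m
  have key : ∀ m, ∫⁻ x, Gm m x ^ r ∂μ ≤ R ^ r := by
    intro m
    set A : ℝ≥0∞ := ∫⁻ x, Gm m x ^ r ∂μ with hA
    rcases eq_or_ne A 0 with hA0 | hA0
    · rw [hA0]; exact zero_le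
    have hmain : A ≤ A ^ (1/q) * R := by
      have e1 : ∀ x, Gm m x ^ r = Gm m x ^ (r-1) * Gm m x := by
        intro x
        conv_lhs => rw [show r = (r-1)+1 by ring]
        rw [ENNReal.rpow_add_of_nonneg _ _ (by linarith) zero_le_one, ENNReal.rpow_one]
      have step1 : A ≤ ∫⁻ y, ∫⁻ x, Gm m x ^ (r-1) * F x y ∂μ ∂ν := by
        calc A = ∫⁻ x, Gm m x ^ (r-1) * Gm m x ∂μ := by rw [hA]; exact lintegral_congr e1
          _ ≤ ∫⁻ x, Gm m x ^ (r-1) * G x ∂μ :=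
              lintegral_mono fun x => mul_le_mul_right (hGmle m x) _
          _ = ∫⁻ x, ∫⁻ y, Gm m x ^ (r-1) * F x y ∂ν ∂μ :=
              lintegral_congr fun x =>
                (lintegral_const_mul _ (hF.comp measurable_prodMk_left)).symm
          _ = ∫⁻ y, ∫⁻ x, Gm m x ^ (r-1) * F x y ∂μ ∂ν := by
              rw [lintegral_lintegral_swap]
              exact (((hGmm m).comp measurable_fst).pow_const _ |>.mul hF).aemeasurable
      have step2 : ∀ y, ∫⁻ x, Gm m x ^ (r-1) * F x y ∂μ
          ≤ A ^ (1/q) * (∫⁻ x, F x y ^ r ∂μ) ^ (1/r) := by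
        intro y
        calc ∫⁻ x, Gm m x ^ (r-1) * F x y ∂μ
            ≤ (∫⁻ x, (Gm m x ^ (r-1)) ^ q ∂μ) ^ (1/q) * (∫⁻ x, F x y ^ r ∂μ) ^ (1/r) :=
              ENNReal.lintegral_mul_le_Lp_mul_Lq μ hconj.symm
                (((hGmm m).pow_const _).aemeasurable)
                ((hF.comp measurable_prodMk_right).aemeasurable)
          _ = A ^ (1/q) * (∫⁻ x, F x y ^ r ∂μ) ^ (1/r) := by
              congr 2
              refine lintegral_congr fun x => ?_
              rw [← ENNReal.rpow_mul, hqr]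
      calc A ≤ ∫⁻ y, ∫⁻ x, Gm m x ^ (r-1) * F x y ∂μ ∂ν := step1
        _ ≤ ∫⁻ y, A ^ (1/q) * (∫⁻ x, F x y ^ r ∂μ) ^ (1/r) ∂ν := lintegral_mono step2
        _ = A ^ (1/q) * R := by
            rw [hR, lintegral_const_mul]
            exact (show Measurable (Function.uncurry fun x y => F x y ^ r) from
              hF.pow_const r).lintegral_prod_left.pow_const _
    -- conclude A^(1/r) ≤ R, i.e. A ≤ R^r
    have hAfin : A ≠ ∞ := (hAmfin m).ne
    have hsplit : A = A ^ (1/q) * A ^ (1/r) := by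
      rw [← ENNReal.rpow_add _ _ hA0 hAfin, one_div, one_div,
        hconj.symm.inv_add_inv_eq_one, ENNReal.rpow_one]
    nth_rewrite 1 [hsplit] at hmain
    have hqpos : (0:ℝ) < q := hconj.symm.pos
    have hAq0 : A ^ (1/q) ≠ 0 :=
      (ENNReal.rpow_pos (pos_iff_ne_zero.mpr hA0) hAfin).ne'
    have hAqfin : A ^ (1/q) ≠ ∞ :=
      ENNReal.rpow_ne_top_of_nonneg (by positivity) hAfin
    have h1r : A ^ (1/r) ≤ R := (ENNReal.mul_le_mul_iff_right hAq0 hAqfin).mp hmain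
    calc A = (A ^ (1/r)) ^ r := by
          rw [← ENNReal.rpow_mul, one_div, inv_mul_cancel₀ hrne, ENNReal.rpow_one]
      _ ≤ R ^ r := ENNReal.rpow_le_rpow h1r hr0.le
  -- pass to the limit
  have hmono : Monotone fun m => fun x => Gm m x ^ r := by
    intro a b hab x
    apply ENNReal.rpow_le_rpow _ hr0.le
    by_cases hx : x ∈ s a
    · rw [hGm']
      simp only
      rw [Set.indicator_of_mem hx, Set.indicator_of_mem (monotone_spanningSets μ hab hx)]
      exact min_le_min le_rfl (by exact_mod_cast Nat.cast_le.mpr hab)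
    · simp [hGm', Set.indicator_of_notMem hx]
  have hsup : ∀ x, (⨆ m, Gm m x ^ r) = G x ^ r := by
    intro x
    have h1 : (⨆ m, Gm m x) = G x := by
      apply le_antisymm (iSup_le fun m => hGmle m x)
      rcases eq_or_ne (G x) 0 with h0 | h0
      · rw [h0]; exact zero_le
      refine le_of_forall_lt fun b hb => lt_iSup_iff.mpr ?_
      obtain ⟨m0, hm0⟩ : ∃ m0, x ∈ s m0 := by
        have hx : x ∈ ⋃ m, s m := by rw [hs, iUnion_spanningSets μ]; trivial
        exact Set.mem_iUnion.mp hx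
      obtain ⟨m1, hm1⟩ : ∃ m1 : ℕ, b < m1 := ENNReal.exists_nat_gt hb.ne_top
      refine ⟨max m0 m1, ?_⟩
      have hmem : x ∈ s (max m0 m1) := monotone_spanningSets μ (le_max_left _ _) hm0
      rw [hGm']
      simp only
      rw [Set.indicator_of_mem hmem]
      exact lt_min hb (hm1.trans_le (by exact_mod_cast Nat.cast_le.mpr (le_max_right m0 m1)))
    rw [← h1]
    exact (Monotone.map_iSup_of_continuousAt
      (ENNReal.continuous_rpow_const.continuousAt)
      (ENNReal.monotone_rpow_of_nonneg hr0.le)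
      (ENNReal.zero_rpow_of_pos hr0)).symm
  have hlim : ∫⁻ x, G x ^ r ∂μ ≤ R ^ r := by
    have : ∫⁻ x, G x ^ r ∂μ = ⨆ m, ∫⁻ x, Gm m x ^ r ∂μ := by
      rw [← lintegral_iSup (fun m => (hGmm m).pow_const r) (fun a b hab x => hmono hab x)]
      exact lintegral_congr fun x => (hsup x).symm
    rw [this]
    exact iSup_le key
  calc (∫⁻ x, G x ^ r ∂μ) ^ (1/r) ≤ (R ^ r) ^ (1/r) := ENNReal.rpow_le_rpow hlim (by positivity)
    _ = R := by rw [← ENNReal.rpow_mul, mul_one_div, div_self hrne, ENNReal.rpow_one]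

theorem ftc_aux {n : ℕ} (f : EuclideanSpace ℝ (Fin n) → ℝ) (hf : ContDiff ℝ 1 f)
    (x z : EuclideanSpace ℝ (Fin n)) :
    (‖f (x - z) - f x‖₊ : ℝ≥0∞) ≤
      (‖z‖₊ : ℝ≥0∞) * ∫⁻ t in Set.Ioc (0:ℝ) 1, (‖fderiv ℝ f (x - t • z)‖₊ : ℝ≥0∞) := by
  have hd : ∀ t : ℝ, HasDerivAt (fun s : ℝ => f (x - s • z)) (fderiv ℝ f (x - t • z) (-z)) t := by
    intro t
    have h1 : HasDerivAt (fun s : ℝ => x - s • z) (-z) t := by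
      simpa using ((hasDerivAt_id t).smul_const z).const_sub x
    exact ((hf.differentiable one_ne_zero (x - t • z)).hasFDerivAt).comp_hasDerivAt t h1
  have hcont : Continuous fun t : ℝ => fderiv ℝ f (x - t • z) (-z) := by
    have h2 : Continuous fun t : ℝ => fderiv ℝ f (x - t • z) :=
      (hf.continuous_fderiv one_ne_zero).comp (continuous_const.sub (continuous_id.smul continuous_const))
    exact h2.clm_apply continuous_const
  have heq : f (x - z) - f x = ∫ t in (0:ℝ)..1, fderiv ℝ f (x - t • z) (-z) := by
    rw [intervalIntegral.integral_eq_sub_of_hasDerivAt (fun t _ => hd t)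
      (hcont.intervalIntegrable 0 1)]
    norm_num
  rw [heq, intervalIntegral.integral_of_le zero_le_one]
  calc (‖∫ t in Set.Ioc (0:ℝ) 1, fderiv ℝ f (x - t • z) (-z)‖₊ : ℝ≥0∞)
      ≤ ∫⁻ t in Set.Ioc (0:ℝ) 1, ‖fderiv ℝ f (x - t • z) (-z)‖₊ :=
        enorm_integral_le_lintegral_enorm _
    _ ≤ ∫⁻ t in Set.Ioc (0:ℝ) 1, (‖z‖₊ : ℝ≥0∞) * ‖fderiv ℝ f (x - t • z)‖₊ := by
        refine lintegral_mono fun t => ?_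
        rw [← ENNReal.coe_mul, ENNReal.coe_le_coe, mul_comm]
        simpa [nnnorm_neg] using (fderiv ℝ f (x - t • z)).le_opNNNorm (-z)
    _ = (‖z‖₊ : ℝ≥0∞) * ∫⁻ t in Set.Ioc (0:ℝ) 1, (‖fderiv ℝ f (x - t • z)‖₊ : ℝ≥0∞) :=
        lintegral_const_mul' _ _ ENNReal.coe_ne_top

end aux

/-- Commutator estimate for convolution against multiplication (Lemma 3.2 of
Hmidi–Keraani–Rousset), `L^p`–`L^∞` version. -/
theorem commutator_convolution_Lp (n : ℕ) (hn : 1 ≤ n) (p : ℝ≥0∞) (hp : 1 ≤ p)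
    (f g h : EuclideanSpace ℝ (Fin n) → ℝ)
    (hf : ContDiff ℝ 1 f) (hg : Measurable g) (hh : Measurable h)
    (hfp : MemLp (fun x => fderiv ℝ f x) p volume)
    (hgb : MemLp g ∞ volume)
    (hhint : Integrable h volume)
    (hxh : Integrable (fun x => ‖x‖ * |h x|) volume) :
    eLpNorm (fun x => (∫ y, h (x - y) * (f y * g y)) - f x * ∫ y, h (x - y) * g y) p volume
      ≤ ENNReal.ofReal (∫ x, ‖x‖ * |h x|) * eLpNorm (fun x => fderiv ℝ f x) p volume *
          eLpNorm g ∞ volume := by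
  set μ : Measure (EuclideanSpace ℝ (Fin n)) := volume with hμ
  set ν₂ : Measure ℝ := volume.restrict (Set.Ioc (0:ℝ) 1) with hν₂
  set ν : Measure ((EuclideanSpace ℝ (Fin n)) × ℝ) := μ.prod ν₂ with hν
  set N : (EuclideanSpace ℝ (Fin n)) → ℝ≥0∞ := fun x => (‖fderiv ℝ f x‖₊ : ℝ≥0∞) with hN
  set w : (EuclideanSpace ℝ (Fin n)) → ℝ≥0∞ := fun z => (‖z‖₊ : ℝ≥0∞) * (‖h z‖₊ : ℝ≥0∞) with hw
  set c : ℝ≥0∞ := eLpNorm g ∞ volume with hc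
  set D : (EuclideanSpace ℝ (Fin n)) → ℝ := fun x =>
    (∫ y, h (x - y) * (f y * g y)) - f x * ∫ y, h (x - y) * g y with hD
  set Φ : (EuclideanSpace ℝ (Fin n)) → ℝ≥0∞ := fun x => ∫⁻ q : (EuclideanSpace ℝ (Fin n)) × ℝ, w q.1 * N (x - q.2 • q.1) ∂ν with hΦdef
  -- basic measurability
  have hNm : Measurable N := (hf.continuous_fderiv one_ne_zero).measurable.enorm
  have hwm : Measurable w := measurable_id.enorm.mul hh.enorm
  have hwfin : ∀ z, w z ≠ ∞ := fun z => ENNReal.mul_ne_top ENNReal.coe_ne_top ENNReal.coe_ne_top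
  have hwq : Measurable fun q : (EuclideanSpace ℝ (Fin n)) × ℝ => w q.1 :=
    hwm.comp measurable_fst
  have hFm : Measurable (Function.uncurry fun (x : (EuclideanSpace ℝ (Fin n))) (q : (EuclideanSpace ℝ (Fin n)) × ℝ) => w q.1 * N (x - q.2 • q.1)) := by
    rw [Function.uncurry_def]
    exact (hwm.comp (measurable_snd.fst)).mul
      (hNm.comp (measurable_fst.sub (measurable_snd.snd.smul measurable_snd.fst)))
  have hcfin : c ≠ ∞ := hgb.2.ne
  have hgc : ∀ᵐ y ∂μ, (‖g y‖₊ : ℝ≥0∞) ≤ c := by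
    rw [hc, eLpNorm_exponent_top]
    exact enorm_ae_le_eLpNormEssSup g μ
  have hν₂univ : ν₂ Set.univ = 1 := by
    rw [hν₂, Measure.restrict_apply_univ, Real.volume_Ioc]
    norm_num
  -- I
  set I : ℝ≥0∞ := ∫⁻ z, w z ∂μ with hIdef
  have hI : ENNReal.ofReal (∫ x, ‖x‖ * |h x|) = I := by
    rw [MeasureTheory.ofReal_integral_eq_lintegral_ofReal hxh
      (Filter.Eventually.of_forall fun x => by positivity)]
    refine lintegral_congr fun z => ?_
    rw [ENNReal.ofReal_mul (norm_nonneg z), hw]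
    congr 1
    · exact ofReal_norm z
    · rw [← Real.norm_eq_abs]
      exact ofReal_norm (h z)
  have hIν : ∫⁻ q : (EuclideanSpace ℝ (Fin n)) × ℝ, w q.1 ∂ν = I := by
    rw [hν, lintegral_prod (fun q => w q.1) hwq.aemeasurable]
    simp only [lintegral_const, hν₂univ, mul_one]
    rfl
  have hIfin : I ≠ ∞ := by rw [← hI]; exact ENNReal.ofReal_ne_top
  -- alternative formula for Φ
  have hWm : ∀ x : (EuclideanSpace ℝ (Fin n)), Measurable fun z : (EuclideanSpace ℝ (Fin n)) =>
      (‖h z‖₊ : ℝ≥0∞) * ((‖z‖₊ : ℝ≥0∞) * ∫⁻ t, N (x - t • z) ∂ν₂) := by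
    intro x
    apply hh.enorm.mul
    apply measurable_id.enorm.mul
    exact (Measurable.lintegral_prod_right
      (hNm.comp (measurable_const.sub (measurable_snd.smul measurable_fst))))
  have hΦ : ∀ x, Φ x =
      ∫⁻ z, (‖h z‖₊ : ℝ≥0∞) * ((‖z‖₊ : ℝ≥0∞) * ∫⁻ t, N (x - t • z) ∂ν₂) ∂μ := by
    intro x
    simp only [hΦdef]
    rw [hν, lintegral_prod (fun q => w q.1 * N (x - q.2 • q.1))
      (show Measurable (fun q : (EuclideanSpace ℝ (Fin n)) × ℝ => w q.1 * N (x - q.2 • q.1)) from hwq.mul (hNm.comp (measurable_const.sub (measurable_snd.smul measurable_fst)))).aemeasurable]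
    refine lintegral_congr fun z => ?_
    rw [lintegral_const_mul' _ _ (hwfin z), hw]
    ring
  -- pointwise commutator bound
  have hDb : ∀ x, (‖D x‖₊ : ℝ≥0∞) ≤ c * Φ x := by
    intro x
    by_cases hc0 : c = 0
    · have hg0 : ∀ᵐ y ∂μ, g y = 0 := by
        refine hgc.mono fun y hy => ?_
        rw [hc0, nonpos_iff_eq_zero] at hy
        simpa using hy
      have e1 : ∫ y, h (x - y) * (f y * g y) = 0 :=
        integral_eq_zero_of_ae (hg0.mono fun y hy => by simp [hy])
      have e2 : ∫ y, h (x - y) * g y = 0 :=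
        integral_eq_zero_of_ae (hg0.mono fun y hy => by simp [hy])
      simp [hD, e1, e2]
    by_cases hΦtop : Φ x = ∞
    · rw [hΦtop, ENNReal.mul_top hc0]
      exact le_top
    -- main case
    have hΨx : ∫⁻ y, (‖h (x - y)‖₊ : ℝ≥0∞) *
        ((‖x - y‖₊ : ℝ≥0∞) * ∫⁻ t, N (x - t • (x - y)) ∂ν₂) ∂μ = Φ x := by
      rw [hΦ x]
      exact (Measure.measurePreserving_sub_left μ x).lintegral_comp (hWm x)
    have hbound1 : ∀ᵐ y ∂μ, (‖h (x - y) * ((f y - f x) * g y)‖₊ : ℝ≥0∞) ≤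
        c * ((‖h (x - y)‖₊ : ℝ≥0∞) *
          ((‖x - y‖₊ : ℝ≥0∞) * ∫⁻ t, N (x - t • (x - y)) ∂ν₂)) := by
      refine hgc.mono fun y hy => ?_
      have hftc := ftc_aux f hf x (x - y)
      rw [sub_sub_cancel] at hftc
      calc (‖h (x - y) * ((f y - f x) * g y)‖₊ : ℝ≥0∞)
          = (‖h (x - y)‖₊ : ℝ≥0∞) * (‖f y - f x‖₊ : ℝ≥0∞) * (‖g y‖₊ : ℝ≥0∞) := by
            simp [nnnorm_mul, ENNReal.coe_mul, mul_assoc]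
        _ ≤ (‖h (x - y)‖₊ : ℝ≥0∞) *
              ((‖x - y‖₊ : ℝ≥0∞) * ∫⁻ t, N (x - t • (x - y)) ∂ν₂) * c := by
            gcongr
        _ = c * ((‖h (x - y)‖₊ : ℝ≥0∞) *
              ((‖x - y‖₊ : ℝ≥0∞) * ∫⁻ t, N (x - t • (x - y)) ∂ν₂)) := by ring
    have hfin1 : ∫⁻ y, (‖h (x - y) * ((f y - f x) * g y)‖₊ : ℝ≥0∞) ∂μ ≤ c * Φ x := by
      calc ∫⁻ y, (‖h (x - y) * ((f y - f x) * g y)‖₊ : ℝ≥0∞) ∂μ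
          ≤ ∫⁻ y, c * ((‖h (x - y)‖₊ : ℝ≥0∞) *
              ((‖x - y‖₊ : ℝ≥0∞) * ∫⁻ t, N (x - t • (x - y)) ∂ν₂)) ∂μ :=
            lintegral_mono_ae hbound1
        _ = c * Φ x := by rw [lintegral_const_mul' _ _ hcfin, hΨx]
    have hmeas1 : AEStronglyMeasurable (fun y => h (x - y) * ((f y - f x) * g y)) μ :=
      ((hh.comp (measurable_const.sub measurable_id)).mul
        ((hf.continuous.measurable.sub measurable_const).mul hg)).aestronglyMeasurable
    have hint1 : Integrable (fun y => h (x - y) * ((f y - f x) * g y)) μ :=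
      ⟨hmeas1, lt_of_le_of_lt hfin1
        (ENNReal.mul_lt_top hcfin.lt_top (lt_top_iff_ne_top.mpr hΦtop))⟩
    have hint2 : Integrable (fun y => h (x - y) * g y) μ := by
      have h1 : Integrable (fun y => h (x - y)) μ :=
        (integrable_comp_sub_left h x).mpr hhint
      refine (h1.abs.const_mul c.toReal).mono'
        ((hh.comp (measurable_const.sub measurable_id)).mul hg).aestronglyMeasurable ?_
      refine hgc.mono fun y hy => ?_
      have hgy : ‖g y‖ ≤ c.toReal := by
        simpa using ENNReal.toReal_mono hcfin hy
      calc ‖h (x - y) * g y‖ = |h (x - y)| * ‖g y‖ := by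
            rw [norm_mul, Real.norm_eq_abs]
        _ ≤ |h (x - y)| * c.toReal := mul_le_mul_of_nonneg_left hgy (abs_nonneg _)
        _ = c.toReal * |h (x - y)| := mul_comm _ _
    have hfg : Integrable (fun y => h (x - y) * (f y * g y)) μ := by
      have heq : (fun y => h (x - y) * (f y * g y)) =
          fun y => h (x - y) * ((f y - f x) * g y) + f x * (h (x - y) * g y) := by
        funext y; ring
      rw [heq]
      exact hint1.add (hint2.const_mul (f x))
    have hDx : D x = ∫ y, h (x - y) * ((f y - f x) * g y) ∂μ := by
      rw [hD]
      simp only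
      rw [show f x * ∫ y, h (x - y) * g y ∂μ = ∫ y, f x * (h (x - y) * g y) ∂μ from
        (integral_const_mul _ _).symm, ← integral_sub hfg (hint2.const_mul (f x))]
      exact integral_congr_ae (Filter.Eventually.of_forall fun y => by ring)
    rw [hDx]
    exact le_trans (enorm_integral_le_lintegral_enorm _) hfin1
  -- now split on p
  rw [hI]
  by_cases hptop : p = ∞
  · -- p = ∞
    subst hptop
    set S : ℝ≥0∞ := eLpNorm (fun x => fderiv ℝ f x) ∞ volume with hS
    have hNS : ∀ᵐ x ∂μ, N x ≤ S := by
      rw [hS, eLpNorm_exponent_top]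
      exact enorm_ae_le_eLpNormEssSup _ _
    -- for every translation, a.e. bound
    have hNa : ∀ a : (EuclideanSpace ℝ (Fin n)), ∀ᵐ x ∂μ, N (x - a) ≤ S := by
      intro a
      have hmp : MeasurePreserving (fun x : (EuclideanSpace ℝ (Fin n)) => x - a) μ μ := by
        simp_rw [sub_eq_add_neg]
        exact measurePreserving_add_right μ (-a)
      exact hmp.quasiMeasurePreserving.ae hNS
    have hUm : MeasurableSet {q : ((EuclideanSpace ℝ (Fin n)) × ℝ) × (EuclideanSpace ℝ (Fin n)) | S < N (q.2 - q.1.2 • q.1.1)} := by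
      have : Measurable fun q : ((EuclideanSpace ℝ (Fin n)) × ℝ) × (EuclideanSpace ℝ (Fin n)) => N (q.2 - q.1.2 • q.1.1) :=
        hNm.comp (measurable_snd.sub (measurable_fst.snd.smul measurable_fst.fst))
      exact measurableSet_lt measurable_const this
    have hU0 : (ν.prod μ) {q : ((EuclideanSpace ℝ (Fin n)) × ℝ) × (EuclideanSpace ℝ (Fin n)) | S < N (q.2 - q.1.2 • q.1.1)} = 0 := by
      rw [Measure.measure_prod_null hUm]
      refine Filter.Eventually.of_forall fun q => ?_
      have := hNa (q.2 • q.1)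
      rw [Filter.eventually_iff, mem_ae_iff] at this
      convert this using 2
      ext x
      simp [not_le]
      rfl
    have hae : ∀ᵐ x ∂μ, ∀ᵐ q ∂ν, N (x - q.2 • q.1) ≤ S := by
      have hswap : (μ.prod ν) (Prod.swap ⁻¹' {q : ((EuclideanSpace ℝ (Fin n)) × ℝ) × (EuclideanSpace ℝ (Fin n)) | S < N (q.2 - q.1.2 • q.1.1)}) = 0 := by
        rw [← Measure.map_apply measurable_swap hUm, Measure.prod_swap]
        exact hU0
      rw [Measure.measure_prod_null (measurable_swap hUm)] at hswap
      refine hswap.mono fun x hx => ?_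
      rw [ae_iff]
      convert hx using 2
      ext q
      simp [not_le, Set.preimage, Prod.swap]
      rfl
    have hΦS : ∀ᵐ x ∂μ, Φ x ≤ I * S := by
      refine hae.mono fun x hx => ?_
      calc Φ x ≤ ∫⁻ q : (EuclideanSpace ℝ (Fin n)) × ℝ, w q.1 * S ∂ν := by
            simp only [hΦdef]
            exact lintegral_mono_ae (hx.mono fun q hq => mul_le_mul_right hq _)
        _ = I * S := by
            rw [lintegral_mul_const'' _ hwq.aemeasurable, hIν]
      -- done
    have hfinal : ∀ᵐ x ∂μ, (‖D x‖₊ : ℝ≥0∞) ≤ I * S * c := by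
      refine hΦS.mono fun x hx => ?_
      calc (‖D x‖₊ : ℝ≥0∞) ≤ c * Φ x := hDb x
        _ ≤ c * (I * S) := mul_le_mul_right hx c
        _ = I * S * c := by ring
    rw [eLpNorm_exponent_top, eLpNormEssSup]
    exact essSup_le_of_ae_le _ hfinal
  · -- p finite
    have hp0 : p ≠ 0 := by
      intro h0
      rw [h0] at hp
      exact absurd hp (by simp)
    set r : ℝ := p.toReal with hr
    have hr1 : 1 ≤ r := by
      rw [hr, ← ENNReal.toReal_one]
      exact ENNReal.toReal_mono hptop hp
    have hr0 : (0:ℝ) < r := lt_of_lt_of_le one_pos hr1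
    set K : ℝ≥0∞ := (∫⁻ x, N x ^ r ∂μ) ^ (1/r) with hK
    have hKeq : eLpNorm (fun x => fderiv ℝ f x) p volume = K := by
      rw [eLpNorm_eq_lintegral_rpow_enorm_toReal hp0 hptop]
      rfl
    have hKfin : K ≠ ∞ := by
      rw [← hKeq]
      exact hfp.2.ne
    have step1 : eLpNorm D p volume ≤ c * (∫⁻ x, Φ x ^ r ∂μ) ^ (1/r) := by
      rw [eLpNorm_eq_lintegral_rpow_enorm_toReal hp0 hptop]
      have hmono : ∫⁻ x, (‖D x‖₊ : ℝ≥0∞) ^ r ∂μ ≤ ∫⁻ x, (c * Φ x) ^ r ∂μ :=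
        lintegral_mono fun x => ENNReal.rpow_le_rpow (hDb x) hr0.le
      calc (∫⁻ x, (‖D x‖₊ : ℝ≥0∞) ^ r ∂μ) ^ (1/r)
          ≤ (∫⁻ x, (c * Φ x) ^ r ∂μ) ^ (1/r) := ENNReal.rpow_le_rpow hmono (by positivity)
        _ = c * (∫⁻ x, Φ x ^ r ∂μ) ^ (1/r) := by
            rw [lintegral_congr (fun x => ENNReal.mul_rpow_of_nonneg c (Φ x) hr0.le),
              lintegral_const_mul' _ _ (ENNReal.rpow_ne_top_of_nonneg hr0.le hcfin),
              ENNReal.mul_rpow_of_nonneg _ _ (by positivity : (0:ℝ) ≤ 1/r),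
              ← ENNReal.rpow_mul, mul_one_div, div_self hr0.ne', ENNReal.rpow_one]
    have hΦm : Measurable Φ := hFm.lintegral_prod_right
    have step2 : (∫⁻ x, Φ x ^ r ∂μ) ^ (1/r) ≤ I * K := by
      calc (∫⁻ x, Φ x ^ r ∂μ) ^ (1/r)
          ≤ ∫⁻ q : (EuclideanSpace ℝ (Fin n)) × ℝ, (∫⁻ x, (w q.1 * N (x - q.2 • q.1)) ^ r ∂μ) ^ (1/r) ∂ν :=
            mink_aux μ ν hr1 hFm
        _ = ∫⁻ q : (EuclideanSpace ℝ (Fin n)) × ℝ, w q.1 * K ∂ν := by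
            refine lintegral_congr fun q => ?_
            have : ∫⁻ x, (w q.1 * N (x - q.2 • q.1)) ^ r ∂μ
                = w q.1 ^ r * ∫⁻ x, N x ^ r ∂μ := by
              rw [lintegral_congr (fun x =>
                  ENNReal.mul_rpow_of_nonneg (w q.1) (N (x - q.2 • q.1)) hr0.le),
                lintegral_const_mul' _ _ (ENNReal.rpow_ne_top_of_nonneg hr0.le (hwfin q.1)),
                lintegral_sub_right_eq_self (fun x => N x ^ r) (q.2 • q.1)]
            rw [this, ENNReal.mul_rpow_of_nonneg _ _ (by positivity : (0:ℝ) ≤ 1/r),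
              ← ENNReal.rpow_mul, mul_one_div, div_self hr0.ne', ENNReal.rpow_one, ← hK]
        _ = I * K := by
            rw [lintegral_mul_const'' _ hwq.aemeasurable, hIν]
    calc eLpNorm D p volume ≤ c * (∫⁻ x, Φ x ^ r ∂μ) ^ (1/r) := step1
      _ ≤ c * (I * K) := mul_le_mul_right step2 c
      _ = I * eLpNorm (fun x => fderiv ℝ f x) p volume * c := by rw [hKeq]; ring
end

section
/- Let n ≥ 1 and let f, g, h : ℝ^n → ℝ be measurable functions such that f is continuously differentiable with f and ∇f bounded, g is bounded, h ∈ L^1(ℝ^n), and x ↦ ‖x‖·|h(x)| belongs to L^1(ℝ^n). Then for every x ∈ ℝ^n, (h*(fg))(x) − f(x)·(h*g)(x) = −∫_0^1 ∫_{ℝ^n} h(z) · (∇f(x − τz) · z) · g(x − z) dz dτ, where ∇f(x−τz)·z denotes the Euclidean inner product. -/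
open MeasureTheory
open scoped ENNReal

/-- Pointwise integral formula for the commutator of convolution with `h` and
multiplication by `f`. -/
theorem commutator_convolution_formula (n : ℕ) (hn : 1 ≤ n)
    (f g h : EuclideanSpace ℝ (Fin n) → ℝ)
    (hf : ContDiff ℝ 1 f)
    (hfb : ∃ M, ∀ x, |f x| ≤ M)
    (hdfb : ∃ M, ∀ x, ‖fderiv ℝ f x‖ ≤ M)
    (hg : Measurable g) (hgb : ∃ M, ∀ x, |g x| ≤ M)
    (hh : Measurable h)
    (hhint : Integrable h volume)
    (hxh : Integrable (fun x => ‖x‖ * |h x|) volume)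
    (x : EuclideanSpace ℝ (Fin n)) :
    (∫ y, h (x - y) * (f y * g y)) - f x * (∫ y, h (x - y) * g y)
      = -∫ τ in (0:ℝ)..1, ∫ z, h z * (fderiv ℝ f (x - τ • z) z * g (x - z)) := by
  obtain ⟨Mf, hMf⟩ := hfb
  obtain ⟨Md, hMd⟩ := hdfb
  obtain ⟨Mg, hMg⟩ := hgb
  have hfc : Continuous f := hf.continuous
  have hdfc : Continuous (fderiv ℝ f) := hf.continuous_fderiv one_ne_zero
  have hgx : Measurable fun z => g (x - z) := hg.comp (measurable_const.sub measurable_id)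
  -- change of variables in both integrals
  have h1 : (∫ y, h (x - y) * (f y * g y))
      = ∫ z, h z * (f (x - z) * g (x - z)) := by
    have := integral_sub_left_eq_self
      (fun z => h z * (f (x - z) * g (x - z))) volume x
    simp only [sub_sub_cancel] at this
    exact this
  have h2 : (∫ y, h (x - y) * g y) = ∫ z, h z * g (x - z) := by
    have := integral_sub_left_eq_self (fun z => h z * g (x - z)) volume x
    simp only [sub_sub_cancel] at this
    exact this
  -- integrability
  have I1 : Integrable (fun z => h z * (f (x - z) * g (x - z))) volume := by
    refine (hhint.abs.const_mul (|Mf| * |Mg|)).mono' ?_ ?_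
    · exact hh.aestronglyMeasurable.mul
        (((hfc.comp (continuous_const.sub continuous_id)).aestronglyMeasurable).mul
          hgx.aestronglyMeasurable)
    · refine Filter.Eventually.of_forall fun z => ?_
      have hfg : |f (x - z)| * |g (x - z)| ≤ |Mf| * |Mg| :=
        mul_le_mul ((hMf _).trans (le_abs_self _)) ((hMg _).trans (le_abs_self _))
          (abs_nonneg _) (abs_nonneg _)
      calc ‖h z * (f (x - z) * g (x - z))‖
          = |h z| * (|f (x - z)| * |g (x - z)|) := by
            simp [Real.norm_eq_abs, abs_mul]
        _ ≤ |h z| * (|Mf| * |Mg|) := mul_le_mul_of_nonneg_left hfg (abs_nonneg _)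
        _ = |Mf| * |Mg| * |h z| := by ring
  have I2 : Integrable (fun z => h z * g (x - z)) volume := by
    refine (hhint.abs.const_mul |Mg|).mono' ?_ ?_
    · exact hh.aestronglyMeasurable.mul hgx.aestronglyMeasurable
    · refine Filter.Eventually.of_forall fun z => ?_
      calc ‖h z * g (x - z)‖ = |h z| * |g (x - z)| := by
            simp [Real.norm_eq_abs, abs_mul]
        _ ≤ |h z| * |Mg| := mul_le_mul_of_nonneg_left
            ((hMg _).trans (le_abs_self _)) (abs_nonneg _)
        _ = |Mg| * |h z| := by ring
  -- FTC along the segment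
  have key : ∀ z, f (x - z) - f x
      = -∫ τ in (0:ℝ)..1, fderiv ℝ f (x - τ • z) z := by
    intro z
    have hc : ∀ τ : ℝ, HasDerivAt (fun τ : ℝ => f (x - τ • z))
        (-(fderiv ℝ f (x - τ • z) z)) τ := by
      intro τ
      have hline : HasDerivAt (fun τ : ℝ => x - τ • z) (-z) τ := by
        simpa using ((hasDerivAt_id τ).smul_const z).const_sub x
      have h2 := (hf.differentiable one_ne_zero (x - τ • z)).hasFDerivAt
      have h3 := h2.comp_hasDerivAt τ hline
      simp only [map_neg] at h3
      exact h3
    have hcont : Continuous fun τ : ℝ => fderiv ℝ f (x - τ • z) z := by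
      exact (ContinuousLinearMap.apply ℝ ℝ z).continuous.comp
        (hdfc.comp (continuous_const.sub (continuous_id.smul continuous_const)))
    have hint : IntervalIntegrable (fun τ : ℝ => -(fderiv ℝ f (x - τ • z) z))
        volume 0 1 := hcont.neg.intervalIntegrable 0 1
    have := intervalIntegral.integral_eq_sub_of_hasDerivAt
      (fun τ _ => hc τ) hint
    simp only [one_smul, zero_smul, sub_zero, intervalIntegral.integral_neg] at this
    linarith [this]
  -- combine the two integrals
  rw [h1, h2, ← integral_const_mul, ← integral_sub I1 (I2.const_mul (f x))]
  have step : ∀ z, h z * (f (x - z) * g (x - z)) - f x * (h z * g (x - z))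
      = -∫ τ in (0:ℝ)..1, h z * (fderiv ℝ f (x - τ • z) z * g (x - z)) := by
    intro z
    have : (∫ τ in (0:ℝ)..1, h z * (fderiv ℝ f (x - τ • z) z * g (x - z)))
        = (∫ τ in (0:ℝ)..1, fderiv ℝ f (x - τ • z) z) * (h z * g (x - z)) := by
      rw [← intervalIntegral.integral_mul_const]
      exact intervalIntegral.integral_congr fun τ _ => by ring
    rw [this]
    have hz := key z
    have e1 : h z * (f (x - z) * g (x - z)) - f x * (h z * g (x - z))
        = (f (x - z) - f x) * (h z * g (x - z)) := by ring
    rw [e1, hz]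
    ring
  simp only [step]
  rw [integral_neg]
  have contD : Continuous fun p : EuclideanSpace ℝ (Fin n) × ℝ =>
      fderiv ℝ f (x - p.2 • p.1) p.1 := by
    have hc1 : Continuous fun p : EuclideanSpace ℝ (Fin n) × ℝ =>
        fderiv ℝ f (x - p.2 • p.1) :=
      hdfc.comp (continuous_const.sub (continuous_snd.smul continuous_fst))
    exact isBoundedBilinearMap_apply.continuous.comp (hc1.prodMk continuous_fst)
  have hB : Integrable
      (fun p : EuclideanSpace ℝ (Fin n) × ℝ => Md * Mg * (‖p.1‖ * |h p.1|))
      (volume.prod (volume.restrict (Set.Ioc (0:ℝ) 1))) := by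
    have := (hxh.const_mul (Md * Mg)).mul_prod
      (integrable_const (μ := volume.restrict (Set.Ioc (0:ℝ) 1)) (1 : ℝ))
    simpa using this
  have hMd0 : (0:ℝ) ≤ Md := le_trans (norm_nonneg _) (hMd x)
  have hMg0 : (0:ℝ) ≤ Mg := le_trans (abs_nonneg _) (hMg x)
  have hI : Integrable
      (Function.uncurry fun z τ =>
        h z * (fderiv ℝ f (x - τ • z) z * g (x - z)))
      (volume.prod (volume.restrict (Set.Ioc (0:ℝ) 1))) := by
    apply Integrable.mono' hB
    · exact ((hh.comp measurable_fst).aestronglyMeasurable.mul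
        (contD.aestronglyMeasurable.mul
          ((hgx.comp measurable_fst).aestronglyMeasurable)))
    · refine Filter.Eventually.of_forall fun p => ?_
      have hD : |fderiv ℝ f (x - p.2 • p.1) p.1| ≤ Md * ‖p.1‖ := by
        calc |fderiv ℝ f (x - p.2 • p.1) p.1|
            ≤ ‖fderiv ℝ f (x - p.2 • p.1)‖ * ‖p.1‖ :=
              (fderiv ℝ f (x - p.2 • p.1)).le_opNorm p.1
          _ ≤ Md * ‖p.1‖ := by
              exact mul_le_mul_of_nonneg_right (hMd _) (norm_nonneg _)
      have hGg : |g (x - p.1)| ≤ Mg := hMg _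
      simp only [Function.uncurry, Real.norm_eq_abs, abs_mul]
      have h0 : (0:ℝ) ≤ |h p.1| := abs_nonneg _
      nlinarith [abs_nonneg (fderiv ℝ f (x - p.2 • p.1) p.1),
        abs_nonneg (g (x - p.1)), norm_nonneg p.1,
        mul_le_mul hD hGg (abs_nonneg _) (by positivity : (0:ℝ) ≤ Md * ‖p.1‖)]
  have fubini :
      (∫ z, ∫ τ in (0:ℝ)..1, h z * (fderiv ℝ f (x - τ • z) z * g (x - z)))
        = ∫ τ in (0:ℝ)..1, ∫ z, h z * (fderiv ℝ f (x - τ • z) z * g (x - z)) := by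
    simp_rw [intervalIntegral.integral_of_le (zero_le_one' ℝ)]
    exact MeasureTheory.integral_integral_swap hI
  rw [fubini]
end

section
/- Let d ≥ 1, T > 0, let u : [0,T] × ℝ^d → ℝ^d be continuously differentiable and divergence-free in the space variable (that is, for every t and x, the trace of the spatial derivative D_x u(t,x) vanishes), and let θ : [0,T] × ℝ^d → ℝ be continuously differentiable, with the support of θ(t,·) contained in a fixed compact set K ⊆ ℝ^d for all t ∈ [0,T]. Assume that θ solves the transport equation ∂_t θ(t,x) + u(t,x)·∇_x θ(t,x) = 0 for all (t,x) ∈ [0,T] × ℝ^d. Then for every p ∈ [1,∞] and every t ∈ [0,T], ‖θ(t,·)‖_{L^p(ℝ^d)} ≤ ‖θ(0,·)‖_{L^p(ℝ^d)}. -/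
open MeasureTheory Set
open scoped ENNReal

/-- Any coordinate is bounded by the Euclidean norm. -/
lemma coord_abs_le_norm {n : ℕ} (x : EuclideanSpace ℝ (Fin (m+1))) (i : Fin (m+1)) : |x i| ≤ ‖x‖ := by
  rw [EuclideanSpace.norm_eq]
  calc |x i| = Real.sqrt (|x i| ^ 2) := by rw [Real.sqrt_sq_eq_abs, abs_abs]
  _ ≤ _ := by
      apply Real.sqrt_le_sqrt
      exact Finset.single_le_sum (f := fun j => |x j| ^ 2) (fun j _ => by positivity)
        (Finset.mem_univ i)

/-- Divergence theorem: integral of the divergence of a compactly supported `C^1`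
vector field on Euclidean space vanishes. -/
lemma divergence_integral_zero {m : ℕ}
    (v : EuclideanSpace ℝ (Fin (m+1)) → EuclideanSpace ℝ (Fin (m+1)))
    (v' : EuclideanSpace ℝ (Fin (m+1)) →
      EuclideanSpace ℝ (Fin (m+1)) →L[ℝ] EuclideanSpace ℝ (Fin (m+1)))
    (hv : ∀ x, HasFDerivAt v (v' x) x) (hcont : Continuous v)
    (hdivcont : Continuous fun x => LinearMap.trace ℝ (EuclideanSpace ℝ (Fin (m+1))) (v' x : EuclideanSpace ℝ (Fin (m+1)) →ₗ[ℝ] EuclideanSpace ℝ (Fin (m+1))))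
    (R : ℝ) (hsupp : ∀ x, R ≤ ‖x‖ → v x = 0) :
    ∫ x, LinearMap.trace ℝ (EuclideanSpace ℝ (Fin (m+1))) ((v' x : EuclideanSpace ℝ (Fin (m+1)) →ₗ[ℝ]
      EuclideanSpace ℝ (Fin (m+1)))) = 0 := by
  set eL := PiLp.continuousLinearEquiv 2 ℝ (fun _ : Fin (m+1) => ℝ) with heL
  set S := max R 1 with hS
  have hSR : R ≤ S := le_max_left _ _
  have hS1 : (1:ℝ) ≤ S := le_max_right _ _
  -- derivative vanishes at points of norm > R
  have hv'0 : ∀ x : EuclideanSpace ℝ (Fin (m+1)), R < ‖x‖ → v' x = 0 := by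
    intro x hx
    have hopen : IsOpen {y : EuclideanSpace ℝ (Fin (m+1)) | R < ‖y‖} :=
      isOpen_lt continuous_const continuous_norm
    have hev : v =ᶠ[nhds x] (fun _ => 0) := by
      filter_upwards [hopen.mem_nhds hx] with y hy
      exact hsupp y hy.le
    have h0 : HasFDerivAt v (0 : EuclideanSpace ℝ (Fin (m+1)) →L[ℝ] EuclideanSpace ℝ (Fin (m+1))) x :=
      (hasFDerivAt_const (0 : EuclideanSpace ℝ (Fin (m+1))) x).congr_of_eventuallyEq hev
    exact (hv x).unique h0
  -- the transported field on the pi type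
  set f : (Fin (m+1) → ℝ) → (Fin (m+1) → ℝ) := fun y => eL (v (eL.symm y)) with hf
  set f' : (Fin (m+1) → ℝ) → (Fin (m+1) → ℝ) →L[ℝ] (Fin (m+1) → ℝ) := fun y =>
    (eL : EuclideanSpace ℝ (Fin (m+1)) →L[ℝ] (Fin (m+1) → ℝ)).comp
      ((v' (eL.symm y)).comp (eL.symm : (Fin (m+1) → ℝ) →L[ℝ] EuclideanSpace ℝ (Fin (m+1)))) with hf'
  have hfd : ∀ y, HasFDerivAt f (f' y) y := by
    intro y
    exact (eL.toContinuousLinearMap.hasFDerivAt).comp _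
      (((hv (eL.symm y)).comp y (eL.symm.toContinuousLinearMap.hasFDerivAt)))
  -- divergence in coordinates equals the trace
  have hdiveq : ∀ y : Fin (m+1) → ℝ, (∑ i, f' y (Pi.single i 1) i) =
      LinearMap.trace ℝ (EuclideanSpace ℝ (Fin (m+1))) ((v' (eL.symm y) : EuclideanSpace ℝ (Fin (m+1)) →ₗ[ℝ]
        EuclideanSpace ℝ (Fin (m+1)))) := by
    have pi_trace : ∀ A : (Fin (m+1) → ℝ) →ₗ[ℝ] (Fin (m+1) → ℝ),
        LinearMap.trace ℝ (Fin (m+1) → ℝ) A = ∑ i, A (Pi.single i 1) i := by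
      intro A
      rw [LinearMap.trace_eq_matrix_trace ℝ (Pi.basisFun ℝ (Fin (m+1))) A, Matrix.trace]
      apply Finset.sum_congr rfl
      intro i _
      rw [Matrix.diag_apply, LinearMap.toMatrix_apply, Pi.basisFun_apply, Pi.basisFun_repr]
    intro y
    have h1 : ((f' y : (Fin (m+1) → ℝ) →L[ℝ] (Fin (m+1) → ℝ)) :
        (Fin (m+1) → ℝ) →ₗ[ℝ] (Fin (m+1) → ℝ)) =
        (eL.toLinearEquiv).conj ((v' (eL.symm y) : EuclideanSpace ℝ (Fin (m+1)) →ₗ[ℝ]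
          EuclideanSpace ℝ (Fin (m+1)))) := rfl
    calc (∑ i, f' y (Pi.single i 1) i)
        = LinearMap.trace ℝ (Fin (m+1) → ℝ) ((f' y : (Fin (m+1) → ℝ) →L[ℝ] (Fin (m+1) → ℝ)) :
          (Fin (m+1) → ℝ) →ₗ[ℝ] (Fin (m+1) → ℝ)) := (pi_trace _).symm
      _ = _ := by rw [h1, LinearMap.trace_conj']
  -- transfer the integral to the pi type
  have meas_pres : MeasurePreserving
      ((MeasurableEquiv.toLp 2 (Fin (m+1) → ℝ))) volume volume :=
    (EuclideanSpace.volume_preserving_symm_measurableEquiv_toLp _).symm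
  have step1 : ∫ y : Fin (m+1) → ℝ, LinearMap.trace ℝ (EuclideanSpace ℝ (Fin (m+1)))
        ((v' (eL.symm y) : EuclideanSpace ℝ (Fin (m+1)) →ₗ[ℝ] EuclideanSpace ℝ (Fin (m+1))))
      = ∫ x, LinearMap.trace ℝ (EuclideanSpace ℝ (Fin (m+1)))
        ((v' x : EuclideanSpace ℝ (Fin (m+1)) →ₗ[ℝ] EuclideanSpace ℝ (Fin (m+1)))) :=
    by
    have hcoe : ∀ y : Fin (m+1) → ℝ, (eL.symm y : EuclideanSpace ℝ (Fin (m+1))) =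
        MeasurableEquiv.toLp 2 (Fin (m+1) → ℝ) y := fun _ => rfl
    simp only [hcoe]
    exact meas_pres.integral_comp (MeasurableEquiv.measurableEmbedding _)
      (fun x : EuclideanSpace ℝ (Fin (m+1)) => LinearMap.trace ℝ (EuclideanSpace ℝ (Fin (m+1)))
        ((v' x : EuclideanSpace ℝ (Fin (m+1)) →ₗ[ℝ] EuclideanSpace ℝ (Fin (m+1)))))
  rw [← step1]
  set a : Fin (m+1) → ℝ := fun _ => -S with ha
  set b : Fin (m+1) → ℝ := fun _ => S with hb
  have hle : a ≤ b := fun i => by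
    simp only [ha, hb]
    linarith
  have hbox : ∀ y : Fin (m+1) → ℝ, y ∉ Icc a b → R < ‖eL.symm y‖ := by
    intro y hy
    have : ∃ i, ¬ (a i ≤ y i ∧ y i ≤ b i) := by
      by_contra h
      push_neg at h
      exact hy ⟨fun i => (h i).1, fun i => (h i).2⟩
    obtain ⟨i, hi⟩ := this
    have : S < |y i| := by
      rcases not_and_or.1 hi with h | h
      · rw [abs_of_nonpos (by push_neg at h; simp only [ha] at h; linarith)]
        push_neg at h; simp only [ha] at h; linarith
      · push_neg at h; simp only [hb] at h
        calc S < y i := h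
        _ ≤ |y i| := le_abs_self _
    have h2 : |y i| ≤ ‖eL.symm y‖ := coord_abs_le_norm (n := m+1) (eL.symm y) i
    linarith [hSR.trans_lt (this.trans_le h2)]
  have hdiv0 : ∀ y : Fin (m+1) → ℝ, y ∉ Icc a b →
      LinearMap.trace ℝ (EuclideanSpace ℝ (Fin (m+1)))
        ((v' (eL.symm y) : EuclideanSpace ℝ (Fin (m+1)) →ₗ[ℝ]
          EuclideanSpace ℝ (Fin (m+1)))) = 0 := by
    intro y hy
    rw [hv'0 _ (hbox y hy)]
    simp
  rw [← setIntegral_eq_integral_of_forall_compl_eq_zero hdiv0]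
  -- continuity facts
  have hfc : Continuous f := eL.continuous.comp (hcont.comp eL.symm.continuous)
  have hdivc : Continuous fun y : Fin (m+1) → ℝ =>
      LinearMap.trace ℝ (EuclideanSpace ℝ (Fin (m+1)))
        ((v' (eL.symm y) : EuclideanSpace ℝ (Fin (m+1)) →ₗ[ℝ]
          EuclideanSpace ℝ (Fin (m+1)))) := hdivcont.comp eL.symm.continuous
  have Hi : IntegrableOn (fun y => ∑ i, f' y (Pi.single i 1) i) (Icc a b) volume := by
    have hcg : (fun y => ∑ i, f' y (Pi.single i 1) i) = fun y =>
        LinearMap.trace ℝ (EuclideanSpace ℝ (Fin (m+1)))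
          ((v' (eL.symm y) : EuclideanSpace ℝ (Fin (m+1)) →ₗ[ℝ]
            EuclideanSpace ℝ (Fin (m+1)))) := funext hdiveq
    rw [hcg]
    exact hdivc.continuousOn.integrableOn_compact isCompact_Icc
  have key := MeasureTheory.integral_divergence_of_hasFDerivAt_off_countable
    a b hle f f' ∅ countable_empty hfc.continuousOn
    (fun x _ => hfd x) Hi
  have hface : ∀ (i : Fin (m+1)) (c : ℝ), S ≤ |c| → ∀ x : Fin m → ℝ,
      f (i.insertNth c x) = 0 := by
    intro i c hc x
    have h1 : |(i.insertNth c x : Fin (m+1) → ℝ) i| = |c| := by rw [Fin.insertNth_apply_same]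
    have h2 : R ≤ ‖eL.symm (i.insertNth c x)‖ := by
      have := coord_abs_le_norm (n := m+1) (eL.symm (i.insertNth c x)) i
      have h3 : (eL.symm (i.insertNth c x)) i = (i.insertNth c x : Fin (m+1) → ℝ) i := rfl
      rw [h3, h1] at this
      linarith
    simp only [hf]
    rw [hsupp _ h2]
    simp
  have hzero : ∀ i : Fin (m+1),
      ((∫ x in Icc (a ∘ i.succAbove) (b ∘ i.succAbove), f (i.insertNth (b i) x) i) -
        ∫ x in Icc (a ∘ i.succAbove) (b ∘ i.succAbove), f (i.insertNth (a i) x) i) = 0 := by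
    intro i
    have e1 : ∀ x : Fin m → ℝ, f (i.insertNth (b i) x) i = 0 := by
      intro x
      rw [hface i (b i) (by simp only [hb]; rw [abs_of_nonneg (by linarith)]) x]
      rfl
    have e2 : ∀ x : Fin m → ℝ, f (i.insertNth (a i) x) i = 0 := by
      intro x
      rw [hface i (a i) (by simp only [ha]; rw [abs_of_nonpos (by linarith)]; simp) x]
      rfl
    simp only [e1, e2, integral_zero, sub_zero]
  calc ∫ y in Icc a b, LinearMap.trace ℝ (EuclideanSpace ℝ (Fin (m+1)))
        ((v' (eL.symm y) : EuclideanSpace ℝ (Fin (m+1)) →ₗ[ℝ]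
          EuclideanSpace ℝ (Fin (m+1))))
      = ∫ y in Icc a b, ∑ i, f' y (Pi.single i 1) i := by
        apply setIntegral_congr_fun measurableSet_Icc
        intro y _
        exact (hdiveq y).symm
    _ = 0 := by rw [key]; exact Finset.sum_eq_zero fun i _ => hzero i

/-- Trace of a rank-one map `x ↦ φ x • w` equals `φ w`. -/
lemma trace_smulRight_eq {n : ℕ} (φ : EuclideanSpace ℝ (Fin n) →L[ℝ] ℝ)
    (w : EuclideanSpace ℝ (Fin n)) :
    LinearMap.trace ℝ (EuclideanSpace ℝ (Fin n))
      ((φ.smulRight w : EuclideanSpace ℝ (Fin n) →L[ℝ] EuclideanSpace ℝ (Fin n)) :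
        EuclideanSpace ℝ (Fin n) →ₗ[ℝ] EuclideanSpace ℝ (Fin n)) = φ w := by
  set b := (EuclideanSpace.basisFun (Fin n) ℝ).toBasis with hb
  rw [LinearMap.trace_eq_matrix_trace ℝ b, Matrix.trace]
  have hdiag : ∀ i, (LinearMap.toMatrix b b
      ((φ.smulRight w : EuclideanSpace ℝ (Fin n) →L[ℝ] EuclideanSpace ℝ (Fin n)) :
        EuclideanSpace ℝ (Fin n) →ₗ[ℝ] EuclideanSpace ℝ (Fin n))).diag i
      = φ (b i) * w i := by
    intro i
    rw [Matrix.diag_apply, LinearMap.toMatrix_apply]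
    simp only [hb, OrthonormalBasis.coe_toBasis_repr_apply, OrthonormalBasis.coe_toBasis]
    show (EuclideanSpace.basisFun (Fin n) ℝ).repr (φ _ • w) i = _
    rw [EuclideanSpace.basisFun_repr]
    show (φ _ • w) i = _
    rw [PiLp.smul_apply, smul_eq_mul]
  calc (∑ i, (LinearMap.toMatrix b b ((φ.smulRight w : EuclideanSpace ℝ (Fin n) →L[ℝ]
        EuclideanSpace ℝ (Fin n)) : EuclideanSpace ℝ (Fin n) →ₗ[ℝ]
          EuclideanSpace ℝ (Fin n))).diag i)
      = ∑ i, φ (b i) * w i := Finset.sum_congr rfl fun i _ => hdiag i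
    _ = φ (∑ i, w i • b i) := by
        rw [map_sum]
        refine Finset.sum_congr rfl fun i _ => ?_
        rw [φ.map_smul, smul_eq_mul, mul_comm]
    _ = φ w := by
        congr 1
        have h := b.sum_repr w
        have h2 : ∀ i, b.repr w i = w i := by
          intro i
          simp only [hb, OrthonormalBasis.coe_toBasis_repr_apply]
          rw [EuclideanSpace.basisFun_repr]
        simp only [h2] at h
        exact h

set_option maxHeartbeats 1000000 in
/-- The integral of `g ∘ θ t` is independent of `t` for `C^1` functions `g` vanishing at `0`. -/
lemma transport_integral_const {m : ℕ} (T : ℝ) (hT : 0 < T)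
    (u : ℝ → EuclideanSpace ℝ (Fin (m+1)) → EuclideanSpace ℝ (Fin (m+1)))
    (θ : ℝ → EuclideanSpace ℝ (Fin (m+1)) → ℝ)
    (hu : ContDiffOn ℝ 1 (fun p : ℝ × EuclideanSpace ℝ (Fin (m+1)) => u p.1 p.2)
      (Icc 0 T ×ˢ univ))
    (hθ : ContDiffOn ℝ 1 (fun p : ℝ × EuclideanSpace ℝ (Fin (m+1)) => θ p.1 p.2)
      (Icc 0 T ×ˢ univ))
    (hdiv : ∀ t ∈ Icc 0 T, ∀ x : EuclideanSpace ℝ (Fin (m+1)),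
      LinearMap.trace ℝ (EuclideanSpace ℝ (Fin (m+1)))
        ((fderiv ℝ (u t) x : EuclideanSpace ℝ (Fin (m+1)) →L[ℝ] EuclideanSpace ℝ (Fin (m+1))) :
          EuclideanSpace ℝ (Fin (m+1)) →ₗ[ℝ] EuclideanSpace ℝ (Fin (m+1))) = 0)
    (K : Set (EuclideanSpace ℝ (Fin (m+1)))) (hK : IsCompact K)
    (hsupp : ∀ t ∈ Icc 0 T, Function.support (θ t) ⊆ K)
    (heq : ∀ t ∈ Icc 0 T, ∀ x,
      deriv (fun s => θ s x) t + fderiv ℝ (θ t) x (u t x) = 0)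
    (g : ℝ → ℝ) (hg : ContDiff ℝ 1 g) (hg0 : g 0 = 0) :
    ∀ t ∈ Icc 0 T, (∫ x, g (θ t x)) = ∫ x, g (θ 0 x) := by
  obtain ⟨R0, hR0⟩ := hK.isBounded.subset_closedBall 0
  have hIccIoo : Ioo 0 T ⊆ Icc 0 T := Ioo_subset_Icc_self
  set Θ : ℝ × EuclideanSpace ℝ (Fin (m+1)) → ℝ := fun p => θ p.1 p.2 with hΘdef
  set Ω : Set (ℝ × EuclideanSpace ℝ (Fin (m+1))) := Ioo 0 T ×ˢ univ with hΩdef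
  have hΩopen : IsOpen Ω := isOpen_Ioo.prod isOpen_univ
  have hΩsub : Ω ⊆ Icc 0 T ×ˢ univ := prod_mono hIccIoo (subset_refl _)
  have hθΩ : ContDiffOn ℝ 1 Θ Ω := hθ.mono hΩsub
  have huΩ : ContDiffOn ℝ 1 (fun p : ℝ × EuclideanSpace ℝ (Fin (m+1)) => u p.1 p.2) Ω :=
    hu.mono hΩsub
  have hθat : ∀ t ∈ Ioo 0 T, ∀ x, ContDiffAt ℝ 1 Θ (t, x) := fun t ht x =>
    hθΩ.contDiffAt (hΩopen.mem_nhds ⟨ht, mem_univ x⟩)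
  have huat : ∀ t ∈ Ioo 0 T, ∀ x,
      ContDiffAt ℝ 1 (fun p : ℝ × EuclideanSpace ℝ (Fin (m+1)) => u p.1 p.2) (t, x) :=
    fun t ht x => huΩ.contDiffAt (hΩopen.mem_nhds ⟨ht, mem_univ x⟩)
  -- continuity of time slices
  have hθcont : ∀ t ∈ Icc 0 T, Continuous (θ t) := by
    intro t ht
    rw [← continuousOn_univ]
    exact (hθ.continuousOn).comp
      ((continuous_const.prodMk continuous_id).continuousOn) (fun x _ => ⟨ht, mem_univ x⟩)
  have hucont : ∀ t ∈ Icc 0 T, Continuous (u t) := by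
    intro t ht
    rw [← continuousOn_univ]
    exact (hu.continuousOn).comp
      ((continuous_const.prodMk continuous_id).continuousOn) (fun x _ => ⟨ht, mem_univ x⟩)
  -- time derivative of θ
  have hθt_hasD : ∀ t ∈ Ioo 0 T, ∀ x,
      HasDerivAt (fun s => θ s x) (fderiv ℝ Θ (t, x) (1, 0)) t := by
    intro t ht x
    have h := ((hθat t ht x).differentiableAt one_ne_zero).hasFDerivAt
    have h2 : HasDerivAt (fun s : ℝ => (s, x)) ((1 : ℝ), (0 : EuclideanSpace ℝ (Fin (m+1)))) t :=
      (hasDerivAt_id t).prodMk (hasDerivAt_const t x)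
    exact h.comp_hasDerivAt t h2
  -- space derivative of θ
  have hθx_hasD : ∀ t ∈ Ioo 0 T, ∀ x,
      HasFDerivAt (θ t) ((fderiv ℝ Θ (t, x)).comp
        (((0 : EuclideanSpace ℝ (Fin (m+1)) →L[ℝ] ℝ)).prod
          (ContinuousLinearMap.id ℝ (EuclideanSpace ℝ (Fin (m+1)))))) x := by
    intro t ht x
    have h := ((hθat t ht x).differentiableAt one_ne_zero).hasFDerivAt
    have h2 : HasFDerivAt (fun y : EuclideanSpace ℝ (Fin (m+1)) => (t, y))
        (((0 : EuclideanSpace ℝ (Fin (m+1)) →L[ℝ] ℝ)).prod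
          (ContinuousLinearMap.id ℝ (EuclideanSpace ℝ (Fin (m+1))))) x :=
      (hasFDerivAt_const t x).prodMk (hasFDerivAt_id x)
    exact h.comp x h2
  have hux_hasD : ∀ t ∈ Ioo 0 T, ∀ x,
      HasFDerivAt (u t) ((fderiv ℝ (fun p : ℝ × EuclideanSpace ℝ (Fin (m+1)) => u p.1 p.2)
          (t, x)).comp
        (((0 : EuclideanSpace ℝ (Fin (m+1)) →L[ℝ] ℝ)).prod
          (ContinuousLinearMap.id ℝ (EuclideanSpace ℝ (Fin (m+1)))))) x := by
    intro t ht x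
    have h := ((huat t ht x).differentiableAt one_ne_zero).hasFDerivAt
    have h2 : HasFDerivAt (fun y : EuclideanSpace ℝ (Fin (m+1)) => (t, y))
        (((0 : EuclideanSpace ℝ (Fin (m+1)) →L[ℝ] ℝ)).prod
          (ContinuousLinearMap.id ℝ (EuclideanSpace ℝ (Fin (m+1))))) x :=
      (hasFDerivAt_const t x).prodMk (hasFDerivAt_id x)
    exact h.comp x h2
  -- the spatial fderiv applied at u, expressed through Θ
  have hθx_app : ∀ t ∈ Ioo 0 T, ∀ x,
      fderiv ℝ (θ t) x (u t x) = fderiv ℝ Θ (t, x) (0, u t x) := by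
    intro t ht x
    rw [(hθx_hasD t ht x).fderiv]
    rfl
  -- the transport equation rearranged
  have hDval : ∀ t ∈ Ioo 0 T, ∀ x,
      fderiv ℝ Θ (t, x) (1, 0) = - fderiv ℝ (θ t) x (u t x) := by
    intro t ht x
    have h1 := (hθt_hasD t ht x).deriv
    have h2 := heq t (hIccIoo ht) x
    rw [h1] at h2
    linarith
  -- continuity of fderiv Θ on Ω
  have hcontD : ContinuousOn (fun p : ℝ × EuclideanSpace ℝ (Fin (m+1)) => fderiv ℝ Θ p) Ω :=
    hθΩ.continuousOn_fderiv_of_isOpen hΩopen le_rfl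
  set F : ℝ → ℝ := fun t => ∫ x, g (θ t x) with hFdef
  have hg_cont : Continuous g := hg.continuous
  have hg'_cont : Continuous (deriv g) := hg.continuous_deriv le_rfl
  have hsupp_g : ∀ t ∈ Icc 0 T, ∀ x ∉ K, g (θ t x) = 0 := by
    intro t ht x hx
    have hθ0 : θ t x = 0 := by
      by_contra h
      exact hx (hsupp t ht h)
    rw [hθ0, hg0]
  have hInt : ∀ t ∈ Icc 0 T, Integrable (fun x => g (θ t x)) := by
    intro t ht
    refine (hg_cont.comp (hθcont t ht)).integrable_of_hasCompactSupport ?_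
    exact HasCompactSupport.intro hK (hsupp_g t ht)
  -- Part 3 : continuity of F on Icc 0 T
  have hFcont : ContinuousOn F (Icc 0 T) := by
    obtain ⟨C₀, hC₀⟩ := (isCompact_Icc.prod hK).exists_bound_of_continuousOn
      (hg_cont.comp_continuousOn (hθ.continuousOn.mono
        (prod_mono (subset_refl _) (subset_univ K))))
    intro t₀ ht₀
    have hbnd_int : Integrable (K.indicator fun _ => C₀) := by
      rw [integrable_indicator_iff hK.measurableSet]
      exact integrableOn_const hK.measure_lt_top.ne
    apply tendsto_integral_filter_of_dominated_convergence (K.indicator fun _ => C₀)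
    · filter_upwards [self_mem_nhdsWithin] with s hs
      exact ((hg_cont.comp (hθcont s hs))).aestronglyMeasurable
    · filter_upwards [self_mem_nhdsWithin] with s hs
      apply Filter.Eventually.of_forall
      intro x
      by_cases hx : x ∈ K
      · rw [indicator_of_mem hx]
        exact hC₀ (s, x) ⟨hs, hx⟩
      · rw [indicator_of_notMem hx, hsupp_g s hs x hx, norm_zero]
    · exact hbnd_int
    · apply Filter.Eventually.of_forall
      intro x
      have hcw : ContinuousWithinAt (fun s => θ s x) (Icc 0 T) t₀ := by
        have := (hθ.continuousOn).comp
          ((continuous_id.prodMk continuous_const).continuousOn :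
            ContinuousOn (fun s : ℝ => (s, x)) (Icc 0 T))
          (fun s hs => ⟨hs, mem_univ x⟩)
        exact this t₀ ht₀
      exact (hg_cont.continuousAt.tendsto.comp hcw)
  -- Part 1 and 2 : F has derivative zero at interior points
  have hderiv : ∀ t₀ ∈ Ioo 0 T, HasDerivAt F 0 t₀ := by
    intro t₀ ht₀
    obtain ⟨ε, hεpos, hεsub⟩ := Metric.isOpen_iff.1 isOpen_Ioo t₀ ht₀
    have hε2 : (0:ℝ) < ε / 2 := by linarith
    have hballs : Metric.ball t₀ (ε/2) ⊆ Ioo 0 T :=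
      (Metric.ball_subset_ball (by linarith)).trans hεsub
    have hcballs : Metric.closedBall t₀ (ε/2) ⊆ Ioo 0 T :=
      (Metric.closedBall_subset_ball (by linarith)).trans hεsub
    set Φ : ℝ × EuclideanSpace ℝ (Fin (m+1)) → ℝ :=
      fun p => deriv g (θ p.1 p.2) * fderiv ℝ Θ p (1, 0) with hΦdef
    have hΦcont : ContinuousOn Φ Ω :=
      (hg'_cont.comp_continuousOn hθΩ.continuousOn).mul (hcontD.clm_apply continuousOn_const)
    obtain ⟨C₁, hC₁⟩ := ((isCompact_closedBall t₀ (ε/2)).prod hK).exists_bound_of_continuousOn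
      (hΦcont.mono (fun p hp => ⟨hcballs hp.1, mem_univ _⟩))
    have hbnd1_int : Integrable (K.indicator fun _ => C₁) := by
      rw [integrable_indicator_iff hK.measurableSet]
      exact integrableOn_const hK.measure_lt_top.ne
    have hΦ0 : ∀ s ∈ Ioo 0 T, ∀ x ∉ K, fderiv ℝ Θ (s, x) = 0 := by
      intro s hs x hx
      have hopen : IsOpen ((Ioo 0 T) ×ˢ Kᶜ) := isOpen_Ioo.prod hK.isClosed.isOpen_compl
      have hev : Θ =ᶠ[nhds (s, x)] (fun _ => (0:ℝ)) := by
        filter_upwards [hopen.mem_nhds ⟨hs, hx⟩] with p hp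
        have : θ p.1 p.2 = 0 := by
          by_contra h
          exact hp.2 (hsupp p.1 (hIccIoo hp.1) h)
        exact this
      rw [hev.fderiv_eq, fderiv_fun_const]
      rfl
    have key := hasDerivAt_integral_of_dominated_loc_of_deriv_le (μ := volume)
      (x₀ := t₀) (F := fun s x => g (θ s x)) (F' := fun s x => Φ (s, x))
      (bound := K.indicator fun _ => C₁) (Metric.ball_mem_nhds t₀ hε2)
      (by
        filter_upwards [isOpen_Ioo.mem_nhds ht₀] with s hs
        exact (hg_cont.comp (hθcont s (hIccIoo hs))).aestronglyMeasurable)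
      (hInt t₀ (hIccIoo ht₀))
      (by
        have hc : Continuous fun x => Φ (t₀, x) := by
          rw [← continuousOn_univ]
          exact hΦcont.comp ((continuous_const.prodMk continuous_id).continuousOn)
            (fun x _ => ⟨ht₀, mem_univ x⟩)
        exact hc.aestronglyMeasurable)
      (by
        apply Filter.Eventually.of_forall
        intro x s hs
        by_cases hx : x ∈ K
        · rw [indicator_of_mem hx]
          exact hC₁ (s, x) ⟨Metric.ball_subset_closedBall hs, hx⟩
        · rw [indicator_of_notMem hx]
          have h9 : deriv g (θ s x) * fderiv ℝ Θ (s, x) (1, 0) = 0 := by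
            rw [hΦ0 s (hballs hs) x hx]
            simp
          show ‖deriv g (θ s x) * fderiv ℝ Θ (s, x) (1, 0)‖ ≤ 0
          rw [h9, norm_zero])
      hbnd1_int
      (by
        apply Filter.Eventually.of_forall
        intro x s hs
        have hsIoo : s ∈ Ioo 0 T := hballs hs
        exact ((hg.differentiable one_ne_zero (θ s x)).hasDerivAt).comp s (hθt_hasD s hsIoo x))
    -- the integral of Φ (t₀, ·) vanishes by the divergence theorem
    have hzero : (∫ x, Φ (t₀, x)) = 0 := by
      set c' : EuclideanSpace ℝ (Fin (m+1)) → EuclideanSpace ℝ (Fin (m+1)) →L[ℝ] ℝ :=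
        fun x => (deriv g (θ t₀ x)) • fderiv ℝ (θ t₀) x with hc'def
      set v : EuclideanSpace ℝ (Fin (m+1)) → EuclideanSpace ℝ (Fin (m+1)) :=
        fun x => g (θ t₀ x) • u t₀ x with hvdef
      set v' : EuclideanSpace ℝ (Fin (m+1)) →
          EuclideanSpace ℝ (Fin (m+1)) →L[ℝ] EuclideanSpace ℝ (Fin (m+1)) :=
        fun x => g (θ t₀ x) • fderiv ℝ (u t₀) x + (c' x).smulRight (u t₀ x) with hv'def
      have hgθ_hasD : ∀ x, HasFDerivAt (fun y => g (θ t₀ y)) (c' x) x := by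
        intro x
        have h1 : HasFDerivAt (θ t₀) (fderiv ℝ (θ t₀) x) x :=
          (hθx_hasD t₀ ht₀ x).differentiableAt.hasFDerivAt
        exact ((hg.differentiable one_ne_zero (θ t₀ x)).hasDerivAt).comp_hasFDerivAt x h1
      have hv : ∀ x, HasFDerivAt v (v' x) x := by
        intro x
        have h1 : HasFDerivAt (u t₀) (fderiv ℝ (u t₀) x) x :=
          (hux_hasD t₀ ht₀ x).differentiableAt.hasFDerivAt
        exact (hgθ_hasD x).smul h1
      have htrace : ∀ x, LinearMap.trace ℝ (EuclideanSpace ℝ (Fin (m+1)))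
          ((v' x : EuclideanSpace ℝ (Fin (m+1)) →L[ℝ] EuclideanSpace ℝ (Fin (m+1))) :
            EuclideanSpace ℝ (Fin (m+1)) →ₗ[ℝ] EuclideanSpace ℝ (Fin (m+1)))
          = deriv g (θ t₀ x) * fderiv ℝ (θ t₀) x (u t₀ x) := by
        intro x
        simp only [hv'def]
        rw [ContinuousLinearMap.coe_add, map_add, ContinuousLinearMap.coe_smul, _root_.map_smul,
          hdiv t₀ (hIccIoo ht₀) x, trace_smulRight_eq (c' x) (u t₀ x)]
        simp only [hc'def, smul_eq_mul, mul_zero, zero_add,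
          ContinuousLinearMap.coe_smul', Pi.smul_apply]
      have hcont_v : Continuous v :=
        (hg_cont.comp (hθcont t₀ (hIccIoo ht₀))).smul (hucont t₀ (hIccIoo ht₀))
      have hDx_cont : Continuous fun x => fderiv ℝ Θ (t₀, x) := by
        rw [← continuousOn_univ]
        exact hcontD.comp ((continuous_const.prodMk continuous_id).continuousOn)
          (fun x _ => ⟨ht₀, mem_univ x⟩)
      have h2cont : Continuous fun x => fderiv ℝ (θ t₀) x (u t₀ x) := by
        have heq2 : (fun x => fderiv ℝ (θ t₀) x (u t₀ x)) =
            fun x => fderiv ℝ Θ (t₀, x) (0, u t₀ x) := funext (fun x => hθx_app t₀ ht₀ x)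
        rw [heq2]
        exact hDx_cont.clm_apply (continuous_const.prodMk (hucont t₀ (hIccIoo ht₀)))
      have hdivcont_v : Continuous fun x => LinearMap.trace ℝ (EuclideanSpace ℝ (Fin (m+1)))
          ((v' x : EuclideanSpace ℝ (Fin (m+1)) →L[ℝ] EuclideanSpace ℝ (Fin (m+1))) :
            EuclideanSpace ℝ (Fin (m+1)) →ₗ[ℝ] EuclideanSpace ℝ (Fin (m+1))) := by
        simp only [htrace]
        exact (hg'_cont.comp (hθcont t₀ (hIccIoo ht₀))).mul h2cont
      have hsupp_v : ∀ x, R0 + 1 ≤ ‖x‖ → v x = 0 := by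
        intro x hx
        have hxK : x ∉ K := by
          intro hmem
          have := hR0 hmem
          rw [Metric.mem_closedBall, dist_zero_right] at this
          linarith
        have : θ t₀ x = 0 := by
          by_contra h
          exact hxK (hsupp t₀ (hIccIoo ht₀) h)
        simp only [hvdef, this, hg0, zero_smul]
      have hdivzero := divergence_integral_zero v v' hv hcont_v hdivcont_v (R0 + 1) hsupp_v
      have hptwise : ∀ x, Φ (t₀, x) = - LinearMap.trace ℝ (EuclideanSpace ℝ (Fin (m+1)))
          ((v' x : EuclideanSpace ℝ (Fin (m+1)) →L[ℝ] EuclideanSpace ℝ (Fin (m+1))) :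
            EuclideanSpace ℝ (Fin (m+1)) →ₗ[ℝ] EuclideanSpace ℝ (Fin (m+1))) := by
        intro x
        rw [htrace x]
        simp only [hΦdef, hDval t₀ ht₀ x]
        ring
      calc (∫ x, Φ (t₀, x))
          = ∫ x, - LinearMap.trace ℝ (EuclideanSpace ℝ (Fin (m+1)))
            ((v' x : EuclideanSpace ℝ (Fin (m+1)) →L[ℝ] EuclideanSpace ℝ (Fin (m+1))) :
              EuclideanSpace ℝ (Fin (m+1)) →ₗ[ℝ] EuclideanSpace ℝ (Fin (m+1))) := by
            exact congrArg _ (funext hptwise)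
        _ = 0 := by rw [integral_neg, hdivzero, neg_zero]
    have := key.2
    rwa [hzero] at this
  -- Part 4 : conclude that F is constant on Icc 0 T
  have hconst2 : ∀ x ∈ Ioo 0 T, ∀ y ∈ Ioo 0 T, F x = F y := by
    intro x hx y hy
    apply (convex_Ioo (0:ℝ) T).is_const_of_fderivWithin_eq_zero
      (fun s hs => (hderiv s hs).differentiableAt.differentiableWithinAt) ?_ hx hy
    intro s hs
    rw [fderivWithin_of_isOpen isOpen_Ioo hs]
    have h0 : (ContinuousLinearMap.toSpanSingleton ℝ (0:ℝ)) = 0 := by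
      ext r
      simp
    have h1 : HasFDerivAt F (0 : ℝ →L[ℝ] ℝ) s := by
      have := hasDerivAt_iff_hasFDerivAt.1 (hderiv s hs)
      rwa [h0] at this
    exact h1.fderiv
  have hmid : T/2 ∈ Ioo 0 T := ⟨by linarith, by linarith⟩
  have hclo : ∀ t ∈ Icc 0 T, Filter.NeBot (nhdsWithin t (Ioo 0 T)) := by
    intro t ht
    rw [← mem_closure_iff_nhdsWithin_neBot, closure_Ioo hT.ne]
    exact ht
  have hend : ∀ t ∈ Icc 0 T, F t = F (T/2) := by
    intro t ht
    rcases eq_or_lt_of_le ht.1 with h0 | h0pos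
    · haveI := hclo t ht
      have h1 : Filter.Tendsto F (nhdsWithin t (Ioo 0 T)) (nhds (F t)) :=
        ((hFcont t ht).mono hIccIoo)
      have h2 : Filter.Tendsto F (nhdsWithin t (Ioo 0 T)) (nhds (F (T/2))) := by
        apply Filter.Tendsto.congr' _ tendsto_const_nhds
        filter_upwards [self_mem_nhdsWithin] with s hs
        exact (hconst2 s hs _ hmid).symm
      exact tendsto_nhds_unique h1 h2
    · rcases eq_or_lt_of_le ht.2 with hT' | hlt
      · haveI := hclo t ht
        have h1 : Filter.Tendsto F (nhdsWithin t (Ioo 0 T)) (nhds (F t)) :=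
          ((hFcont t ht).mono hIccIoo)
        have h2 : Filter.Tendsto F (nhdsWithin t (Ioo 0 T)) (nhds (F (T/2))) := by
          apply Filter.Tendsto.congr' _ tendsto_const_nhds
          filter_upwards [self_mem_nhdsWithin] with s hs
          exact (hconst2 s hs _ hmid).symm
        exact tendsto_nhds_unique h1 h2
      · exact hconst2 t ⟨h0pos, hlt⟩ _ hmid
  intro t ht
  have e1 := hend t ht
  have e2 := hend 0 (left_mem_Icc.2 hT.le)
  exact e1.trans e2.symm

lemma hasDerivAt_sq_max (x : ℝ) : HasDerivAt (fun y : ℝ => max y 0 ^ 2) (2 * max x 0) x := by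
  rcases lt_trichotomy x 0 with hx | hx | hx
  · have hev : (fun y : ℝ => max y 0 ^ 2) =ᶠ[nhds x] fun _ => 0 := by
      filter_upwards [Iio_mem_nhds hx] with y hy
      rw [max_eq_right (le_of_lt hy)]
      norm_num
    rw [max_eq_right hx.le, mul_zero]
    exact (hasDerivAt_const x (0:ℝ)).congr_of_eventuallyEq hev
  · subst hx
    rw [max_self, mul_zero]
    rw [hasDerivAt_iff_isLittleO]
    rw [Asymptotics.isLittleO_iff]
    intro c hc
    filter_upwards [Metric.ball_mem_nhds 0 hc] with y hy
    rw [Metric.mem_ball, Real.dist_eq, sub_zero] at hy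
    have h1 : max y 0 ≤ |y| := max_le (le_abs_self y) (abs_nonneg y)
    have h2 : (0:ℝ) ≤ max y 0 := le_max_right y 0
    have h3 : max y 0 ^ 2 ≤ |y| ^ 2 := by nlinarith
    simp only [max_self, sub_zero, smul_zero, Real.norm_eq_abs]
    have h4 : |max y 0 ^ 2 - 0 ^ 2| = max y 0 ^ 2 := by
      rw [abs_of_nonneg] <;> nlinarith
    calc |max y 0 ^ 2 - 0 ^ 2| = max y 0 ^ 2 := h4
      _ ≤ |y| ^ 2 := h3
      _ = |y| * |y| := sq (|y|) ▸ by ring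
      _ ≤ c * |y| := by nlinarith [abs_nonneg y]
  · have hev : (fun y : ℝ => max y 0 ^ 2) =ᶠ[nhds x] fun y => y ^ 2 := by
      filter_upwards [Ioi_mem_nhds hx] with y hy
      rw [max_eq_left (le_of_lt hy)]
    rw [max_eq_left hx.le]
    have h : HasDerivAt (fun y : ℝ => y ^ 2) (2 * x) x := by
      simpa using hasDerivAt_pow 2 x
    exact h.congr_of_eventuallyEq hev

lemma contDiff_sq_max : ContDiff ℝ 1 fun y : ℝ => max y 0 ^ 2 := by
  rw [contDiff_one_iff_deriv]
  refine ⟨fun x => (hasDerivAt_sq_max x).differentiableAt, ?_⟩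
  have h : deriv (fun y : ℝ => max y 0 ^ 2) = fun x => 2 * max x 0 :=
    funext fun x => (hasDerivAt_sq_max x).deriv
  rw [h]
  exact continuous_const.mul (continuous_id.max continuous_const)

lemma contDiff_geps (r : ℝ) {ε : ℝ} (hε : 0 < ε) :
    ContDiff ℝ 1 fun s : ℝ => (s^2 + ε^2) ^ (r/2) - ε^r := by
  apply ContDiff.sub _ contDiff_const
  rw [contDiff_iff_contDiffAt]
  intro s
  have h1 : ContDiffAt ℝ 1 (fun s : ℝ => s^2 + ε^2) s :=
    ((contDiff_id.pow 2).add contDiff_const).contDiffAt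
  exact h1.rpow_const_of_ne (by positivity)


set_option maxHeartbeats 1000000 in
/-- The `L^p` norms of a compactly supported scalar transported by a divergence-free
velocity field do not increase. -/
theorem transport_Lp_nonincreasing (d : ℕ) (hd : 1 ≤ d) (T : ℝ) (hT : 0 < T)
    (u : ℝ → EuclideanSpace ℝ (Fin d) → EuclideanSpace ℝ (Fin d))
    (θ : ℝ → EuclideanSpace ℝ (Fin d) → ℝ)
    (hu : ContDiffOn ℝ 1 (fun p : ℝ × EuclideanSpace ℝ (Fin d) => u p.1 p.2)
      (Icc 0 T ×ˢ univ))
    (hθ : ContDiffOn ℝ 1 (fun p : ℝ × EuclideanSpace ℝ (Fin d) => θ p.1 p.2)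
      (Icc 0 T ×ˢ univ))
    (hdiv : ∀ t ∈ Icc 0 T, ∀ x : EuclideanSpace ℝ (Fin d),
      LinearMap.trace ℝ (EuclideanSpace ℝ (Fin d))
        ((fderiv ℝ (u t) x : EuclideanSpace ℝ (Fin d) →L[ℝ] EuclideanSpace ℝ (Fin d)) :
          EuclideanSpace ℝ (Fin d) →ₗ[ℝ] EuclideanSpace ℝ (Fin d)) = 0)
    (K : Set (EuclideanSpace ℝ (Fin d))) (hK : IsCompact K)
    (hsupp : ∀ t ∈ Icc 0 T, Function.support (θ t) ⊆ K)
    (heq : ∀ t ∈ Icc 0 T, ∀ x,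
      deriv (fun s => θ s x) t + fderiv ℝ (θ t) x (u t x) = 0) :
    ∀ p : ℝ≥0∞, 1 ≤ p → ∀ t ∈ Icc 0 T,
      eLpNorm (θ t) p volume ≤ eLpNorm (θ 0) p volume := by
  obtain ⟨m, rfl⟩ : ∃ m, d = m + 1 := ⟨d - 1, (Nat.succ_pred_eq_of_pos hd).symm⟩
  have hθcont : ∀ s ∈ Icc 0 T, Continuous (θ s) := by
    intro s hs
    rw [← continuousOn_univ]
    exact (hθ.continuousOn).comp ((continuous_const.prodMk continuous_id).continuousOn)
      (fun x _ => ⟨hs, mem_univ x⟩)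
  have hIntg : ∀ (g : ℝ → ℝ), Continuous g → g 0 = 0 → ∀ s ∈ Icc 0 T,
      Integrable (fun x => g (θ s x)) := by
    intro g hgc hg0 s hs
    refine (hgc.comp (hθcont s hs)).integrable_of_hasCompactSupport ?_
    apply HasCompactSupport.intro hK
    intro x hx
    have h1 : θ s x = 0 := by
      by_contra h
      exact hx (hsupp s hs h)
    show g (θ s x) = 0
    rw [h1, hg0]
  intro p hp t ht
  have hp0 : p ≠ 0 := by
    intro h
    rw [h] at hp
    simp at hp
  by_cases hptop : p = ⊤
  · subst hptop
    rw [eLpNorm_exponent_top, eLpNorm_exponent_top]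
    by_cases hfin : eLpNormEssSup (θ 0) volume = ⊤
    · rw [hfin]
      exact le_top
    set M := (eLpNormEssSup (θ 0) volume).toReal with hM
    have hM0 : 0 ≤ M := ENNReal.toReal_nonneg
    have hae : ∀ᵐ x, ‖θ 0 x‖ ≤ M := by
      filter_upwards [ae_le_eLpNormEssSup (f := θ 0) (μ := volume)] with x hx
      have h2 := ENNReal.toReal_mono hfin hx
      simpa using h2
    set g : ℝ → ℝ := fun s => max (s^2 - M^2) 0 ^ 2 with hgdef
    have hgc : ContDiff ℝ 1 g :=
      contDiff_sq_max.comp ((contDiff_id.pow 2).sub contDiff_const)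
    have hg0 : g 0 = 0 := by
      simp only [hgdef]
      rw [max_eq_right (by nlinarith : (0:ℝ)^2 - M^2 ≤ 0)]
      norm_num
    have hkey := transport_integral_const T hT u θ hu hθ hdiv K hK hsupp heq g hgc hg0 t ht
    have h0int : (∫ x, g (θ 0 x)) = 0 := by
      apply integral_eq_zero_of_ae
      filter_upwards [hae] with x hx
      have h3 : θ 0 x ^ 2 - M^2 ≤ 0 := by
        rw [Real.norm_eq_abs] at hx
        nlinarith [sq_abs (θ 0 x), abs_nonneg (θ 0 x)]
      simp only [hgdef]
      rw [max_eq_right h3]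
      norm_num
    have hzero : (∫ x, g (θ t x)) = 0 := by rw [hkey, h0int]
    have hint := hIntg g hgc.continuous hg0 t ht
    have hae2 : (fun x => g (θ t x)) =ᵐ[volume] 0 := by
      rw [← integral_eq_zero_iff_of_nonneg (fun x => by positivity) hint]
      exact hzero
    have hbd : ∀ᵐ x, ‖θ t x‖ ≤ M := by
      filter_upwards [hae2] with x hx
      simp only [hgdef, Pi.zero_apply] at hx
      have h1 : max ((θ t x)^2 - M^2) 0 = 0 := by
        exact pow_eq_zero_iff two_ne_zero |>.1 hx
      have h2 : (θ t x)^2 - M^2 ≤ 0 := by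
        by_contra hcon
        push_neg at hcon
        rw [max_eq_left hcon.le] at h1
        linarith
      rw [Real.norm_eq_abs]
      nlinarith [sq_abs (θ t x), abs_nonneg (θ t x)]
    calc eLpNormEssSup (θ t) volume ≤ ENNReal.ofReal M := eLpNormEssSup_le_of_ae_bound hbd
      _ = eLpNormEssSup (θ 0) volume := by rw [hM, ENNReal.ofReal_toReal hfin]
  · have hr1 : 1 ≤ p.toReal := by
      have h4 := ENNReal.toReal_mono hptop hp
      simpa using h4
    set r := p.toReal with hr
    have hrpos : 0 < r := lt_of_lt_of_le one_pos hr1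
    rw [eLpNorm_eq_lintegral_rpow_enorm_toReal hp0 hptop, eLpNorm_eq_lintegral_rpow_enorm_toReal hp0 hptop]
    apply ENNReal.rpow_le_rpow _ (by positivity)
    have habs_cont : Continuous fun y : ℝ => |y| ^ r :=
      continuous_abs.rpow_const (fun y => Or.inr hrpos.le)
    have habs0 : |(0:ℝ)| ^ r = 0 := by rw [abs_zero, Real.zero_rpow hrpos.ne']
    have hconv : ∀ s ∈ Icc 0 T, (∫⁻ x, ‖θ s x‖ₑ ^ r) =
        ENNReal.ofReal (∫ x, |θ s x| ^ r) := by
      intro s hs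
      rw [ofReal_integral_eq_lintegral_ofReal
        (hIntg _ habs_cont habs0 s hs)
        (Filter.Eventually.of_forall fun x => by positivity)]
      apply lintegral_congr
      intro x
      rw [← ENNReal.ofReal_rpow_of_nonneg (abs_nonneg _) hrpos.le]
      congr 1
      rw [← Real.norm_eq_abs, ofReal_norm]
    have hreal : (∫ x, |θ t x| ^ r) = ∫ x, |θ 0 x| ^ r := by
      set geps : ℕ → ℝ → ℝ :=
        fun n s => (s^2 + (1/((n:ℝ)+1))^2) ^ (r/2) - (1/((n:ℝ)+1))^r with hgeps
      have hεpos : ∀ n : ℕ, (0:ℝ) < 1/((n:ℝ)+1) := fun n => by positivity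
      have hεle1 : ∀ n : ℕ, (1/((n:ℝ)+1)) ≤ 1 := by
        intro n
        rw [div_le_one (by positivity)]
        linarith [Nat.cast_nonneg (α := ℝ) n]
      have hgepsC : ∀ n, ContDiff ℝ 1 (geps n) := fun n => contDiff_geps r (hεpos n)
      have hgeps0 : ∀ n, geps n 0 = 0 := by
        intro n
        simp only [hgeps]
        have h5 : ((0:ℝ))^2 = 0 := by norm_num
        rw [h5, zero_add]
        have h6 : ((1/((n:ℝ)+1))^2) ^ (r/2) = (1/((n:ℝ)+1)) ^ r := by
          rw [← Real.rpow_natCast (1/((n:ℝ)+1)) 2, ← Real.rpow_mul (le_of_lt (hεpos n))]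
          congr 1
          push_cast
          ring
        rw [h6, sub_self]
      have hlim : ∀ s ∈ Icc 0 T, Filter.Tendsto (fun n => ∫ x, geps n (θ s x)) Filter.atTop
          (nhds (∫ x, |θ s x| ^ r)) := by
        intro s hs
        set bound : EuclideanSpace ℝ (Fin (m+1)) → ℝ :=
          K.indicator (fun x => ((θ s x)^2 + 1) ^ (r/2) + 1) with hbounddef
        have hbound_int : Integrable bound := by
          rw [hbounddef, integrable_indicator_iff hK.measurableSet]
          exact (((((hθcont s hs).pow 2).add continuous_const).rpow_const
            (fun x => Or.inr (by positivity))).add continuous_const).continuousOn.integrableOn_compact hK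
        apply tendsto_integral_of_dominated_convergence bound
        · intro n
          exact ((hgepsC n).continuous.comp (hθcont s hs)).aestronglyMeasurable
        · exact hbound_int
        · intro n
          apply Filter.Eventually.of_forall
          intro x
          by_cases hx : x ∈ K
          · rw [hbounddef, indicator_of_mem hx]
            have hb1 : ((θ s x)^2 + (1/((n:ℝ)+1))^2) ^ (r/2) ≤ ((θ s x)^2 + 1) ^ (r/2) := by
              apply Real.rpow_le_rpow (by positivity) _ (by positivity)
              nlinarith [hεle1 n, hεpos n]
            have hb2 : (1/((n:ℝ)+1))^r ≤ 1 :=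
              Real.rpow_le_one (le_of_lt (hεpos n)) (hεle1 n) hrpos.le
            have hb3 : (0:ℝ) ≤ ((θ s x)^2 + (1/((n:ℝ)+1))^2) ^ (r/2) := by positivity
            have hb4 : (0:ℝ) ≤ (1/((n:ℝ)+1))^r := Real.rpow_nonneg (le_of_lt (hεpos n)) r
            have hb5 : (0:ℝ) ≤ ((θ s x)^2 + 1) ^ (r/2) := by positivity
            rw [Real.norm_eq_abs]
            rw [abs_le]
            constructor <;> simp only [hgeps] <;> nlinarith
          · have hθx : θ s x = 0 := by
              by_contra h
              exact hx (hsupp s hs h)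
            rw [hbounddef, indicator_of_notMem hx]
            show ‖geps n (θ s x)‖ ≤ 0
            rw [hθx, hgeps0 n, norm_zero]
        · apply Filter.Eventually.of_forall
          intro x
          have h1 : Filter.Tendsto (fun n : ℕ => 1/((n:ℝ)+1)) Filter.atTop (nhds 0) :=
            tendsto_one_div_add_atTop_nhds_zero_nat
          have h2 : ContinuousAt (fun ε : ℝ => ((θ s x)^2 + ε^2) ^ (r/2) - ε^r) 0 := by
            apply ContinuousAt.sub
            · exact (Real.continuousAt_rpow_const _ _ (Or.inr (by positivity))).comp
                (continuousAt_const.add ((continuous_pow 2).continuousAt))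
            · exact Real.continuousAt_rpow_const _ _ (Or.inr hrpos.le)
          have h3 := h2.tendsto.comp h1
          have hval : ((θ s x)^2 + (0:ℝ)^2) ^ (r/2) - (0:ℝ)^r = |θ s x| ^ r := by
            have h7 : ((0:ℝ))^2 = 0 := by norm_num
            rw [h7, add_zero, Real.zero_rpow hrpos.ne', sub_zero, ← sq_abs (θ s x),
              ← Real.rpow_natCast |θ s x| 2, ← Real.rpow_mul (abs_nonneg _)]
            congr 1
            push_cast
            ring
          rw [hval] at h3
          exact h3
      have heqn : ∀ n, (∫ x, geps n (θ t x)) = ∫ x, geps n (θ 0 x) := fun n =>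
        transport_integral_const T hT u θ hu hθ hdiv K hK hsupp heq
          (geps n) (hgepsC n) (hgeps0 n) t ht
      have l1 := hlim t ht
      have l2 := hlim 0 (left_mem_Icc.2 hT.le)
      rw [show (fun n => ∫ x, geps n (θ t x)) = fun n => ∫ x, geps n (θ 0 x) from
        funext heqn] at l1
      exact tendsto_nhds_unique l1 l2
    rw [hconv t ht, hconv 0 (left_mem_Icc.2 hT.le), hreal]
end

section
/- (Osgood lemma, positive initial bound.) Let γ : [0,∞) → [0,∞) be measurable and integrable on every bounded interval, let μ : [0,∞) → [0,∞) be continuous and non-decreasing with μ(r) > 0 for r > 0, let a > 0, and let α : [0,∞) → [0,∞) be measurable such that t ↦ γ(t)·μ(α(t)) is integrable on every bounded interval and α(t) ≤ a + ∫_0^t γ(τ)·μ(α(τ)) dτ for all t ≥ 0. Then for every t ≥ 0 with α(t) > 0, one has M(a) − M(α(t)) ≤ ∫_0^t γ(τ) dτ, where M(x) := ∫_x^1 dr/μ(r). -/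
open MeasureTheory Set

/-- Osgood lemma, case of a positive initial bound `a > 0`:
`M(a) - M(α t) ≤ ∫_0^t γ`, where `M x = ∫_x^1 dr / μ r`. -/
theorem osgood_lemma_pos (γ μ α : ℝ → ℝ) (a : ℝ) (ha : 0 < a)
    (hγnn : ∀ t, 0 ≤ t → 0 ≤ γ t)
    (hγint : ∀ T, 0 < T → IntegrableOn γ (Icc 0 T))
    (hμcont : ContinuousOn μ (Ici 0)) (hμmono : MonotoneOn μ (Ici 0))
    (hμnn : ∀ r, 0 ≤ r → 0 ≤ μ r)
    (hμpos : ∀ r, 0 < r → 0 < μ r)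
    (hα : Measurable α) (hαnn : ∀ t, 0 ≤ t → 0 ≤ α t)
    (hint : ∀ T, 0 < T → IntegrableOn (fun t => γ t * μ (α t)) (Icc 0 T))
    (hineq : ∀ t, 0 ≤ t → α t ≤ a + ∫ τ in (0:ℝ)..t, γ τ * μ (α τ)) :
    ∀ t, 0 ≤ t → 0 < α t →
      (∫ r in a..(1:ℝ), (μ r)⁻¹) - (∫ r in (α t)..(1:ℝ), (μ r)⁻¹)
        ≤ ∫ τ in (0:ℝ)..t, γ τ := by
  intro t₀ ht₀ hαt₀
  set g : ℝ → ℝ := fun τ => γ τ * μ (α τ) with hgdef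
  set T : ℝ := t₀ + 1 with hTdef
  have hT0 : (0:ℝ) < T := by simp only [hTdef]; linarith
  have ht₀T : t₀ ≤ T := by simp only [hTdef]; linarith
  have hgint : IntegrableOn g (Icc 0 T) := hint T hT0
  have hγintT : IntegrableOn γ (Icc 0 T) := hγint T hT0
  -- interval integrability on subintervals of [0,T]
  have hgii : ∀ s t : ℝ, s ∈ Icc (0:ℝ) T → t ∈ Icc (0:ℝ) T →
      IntervalIntegrable g volume s t := fun s t hs ht =>
    (hgint.mono_set (uIcc_subset_Icc hs ht)).intervalIntegrable
  have hγii : ∀ s t : ℝ, s ∈ Icc (0:ℝ) T → t ∈ Icc (0:ℝ) T →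
      IntervalIntegrable γ volume s t := fun s t hs ht =>
    (hγintT.mono_set (uIcc_subset_Icc hs ht)).intervalIntegrable
  have hgnn : ∀ τ, 0 ≤ τ → 0 ≤ g τ := fun τ hτ =>
    mul_nonneg (hγnn τ hτ) (hμnn _ (hαnn τ hτ))
  set φ : ℝ → ℝ := fun t => a + ∫ τ in (0:ℝ)..t, g τ with hφdef
  have hφsub : ∀ s t : ℝ, s ∈ Icc (0:ℝ) T → t ∈ Icc (0:ℝ) T →
      φ t - φ s = ∫ τ in s..t, g τ := by
    intro s t hs ht
    have := intervalIntegral.integral_interval_sub_left (hgii 0 t (left_mem_Icc.2 hT0.le) ht)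
      (hgii 0 s (left_mem_Icc.2 hT0.le) hs)
    simp only [hφdef]
    linarith [this]
  have hφmono : ∀ s t : ℝ, s ∈ Icc (0:ℝ) T → t ∈ Icc (0:ℝ) T → s ≤ t → φ s ≤ φ t := by
    intro s t hs ht hst
    have h1 : 0 ≤ ∫ τ in s..t, g τ :=
      intervalIntegral.integral_nonneg hst (fun τ hτ => hgnn τ (le_trans hs.1 hτ.1))
    have := hφsub s t hs ht
    linarith
  have hφ0 : φ 0 = a := by simp [hφdef]
  have hφa : ∀ t, t ∈ Icc (0:ℝ) T → a ≤ φ t := by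
    intro t ht
    have := hφmono 0 t (left_mem_Icc.2 hT0.le) ht ht.1
    rw [hφ0] at this; exact this
  have hφpos : ∀ t, t ∈ Icc (0:ℝ) T → 0 < φ t := fun t ht => lt_of_lt_of_le ha (hφa t ht)
  have hαφ : ∀ t, 0 ≤ t → α t ≤ φ t := hineq
  have hμφpos : ∀ t, t ∈ Icc (0:ℝ) T → 0 < μ (φ t) := fun t ht => hμpos _ (hφpos t ht)
  -- integrability of (μ ·)⁻¹
  have hinvii : ∀ x y : ℝ, 0 < x → 0 < y →
      IntervalIntegrable (fun r => (μ r)⁻¹) volume x y := by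
    intro x y hx hy
    have hsub : uIcc x y ⊆ Ici (0:ℝ) := by
      intro r hr
      have : min x y ≤ r := hr.1
      have : 0 < r := lt_of_lt_of_le (lt_min hx hy) this
      exact this.le
    have hcont : ContinuousOn (fun r => (μ r)⁻¹) (uIcc x y) := by
      apply (hμcont.mono hsub).inv₀
      intro r hr
      exact ne_of_gt (hμpos r (lt_of_lt_of_le (lt_min hx hy) hr.1))
    exact hcont.intervalIntegrable
  set F : ℝ → ℝ := fun x => ∫ r in a..x, (μ r)⁻¹ with hFdef
  have hFsub : ∀ x y : ℝ, 0 < x → 0 < y →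
      F y - F x = ∫ r in x..y, (μ r)⁻¹ :=
    fun x y hx hy => intervalIntegral.integral_interval_sub_left
      (hinvii a y ha hy) (hinvii a x ha hx)
  have hFest : ∀ x y : ℝ, 0 < x → x ≤ y → F y - F x ≤ (y - x) * (μ x)⁻¹ := by
    intro x y hx hxy
    rw [hFsub x y hx (lt_of_lt_of_le hx hxy)]
    have hb : (∫ r in x..y, (μ r)⁻¹) ≤ ∫ _r in x..y, (μ x)⁻¹ := by
      apply intervalIntegral.integral_mono_on hxy (hinvii x y hx (lt_of_lt_of_le hx hxy))
        intervalIntegrable_const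
      intro r hr
      exact inv_anti₀ (hμpos x hx)
        (hμmono (le_of_lt hx) (le_trans hx.le hr.1) hr.1)
    simpa using hb
  -- continuity
  have hIccuIcc : uIcc (0:ℝ) T = Icc 0 T := uIcc_of_le hT0.le
  have hγprim : ContinuousOn (fun t => ∫ τ in (0:ℝ)..t, γ τ) (Icc 0 T) := by
    rw [← hIccuIcc]
    exact intervalIntegral.continuousOn_primitive_interval (by rwa [hIccuIcc])
  have hφcont : ContinuousOn φ (Icc 0 T) := by
    rw [← hIccuIcc]
    exact continuousOn_const.add
      (intervalIntegral.continuousOn_primitive_interval (by rwa [hIccuIcc]))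
  have hμφcont : ContinuousOn (fun t => μ (φ t)) (Icc 0 T) :=
    hμcont.comp hφcont (fun t ht => (hφpos t ht).le)
  set B : ℝ := φ T with hBdef
  have haB : a ≤ B := hφa T (right_mem_Icc.2 hT0.le)
  have hFcont : ContinuousOn F (Icc a B) := by
    have : IntegrableOn (fun r => (μ r)⁻¹) (uIcc a B) := by
      rw [uIcc_of_le haB]
      exact (intervalIntegrable_iff_integrableOn_Icc_of_le haB).1 (hinvii a B ha (lt_of_lt_of_le ha haB))
    have := intervalIntegral.continuousOn_primitive_interval this
    rwa [uIcc_of_le haB] at this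
  have hFφcont : ContinuousOn (fun t => F (φ t)) (Icc 0 T) := by
    apply hFcont.comp hφcont
    intro t ht
    exact ⟨hφa t ht, hφmono t T ht (right_mem_Icc.2 hT0.le) ht.2⟩
  -- key estimate
  have key : ∀ ε : ℝ, 0 < ε → F (φ t₀) ≤ (1 + ε) * ∫ τ in (0:ℝ)..t₀, γ τ := by
    intro ε hε
    set S : Set ℝ := Icc 0 t₀ ∩ {t | F (φ t) ≤ (1 + ε) * ∫ τ in (0:ℝ)..t, γ τ} with hSdef
    have hSsub : S ⊆ Icc 0 t₀ := inter_subset_left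
    have hS0 : (0:ℝ) ∈ S := by
      constructor
      · exact left_mem_Icc.2 ht₀
      · simp [hφ0, hFdef]
    have hSne : S.Nonempty := ⟨0, hS0⟩
    have hSbdd : BddAbove S := (bddAbove_Icc).mono hSsub
    have hsubT : Icc (0:ℝ) t₀ ⊆ Icc 0 T := Icc_subset_Icc le_rfl ht₀T
    have hSclosed : IsClosed S := by
      have hcont : ContinuousOn
          (fun t => (F (φ t), (1 + ε) * ∫ τ in (0:ℝ)..t, γ τ))
          (Icc 0 t₀) :=
        ((hFφcont.mono hsubT).prodMk (continuousOn_const.mul (hγprim.mono hsubT)))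
      have hcl := hcont.preimage_isClosed_of_isClosed isClosed_Icc
        (OrderClosedTopology.isClosed_le' : IsClosed {p : ℝ × ℝ | p.1 ≤ p.2})
      have hset : S = Icc 0 t₀ ∩
          (fun t => (F (φ t), (1 + ε) * ∫ τ in (0:ℝ)..t, γ τ)) ⁻¹' {p : ℝ × ℝ | p.1 ≤ p.2} := by
        ext t
        simp only [hSdef, mem_inter_iff, mem_setOf_eq, mem_preimage]
      rw [hset]
      exact hcl
    set u : ℝ := sSup S with hudef
    have huS : u ∈ S := hSclosed.csSup_mem hSne hSbdd
    have huIcc : u ∈ Icc (0:ℝ) t₀ := hSsub huS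
    have huF : F (φ u) ≤ (1 + ε) * ∫ τ in (0:ℝ)..u, γ τ := huS.2
    rcases eq_or_lt_of_le huIcc.2 with hu | hu
    · rwa [hu] at huF
    · exfalso
      -- continuity of μ ∘ φ at u gives room
      have huT : u ∈ Icc (0:ℝ) T := hsubT huIcc
      have hcw : ContinuousWithinAt (fun t => μ (φ t)) (Icc 0 T) u := hμφcont u huT
      have hlt : μ (φ u) < (1 + ε) * μ (φ u) := by
        have := hμφpos u huT; nlinarith
      have hev : ∀ᶠ s in nhdsWithin u (Icc 0 T), μ (φ s) < (1 + ε) * μ (φ u) :=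
        hcw.eventually_lt continuousWithinAt_const hlt
      obtain ⟨δ, hδ, hball⟩ := Metric.mem_nhdsWithin_iff.1 hev
      set t : ℝ := min (u + δ/2) t₀ with htdef
      have hut : u < t := by
        apply lt_min (by linarith) hu
      have htIcc : t ∈ Icc (0:ℝ) t₀ := ⟨le_trans huIcc.1 hut.le, min_le_right _ _⟩
      have htT : t ∈ Icc (0:ℝ) T := hsubT htIcc
      -- pointwise bound on [u, t]
      have hpt : ∀ τ ∈ Icc u t, g τ ≤ γ τ * ((1 + ε) * μ (φ u)) := by
        intro τ hτ
        have hτ0 : 0 ≤ τ := le_trans huIcc.1 hτ.1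
        have hτT : τ ∈ Icc (0:ℝ) T := ⟨hτ0, le_trans hτ.2 (le_trans htIcc.2 ht₀T)⟩
        have hdist : dist τ u < δ := by
          rw [Real.dist_eq, abs_lt]
          constructor
          · have := hτ.1; linarith
          · have := hτ.2
            have : τ ≤ u + δ/2 := le_trans hτ.2 (min_le_left _ _)
            linarith
        have hμφτ : μ (φ τ) < (1 + ε) * μ (φ u) := hball ⟨Metric.mem_ball.2 hdist, hτT⟩
        have h1 : μ (α τ) ≤ μ (φ τ) :=
          hμmono (hαnn τ hτ0) (hφpos τ hτT).le (hαφ τ hτ0)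
        exact mul_le_mul_of_nonneg_left (le_trans h1 hμφτ.le) (hγnn τ hτ0)
      have hint1 : (∫ τ in u..t, g τ) ≤ ∫ τ in u..t, γ τ * ((1 + ε) * μ (φ u)) := by
        apply intervalIntegral.integral_mono_on hut.le (hgii u t huT htT)
          ((hγii u t huT htT).mul_const _) hpt
      have hint2 : (∫ τ in u..t, γ τ * ((1 + ε) * μ (φ u)))
          = (∫ τ in u..t, γ τ) * ((1 + ε) * μ (φ u)) :=
        intervalIntegral.integral_mul_const _ _
      have hφut : φ t - φ u = ∫ τ in u..t, g τ := hφsub u t huT htT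
      have hμφu : 0 < μ (φ u) := hμφpos u huT
      have hFle : F (φ t) - F (φ u) ≤ (φ t - φ u) * (μ (φ u))⁻¹ :=
        hFest (φ u) (φ t) (hφpos u huT) (hφmono u t huT htT hut.le)
      have hγut : 0 ≤ ∫ τ in u..t, γ τ :=
        intervalIntegral.integral_nonneg hut.le (fun τ hτ => hγnn τ (le_trans huIcc.1 hτ.1))
      have hFt : F (φ t) ≤ F (φ u) + (1 + ε) * ∫ τ in u..t, γ τ := by
        have h3 : (φ t - φ u) * (μ (φ u))⁻¹ ≤ (1 + ε) * ∫ τ in u..t, γ τ := by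
          rw [hφut]
          have h4 : (∫ τ in u..t, g τ) ≤ (∫ τ in u..t, γ τ) * ((1 + ε) * μ (φ u)) := by
            rw [← hint2]; exact hint1
          rw [← div_eq_mul_inv, div_le_iff₀ hμφu]
          calc (∫ τ in u..t, g τ) ≤ (∫ τ in u..t, γ τ) * ((1 + ε) * μ (φ u)) := h4
            _ = (1 + ε) * (∫ τ in u..t, γ τ) * μ (φ u) := by ring
        linarith
      have hγadd : (∫ τ in (0:ℝ)..u, γ τ) + (∫ τ in u..t, γ τ) = ∫ τ in (0:ℝ)..t, γ τ :=
        intervalIntegral.integral_add_adjacent_intervals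
          (hγii 0 u (left_mem_Icc.2 hT0.le) huT) (hγii u t huT htT)
      have htS : t ∈ S := by
        refine ⟨htIcc, ?_⟩
        simp only [mem_setOf_eq]
        calc F (φ t) ≤ F (φ u) + (1 + ε) * (∫ τ in u..t, γ τ) := hFt
          _ ≤ (1 + ε) * (∫ τ in (0:ℝ)..u, γ τ) + (1 + ε) * (∫ τ in u..t, γ τ) := by linarith
          _ = (1 + ε) * (∫ τ in (0:ℝ)..t, γ τ) := by rw [← hγadd]; ring
      have : t ≤ u := le_csSup hSbdd htS
      linarith
  -- pass to the limit ε → 0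
  set C : ℝ := ∫ τ in (0:ℝ)..t₀, γ τ with hCdef
  have hC0 : 0 ≤ C :=
    intervalIntegral.integral_nonneg ht₀ (fun τ hτ => hγnn τ hτ.1)
  have hFC : F (φ t₀) ≤ C := by
    apply le_of_forall_pos_le_add
    intro δ hδ
    have hε : 0 < δ / (C + 1) := div_pos hδ (by linarith)
    have := key _ hε
    have h2 : (1 + δ / (C + 1)) * C = C + δ * (C / (C + 1)) := by ring
    have h3 : C / (C + 1) ≤ 1 := by
      rw [div_le_one (by linarith)]; linarith
    have h4 : δ * (C / (C + 1)) ≤ δ := by nlinarith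
    calc F (φ t₀) ≤ (1 + δ / (C + 1)) * C := this
      _ = C + δ * (C / (C + 1)) := h2
      _ ≤ C + δ := by linarith
  -- assemble the goal
  have ht₀Icc : t₀ ∈ Icc (0:ℝ) T := ⟨ht₀, ht₀T⟩
  set b : ℝ := α t₀ with hbdef
  have hbφ : b ≤ φ t₀ := hαφ t₀ ht₀
  have hsplit : (∫ r in a..(1:ℝ), (μ r)⁻¹) - (∫ r in b..(1:ℝ), (μ r)⁻¹)
      = ∫ r in a..b, (μ r)⁻¹ := by
    have := intervalIntegral.integral_add_adjacent_intervals
      (hinvii a b ha hαt₀) (hinvii b 1 hαt₀ one_pos)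
    linarith
  have hmono : (∫ r in a..b, (μ r)⁻¹) ≤ F (φ t₀) := by
    have hdiff : F (φ t₀) - (∫ r in a..b, (μ r)⁻¹) = ∫ r in b..(φ t₀), (μ r)⁻¹ :=
      intervalIntegral.integral_interval_sub_left
        (hinvii a (φ t₀) ha (hφpos t₀ ht₀Icc)) (hinvii a b ha hαt₀)
    have hnn : 0 ≤ ∫ r in b..(φ t₀), (μ r)⁻¹ := by
      apply intervalIntegral.integral_nonneg hbφ
      intro r hr
      exact inv_nonneg.2 (hμnn r (le_trans hαt₀.le hr.1))
    linarith
  rw [hsplit]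
  exact le_trans hmono hFC
end

section
/- (Osgood lemma, uniqueness case.) Let γ : [0,∞) → [0,∞) be measurable and integrable on every bounded interval, let μ : [0,∞) → [0,∞) be continuous and non-decreasing with μ(r) > 0 for r > 0, and suppose the Osgood condition lim_{x → 0^+} ∫_x^1 dr/μ(r) = +∞ holds. Let α : [0,∞) → [0,∞) be measurable such that t ↦ γ(t)·μ(α(t)) is integrable on every bounded interval and α(t) ≤ ∫_0^t γ(τ)·μ(α(τ)) dτ for all t ≥ 0. Then α(t) = 0 for every t ≥ 0. -/
open MeasureTheory Set Filter

/-- Osgood lemma, uniqueness case: if the Osgood condition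
`lim_{x → 0⁺} ∫_x^1 dr/μ(r) = +∞` holds and `α` satisfies the Osgood integral
inequality with vanishing initial bound, then `α ≡ 0`. -/
theorem osgood_lemma_uniqueness (γ μ α : ℝ → ℝ)
    (hγnn : ∀ t, 0 ≤ t → 0 ≤ γ t)
    (hγint : ∀ T, 0 < T → IntegrableOn γ (Icc 0 T))
    (hμcont : ContinuousOn μ (Ici 0)) (hμmono : MonotoneOn μ (Ici 0))
    (hμnn : ∀ r, 0 ≤ r → 0 ≤ μ r)
    (hμpos : ∀ r, 0 < r → 0 < μ r)
    (hosgood : Tendsto (fun x => ∫ r in x..(1:ℝ), (μ r)⁻¹) (nhdsWithin 0 (Ioi 0)) atTop)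
    (hα : Measurable α) (hαnn : ∀ t, 0 ≤ t → 0 ≤ α t)
    (hint : ∀ T, 0 < T → IntegrableOn (fun t => γ t * μ (α t)) (Icc 0 T))
    (hineq : ∀ t, 0 ≤ t → α t ≤ ∫ τ in (0:ℝ)..t, γ τ * μ (α τ)) :
    ∀ t, 0 ≤ t → α t = 0 := by
  -- interval integrability of (μ r)⁻¹ on positive intervals
  have hμinv_ii : ∀ a b : ℝ, 0 < a → 0 < b →
      IntervalIntegrable (fun r => (μ r)⁻¹) volume a b := by
    intro a b ha hb
    apply AntitoneOn.intervalIntegrable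
    intro x hx y hy hxy
    have hab : (0:ℝ) < min a b := lt_min ha hb
    have hx0 : 0 < x := hab.trans_le hx.1
    have hy0 : 0 < y := hab.trans_le hy.1
    have hμx : 0 < μ x := hμpos x hx0
    have hμxy : μ x ≤ μ y := hμmono hx0.le hy0.le hxy
    exact inv_anti₀ hμx hμxy
  intro t ht
  rcases ht.eq_or_lt with h0 | ht0
  · have h1 := hineq t ht
    rw [← h0] at h1 ⊢
    simp only [intervalIntegral.integral_same] at h1
    exact le_antisymm h1 (hαnn 0 le_rfl)
  by_contra hne
  have hpos : 0 < α t := (hαnn t ht).lt_of_ne' hne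
  set g : ℝ → ℝ := fun s => γ s * μ (α s) with hg
  have hgnn : ∀ s, 0 ≤ s → 0 ≤ g s := fun s hs =>
    mul_nonneg (hγnn s hs) (hμnn _ (hαnn s hs))
  have hgint : IntegrableOn g (Icc 0 t) := hint t ht0
  have hγI : IntegrableOn γ (Icc 0 t) := hγint t ht0
  have h0mem : (0:ℝ) ∈ Icc (0:ℝ) t := ⟨le_rfl, ht⟩
  have hgii : ∀ u v, u ∈ Icc (0:ℝ) t → v ∈ Icc (0:ℝ) t →
      IntervalIntegrable g volume u v := by
    intro u v hu hv
    rw [intervalIntegrable_iff]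
    exact hgint.mono_set ((Ioc_subset_Icc_self).trans (uIcc_subset_Icc hu hv))
  have hγii : ∀ u v, u ∈ Icc (0:ℝ) t → v ∈ Icc (0:ℝ) t →
      IntervalIntegrable γ volume u v := by
    intro u v hu hv
    rw [intervalIntegrable_iff]
    exact hγI.mono_set ((Ioc_subset_Icc_self).trans (uIcc_subset_Icc hu hv))
  set E : ℝ → ℝ := fun u => ∫ τ in (0:ℝ)..u, g τ with hE
  have hE0 : E 0 = 0 := intervalIntegral.integral_same
  have hEadd : ∀ u v, u ∈ Icc (0:ℝ) t → v ∈ Icc (0:ℝ) t →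
      E u + ∫ τ in u..v, g τ = E v := fun u v hu hv =>
    intervalIntegral.integral_add_adjacent_intervals (hgii 0 u h0mem hu) (hgii u v hu hv)
  have hEmono : ∀ u v, u ∈ Icc (0:ℝ) t → v ∈ Icc (0:ℝ) t → u ≤ v → E u ≤ E v := by
    intro u v hu hv huv
    have h1 := hEadd u v hu hv
    have h2 : 0 ≤ ∫ τ in u..v, g τ :=
      intervalIntegral.integral_nonneg huv (fun s hs => hgnn s (le_trans hu.1 hs.1))
    linarith
  have hEnn : ∀ u ∈ Icc (0:ℝ) t, 0 ≤ E u := fun u hu =>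
    hE0 ▸ hEmono 0 u h0mem hu hu.1
  have hEcont : ContinuousOn E (Icc 0 t) := by
    have h1 := intervalIntegral.continuousOn_primitive (f := g) (a := 0) (b := t)
      (μ := volume) hgint
    exact h1.congr (fun x hx => intervalIntegral.integral_of_le hx.1)
  have hαE : ∀ s ∈ Icc (0:ℝ) t, α s ≤ E s := by
    intro s hs
    simpa [hE, hg] using hineq s hs.1
  set c := E t with hc'
  have hc : 0 < c := lt_of_lt_of_le hpos (hαE t ⟨ht, le_rfl⟩)
  set Γ := ∫ τ in (0:ℝ)..t, γ τ with hΓ'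
  have hΓnn : 0 ≤ Γ := intervalIntegral.integral_nonneg ht (fun s hs => hγnn s hs.1)
  -- key estimate
  have key : ∀ ε : ℝ, 0 < ε → (∫ r in ε..(ε + c), (μ r)⁻¹) ≤ 2 * Γ := by
    intro ε hε
    set F : ℝ → ℝ := fun u => ε + E u with hF
    have hFmem : ∀ u ∈ Icc (0:ℝ) t, ε ≤ F u := fun u hu =>
      le_add_of_nonneg_right (hEnn u hu)
    have hFpos : ∀ u ∈ Icc (0:ℝ) t, 0 < F u := fun u hu => hε.trans_le (hFmem u hu)
    have hFnn : ∀ u ∈ Icc (0:ℝ) t, 0 ≤ F u := fun u hu => (hFpos u hu).le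
    have hqcont : ContinuousOn (fun u => μ (F u)) (Icc 0 t) :=
      hμcont.comp (continuousOn_const.add hEcont) (fun u hu => hFnn u hu)
    have hμεpos : 0 < μ ε := hμpos ε hε
    have hμεle : ∀ u ∈ Icc (0:ℝ) t, μ ε ≤ μ (F u) := fun u hu =>
      hμmono hε.le (hFnn u hu) (hFmem u hu)
    have huc := (isCompact_Icc : IsCompact (Icc (0:ℝ) t)).uniformContinuousOn_of_continuous hqcont
    rw [Metric.uniformContinuousOn_iff] at huc
    obtain ⟨η, hη, hucη⟩ := huc (μ ε) hμεpos
    obtain ⟨n, hn⟩ := exists_nat_gt (t / η)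
    have hn0 : 0 < (n:ℝ) := (div_pos ht0 hη).trans hn
    have hstep_pos : 0 < t / n := div_pos ht0 hn0
    have hstep_lt : t / n < η := by
      rw [div_lt_iff₀ hn0]
      have := (div_lt_iff₀ hη).mp hn
      nlinarith
    set a : ℕ → ℝ := fun k => (k:ℝ) * (t / n) with ha
    have ha0 : a 0 = 0 := by simp [ha]
    have han : a n = t := by
      simp only [ha]
      field_simp
    have amem : ∀ k : ℕ, k ≤ n → a k ∈ Icc (0:ℝ) t := by
      intro k hk
      have hkn : (k:ℝ) ≤ n := Nat.cast_le.mpr hk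
      constructor
      · positivity
      · calc (k:ℝ) * (t/n) ≤ (n:ℝ) * (t/n) := by nlinarith
          _ = t := by field_simp
    have hdiff : ∀ k : ℕ, a (k+1) - a k = t / n := by
      intro k
      simp only [ha]
      push_cast
      ring
    have hamono : ∀ k : ℕ, a k ≤ a (k+1) := by
      intro k
      have := hdiff k
      linarith
    -- per-piece estimate
    have piece : ∀ k, k < n →
        (∫ r in F (a k)..F (a (k+1)), (μ r)⁻¹) ≤ 2 * ∫ s in a k..a (k+1), γ s := by
      intro k hk
      have h₁ : a k ∈ Icc (0:ℝ) t := amem k hk.le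
      have h₂ : a (k+1) ∈ Icc (0:ℝ) t := amem (k+1) hk
      have h12 : a k ≤ a (k+1) := hamono k
      have hq1pos : 0 < μ (F (a k)) := hμpos _ (hFpos _ h₁)
      have hFle : F (a k) ≤ F (a (k+1)) := by
        have := hEmono _ _ h₁ h₂ h12
        simp only [hF]
        linarith
      have hiEq : F (a (k+1)) - F (a k) = ∫ s in (a k)..(a (k+1)), g s := by
        have := hEadd _ _ h₁ h₂
        simp only [hF]
        linarith
      have hii : (∫ r in F (a k)..F (a (k+1)), (μ r)⁻¹)
          ≤ (F (a (k+1)) - F (a k)) * (μ (F (a k)))⁻¹ := by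
        have hmle : ∀ r ∈ Icc (F (a k)) (F (a (k+1))), (μ r)⁻¹ ≤ (μ (F (a k)))⁻¹ := by
          intro r hr
          have hr0 : (0:ℝ) ≤ r := (hFnn _ h₁).trans hr.1
          exact inv_anti₀ hq1pos (hμmono (hFnn _ h₁) hr0 hr.1)
        calc (∫ r in F (a k)..F (a (k+1)), (μ r)⁻¹)
            ≤ ∫ _ in F (a k)..F (a (k+1)), (μ (F (a k)))⁻¹ :=
              intervalIntegral.integral_mono_on hFle
                (hμinv_ii _ _ (hFpos _ h₁) (hFpos _ h₂)) intervalIntegrable_const hmle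
          _ = (F (a (k+1)) - F (a k)) * (μ (F (a k)))⁻¹ := by
              simp [intervalIntegral.integral_const, smul_eq_mul]
      have hiii : (∫ s in (a k)..(a (k+1)), g s)
          ≤ (2 * μ (F (a k))) * ∫ s in (a k)..(a (k+1)), γ s := by
        have hptw : ∀ s ∈ Icc (a k) (a (k+1)), g s ≤ (2 * μ (F (a k))) * γ s := by
          intro s hs
          have hsI : s ∈ Icc (0:ℝ) t := ⟨h₁.1.trans hs.1, hs.2.trans h₂.2⟩
          have hαF : α s ≤ F s := by
            have := hαE s hsI
            simp only [hF]
            linarith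
          have h1 : μ (α s) ≤ μ (F s) :=
            hμmono (hαnn s hsI.1) (hFnn s hsI) hαF
          have hdist : dist s (a k) < η := by
            rw [Real.dist_eq, abs_of_nonneg (by linarith [hs.1])]
            have := hdiff k
            have := hs.2
            linarith
          have hd := hucη s hsI (a k) h₁ hdist
          have h3 : μ (F s) - μ (F (a k)) < μ ε :=
            lt_of_le_of_lt (le_abs_self _) (by rw [← Real.dist_eq]; exact hd)
          have h4 : μ ε ≤ μ (F (a k)) := hμεle _ h₁
          have h2 : μ (F s) ≤ 2 * μ (F (a k)) := by linarith
          have hγs : 0 ≤ γ s := hγnn s hsI.1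
          calc g s = γ s * μ (α s) := by simp [hg]
            _ ≤ γ s * (2 * μ (F (a k))) := by nlinarith
            _ = (2 * μ (F (a k))) * γ s := by ring
        calc (∫ s in (a k)..(a (k+1)), g s)
            ≤ ∫ s in (a k)..(a (k+1)), (2 * μ (F (a k))) * γ s :=
              intervalIntegral.integral_mono_on h12 (hgii _ _ h₁ h₂)
                ((hγii _ _ h₁ h₂).const_mul _) hptw
          _ = (2 * μ (F (a k))) * ∫ s in (a k)..(a (k+1)), γ s := by
              rw [intervalIntegral.integral_const_mul]
      calc (∫ r in F (a k)..F (a (k+1)), (μ r)⁻¹)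
          ≤ (F (a (k+1)) - F (a k)) * (μ (F (a k)))⁻¹ := hii
        _ = (∫ s in (a k)..(a (k+1)), g s) * (μ (F (a k)))⁻¹ := by rw [hiEq]
        _ ≤ ((2 * μ (F (a k))) * ∫ s in (a k)..(a (k+1)), γ s) * (μ (F (a k)))⁻¹ :=
            mul_le_mul_of_nonneg_right hiii (inv_nonneg.2 hq1pos.le)
        _ = 2 * ∫ s in (a k)..(a (k+1)), γ s := by
            field_simp
    -- sum up
    have sum1 : ∑ k ∈ Finset.range n, ∫ r in F (a k)..F (a (k+1)), (μ r)⁻¹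
        = ∫ r in F (a 0)..F (a n), (μ r)⁻¹ :=
      intervalIntegral.sum_integral_adjacent_intervals (fun k hk =>
        hμinv_ii _ _ (hFpos _ (amem k hk.le)) (hFpos _ (amem (k+1) hk)))
    have sum2 : ∑ k ∈ Finset.range n, ∫ s in (a k)..(a (k+1)), γ s
        = ∫ s in (a 0)..(a n), γ s :=
      intervalIntegral.sum_integral_adjacent_intervals (fun k hk =>
        hγii _ _ (amem k hk.le) (amem (k+1) hk))
    have hFa0 : F (a 0) = ε := by simp [hF, ha0, hE0]
    have hFan : F (a n) = ε + c := by rw [han]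
    have hΓeq : ∫ s in (a 0)..(a n), γ s = Γ := by rw [ha0, han]
    calc (∫ r in ε..(ε + c), (μ r)⁻¹)
        = ∑ k ∈ Finset.range n, ∫ r in F (a k)..F (a (k+1)), (μ r)⁻¹ := by
          rw [sum1, hFa0, hFan]
      _ ≤ ∑ k ∈ Finset.range n, 2 * ∫ s in (a k)..(a (k+1)), γ s :=
          Finset.sum_le_sum (fun k hk => piece k (Finset.mem_range.mp hk))
      _ = 2 * ∑ k ∈ Finset.range n, ∫ s in (a k)..(a (k+1)), γ s := by
          rw [Finset.mul_sum]
      _ = 2 * Γ := by rw [sum2, hΓeq]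
  -- choose ε small and derive a contradiction
  have hev : ∀ᶠ x in nhdsWithin (0:ℝ) (Ioi 0),
      (2 * Γ + ∫ r in c..(1:ℝ), (μ r)⁻¹) < ∫ r in x..(1:ℝ), (μ r)⁻¹ :=
    hosgood.eventually (eventually_gt_atTop _)
  obtain ⟨ε, hεbig, hε0⟩ := (hev.and eventually_mem_nhdsWithin).exists
  have hεpos : 0 < ε := hε0
  have hkey := key ε hεpos
  have hadd : (∫ r in ε..c, (μ r)⁻¹) + (∫ r in c..(1:ℝ), (μ r)⁻¹)
      = ∫ r in ε..(1:ℝ), (μ r)⁻¹ :=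
    intervalIntegral.integral_add_adjacent_intervals (hμinv_ii ε c hεpos hc)
      (hμinv_ii c 1 hc one_pos)
  have hadd2 : (∫ r in ε..c, (μ r)⁻¹) + (∫ r in c..(ε + c), (μ r)⁻¹)
      = ∫ r in ε..(ε + c), (μ r)⁻¹ :=
    intervalIntegral.integral_add_adjacent_intervals (hμinv_ii ε c hεpos hc)
      (hμinv_ii c (ε + c) hc (by linarith))
  have hnn : 0 ≤ ∫ r in c..(ε + c), (μ r)⁻¹ :=
    intervalIntegral.integral_nonneg (by linarith)
      (fun r hr => inv_nonneg.2 (hμnn r (hc.le.trans hr.1)))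
  linarith
end

section
/- Let μ(x) := x·log(e + 1/x) for x > 0 and μ(0) := 0. Fix T > 0 and a nonnegative function γ integrable on [0,T]. Then for every ε > 0 there exists δ > 0 such that: for every a with 0 < a ≤ δ and every measurable α : [0,T] → [0,∞) with t ↦ γ(t)·μ(α(t)) integrable on [0,T] and α(t) ≤ a + ∫_0^t γ(τ)·μ(α(τ)) dτ for all t ∈ [0,T], one has α(t) ≤ ε for all t ∈ [0,T]. In other words, the bound furnished by the Osgood lemma with this modulus tends to 0 uniformly on [0,T] as the initial bound a tends to 0. -/
open MeasureTheory Set Filter Topology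

/-- Monotonicity of the comparison modulus `x ↦ x (2 - log x)` on `(0,1]`. -/
lemma osg_mtilde_mono {u v : ℝ} (hu : 0 < u) (huv : u ≤ v) (hv : v ≤ 1) :
    u * (2 - Real.log u) ≤ v * (2 - Real.log v) := by
  have hmono : StrictMonoOn (fun x : ℝ => x * (2 - Real.log x)) (Ioc 0 1) := by
    apply strictMonoOn_of_deriv_pos (convex_Ioc 0 1)
    · exact continuousOn_id.mul (continuousOn_const.sub
        (Real.continuousOn_log.mono (fun x hx => ne_of_gt hx.1)))
    · intro x hx
      rw [interior_Ioc] at hx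
      have hx0 : x ≠ 0 := ne_of_gt hx.1
      have h1 : HasDerivAt (fun x : ℝ => x * (2 - Real.log x))
          ((1:ℝ) * (2 - Real.log x) + x * (0 - x⁻¹)) x :=
        (hasDerivAt_id x).mul ((hasDerivAt_const x (2:ℝ)).sub (Real.hasDerivAt_log hx0))
      have h2 : deriv (fun x : ℝ => x * (2 - Real.log x)) x = 1 - Real.log x := by
        rw [h1.deriv]; field_simp; ring
      rw [h2]
      have := Real.log_neg hx.1 hx.2
      linarith
  rcases eq_or_lt_of_le huv with rfl | hlt
  · exact le_rfl
  · exact (hmono ⟨hu, huv.trans hv⟩ ⟨hu.trans_le huv, hv⟩ hlt).le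

/-- The Osgood modulus `x log(e + 1/x)` is dominated by `x (2 - log x)` on `[0,1]`. -/
lemma osg_mu_le_mtilde {x : ℝ} (hx : 0 ≤ x) (hx1 : x ≤ 1) :
    x * Real.log (Real.exp 1 + x⁻¹) ≤ x * (2 - Real.log x) := by
  rcases eq_or_lt_of_le hx with rfl | hx0
  · simp
  · apply mul_le_mul_of_nonneg_left ?_ hx
    have h2 : 2 - Real.log x = Real.log (Real.exp 2 / x) := by
      rw [Real.log_div (Real.exp_ne_zero 2) hx0.ne', Real.log_exp]
    rw [h2]
    rw [Real.log_le_log_iff (by positivity) (by positivity)]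
    have he : (2:ℝ) ≤ Real.exp 1 := by
      have := Real.exp_one_gt_d9; linarith
    have hxe : Real.exp 1 * x ≤ Real.exp 1 := by nlinarith
    have hexp2 : Real.exp 2 = Real.exp 1 * Real.exp 1 := by
      rw [← Real.exp_add]; norm_num
    rw [show Real.exp 1 + x⁻¹ = (Real.exp 1 * x + 1) / x by field_simp, hexp2,
      div_le_div_iff₀ hx0 hx0]
    have key : Real.exp 1 * x + 1 ≤ Real.exp 1 * Real.exp 1 := by nlinarith
    nlinarith [mul_le_mul_of_nonneg_right key hx]

/-- One-step Osgood estimate: if `y - x` is controlled by `I · y(2 - log y)` and the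
step is small (`y ≤ 2x`), then the "Osgood potential" `-log(2 - log ·)` increases
by at most `2I`. -/
lemma osg_step {x y I : ℝ} (hx : 0 < x) (hxy : x ≤ y) (hy1 : y ≤ 1) (hy2 : y ≤ 2 * x)
    (hI : 0 ≤ I) (hkey : y - x ≤ I * (y * (2 - Real.log y))) :
    Real.log (2 - Real.log x) - Real.log (2 - Real.log y) ≤ 2 * I := by
  have hy0 : 0 < y := hx.trans_le hxy
  have hlx : Real.log x ≤ 0 := Real.log_nonpos hx.le (hxy.trans hy1)
  have hly : Real.log y ≤ 0 := Real.log_nonpos hy0.le hy1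
  have hLy : (0:ℝ) < 2 - Real.log y := by linarith
  have hLx : (0:ℝ) < 2 - Real.log x := by linarith
  have hlxy : Real.log x ≤ Real.log y := Real.log_le_log hx hxy
  have h1 : Real.log (2 - Real.log x) - Real.log (2 - Real.log y)
      = Real.log ((2 - Real.log x) / (2 - Real.log y)) :=
    (Real.log_div hLx.ne' hLy.ne').symm
  have h2 : Real.log ((2 - Real.log x) / (2 - Real.log y))
      ≤ (2 - Real.log x) / (2 - Real.log y) - 1 :=
    Real.log_le_sub_one_of_pos (by positivity)
  have h3 : (2 - Real.log x) / (2 - Real.log y) - 1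
      = (Real.log y - Real.log x) / (2 - Real.log y) := by
    field_simp; ring
  have h4 : Real.log y - Real.log x ≤ (y - x) / x := by
    have hlog := Real.log_le_sub_one_of_pos (show 0 < y / x by positivity)
    rw [Real.log_div hy0.ne' hx.ne'] at hlog
    have : y / x - 1 = (y - x) / x := by field_simp
    linarith [this ▸ hlog]
  have h5 : (Real.log y - Real.log x) / (2 - Real.log y) ≤ ((y - x) / x) / (2 - Real.log y) := by
    gcongr
  have h6 : ((y - x) / x) / (2 - Real.log y) ≤ 2 * I := by
    rw [div_div, div_le_iff₀ (by positivity)]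
    nlinarith [mul_nonneg (mul_nonneg hI hLy.le) (show (0:ℝ) ≤ 2 * x - y by linarith)]
  calc Real.log (2 - Real.log x) - Real.log (2 - Real.log y)
      = Real.log ((2 - Real.log x) / (2 - Real.log y)) := h1
    _ ≤ (2 - Real.log x) / (2 - Real.log y) - 1 := h2
    _ = (Real.log y - Real.log x) / (2 - Real.log y) := h3
    _ ≤ ((y - x) / x) / (2 - Real.log y) := h5
    _ ≤ 2 * I := h6

set_option maxHeartbeats 2000000 in
/-- Quantitative stability consequence of the Osgood lemma for the modulus
`μ(x) = x log(e + 1/x)` (with `μ(0) = 0`): the bound furnished by the Osgood lemma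
tends to `0` uniformly on `[0,T]` as the initial bound `a` tends to `0`. -/
theorem osgood_uniform_smallness (T : ℝ) (hT : 0 < T) (γ : ℝ → ℝ)
    (hγnn : ∀ t ∈ Icc 0 T, 0 ≤ γ t)
    (hγint : IntegrableOn γ (Icc 0 T)) :
    ∀ ε > 0, ∃ δ > 0, ∀ a : ℝ, 0 < a → a ≤ δ →
      ∀ α : ℝ → ℝ, Measurable α → (∀ t ∈ Icc 0 T, 0 ≤ α t) →
        IntegrableOn (fun t => γ t * (α t * Real.log (Real.exp 1 + (α t)⁻¹))) (Icc 0 T) →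
        (∀ t ∈ Icc 0 T,
          α t ≤ a + ∫ τ in (0:ℝ)..t, γ τ * (α τ * Real.log (Real.exp 1 + (α τ)⁻¹))) →
        ∀ t ∈ Icc 0 T, α t ≤ ε := by
  intro ε hε
  set G : ℝ := ∫ t in Icc 0 T, γ t with hGdef
  have hG0 : 0 ≤ G := setIntegral_nonneg measurableSet_Icc hγnn
  set ε' : ℝ := min ε (1/2) with hε'def
  have hε'pos : 0 < ε' := lt_min hε (by norm_num)
  have hε'le : ε' ≤ 1/2 := min_le_right _ _
  have hlogε' : Real.log ε' < 0 := Real.log_neg hε'pos (by linarith)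
  refine ⟨Real.exp (2 - (2 - Real.log ε') * Real.exp (2*G)), Real.exp_pos _, ?_⟩
  set δ : ℝ := Real.exp (2 - (2 - Real.log ε') * Real.exp (2*G)) with hδdef
  have hδpos : 0 < δ := Real.exp_pos _
  have hlogδ : Real.log δ = 2 - (2 - Real.log ε') * Real.exp (2*G) := Real.log_exp _
  have hexpG1 : (1:ℝ) ≤ Real.exp (2*G) := Real.one_le_exp (by linarith)
  have hδε' : δ ≤ ε' := by
    have hexpo : 2 - (2 - Real.log ε') * Real.exp (2*G) ≤ Real.log ε' := by nlinarith
    calc δ ≤ Real.exp (Real.log ε') := Real.exp_le_exp.mpr hexpo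
      _ = ε' := Real.exp_log hε'pos
  have hδhalf : δ ≤ 1/2 := hδε'.trans hε'le
  intro a ha haδ α hαmeas hαnn hμint hbound
  set F : ℝ → ℝ := fun s => γ s * (α s * Real.log (Real.exp 1 + (α s)⁻¹)) with hFdef
  set φ : ℝ → ℝ := fun t => a + ∫ τ in (0:ℝ)..t, F τ with hφdef
  have h0mem : (0:ℝ) ∈ Icc 0 T := left_mem_Icc.mpr hT.le
  have hαφ : ∀ t ∈ Icc 0 T, α t ≤ φ t := fun t ht => hbound t ht
  have hφ0 : φ 0 = a := by simp [hφdef]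
  have hFnn : ∀ s ∈ Icc 0 T, 0 ≤ F s := by
    intro s hs
    have h1 : 0 ≤ α s := hαnn s hs
    have h2 : (0:ℝ) ≤ Real.log (Real.exp 1 + (α s)⁻¹) := by
      apply Real.log_nonneg
      have hi : (0:ℝ) ≤ (α s)⁻¹ := inv_nonneg.mpr h1
      have := Real.one_le_exp (le_refl 0).ge
      linarith [Real.one_le_exp (show (0:ℝ) ≤ 1 by norm_num)]
    exact mul_nonneg (hγnn s hs) (mul_nonneg h1 h2)
  have hFii : ∀ p q, p ∈ Icc 0 T → q ∈ Icc 0 T → IntervalIntegrable F volume p q :=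
    fun p q hp hq => (hμint.mono_set (uIcc_subset_Icc hp hq)).intervalIntegrable
  have hγii : ∀ p q, p ∈ Icc 0 T → q ∈ Icc 0 T → IntervalIntegrable γ volume p q :=
    fun p q hp hq => (hγint.mono_set (uIcc_subset_Icc hp hq)).intervalIntegrable
  have hφmono : ∀ p q, p ∈ Icc 0 T → q ∈ Icc 0 T → p ≤ q → φ p ≤ φ q := by
    intro p q hp hq hpq
    have hadd := intervalIntegral.integral_add_adjacent_intervals
      (hFii 0 p h0mem hp) (hFii p q hp hq)
    have hint : 0 ≤ ∫ s in p..q, F s :=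
      intervalIntegral.integral_nonneg hpq
        (fun u hu => hFnn u ⟨le_trans hp.1 hu.1, le_trans hu.2 hq.2⟩)
    simp only [hφdef]
    linarith [hadd]
  have hφa : ∀ t ∈ Icc 0 T, a ≤ φ t := by
    intro t ht
    have := hφmono 0 t h0mem ht ht.1
    linarith [hφ0]
  have hφcont : ContinuousOn φ (Icc 0 T) := by
    have h1 : IntegrableOn F (uIcc 0 T) := by rwa [uIcc_of_le hT.le]
    have h2 : ContinuousOn (fun t => a + ∫ τ in (0:ℝ)..t, F τ) (uIcc 0 T) :=
      continuousOn_const.add (intervalIntegral.continuousOn_primitive_interval h1)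
    rw [uIcc_of_le hT.le] at h2
    exact h2
  -- Key Osgood-type inequality along any interval where φ ≤ 1
  have key : ∀ t₀ ∈ Icc 0 T, (∀ s ∈ Icc 0 t₀, φ s ≤ 1) →
      Real.log (2 - Real.log a) - Real.log (2 - Real.log (φ t₀))
        ≤ 2 * ∫ s in (0:ℝ)..t₀, γ s := by
    intro t₀ ht₀ hle1
    have ht₀0 : 0 ≤ t₀ := ht₀.1
    have hIccsub : Icc 0 t₀ ⊆ Icc 0 T := Icc_subset_Icc le_rfl ht₀.2
    have hucont : UniformContinuousOn φ (Icc 0 t₀) :=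
      isCompact_Icc.uniformContinuousOn_of_continuous (hφcont.mono hIccsub)
    rw [Metric.uniformContinuousOn_iff] at hucont
    obtain ⟨d, hd, hmod⟩ := hucont a ha
    obtain ⟨n, hn⟩ := exists_nat_gt (t₀ / d)
    have hnpos : 0 < (n:ℝ) := lt_of_le_of_lt (by positivity) hn
    have hmesh : t₀ / n < d := by
      rw [div_lt_iff₀ hnpos]
      calc t₀ < d * n := by
            have := (div_lt_iff₀ hd).mp hn
            linarith [mul_comm (n:ℝ) d ▸ this]
        _ = d * n := rfl
    set P : ℕ → ℝ := fun i => (i : ℝ) * (t₀ / n) with hPdef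
    have hq0 : 0 ≤ t₀ / n := div_nonneg ht₀0 hnpos.le
    have hPmem : ∀ i : ℕ, i ≤ n → P i ∈ Icc 0 t₀ := by
      intro i hi
      constructor
      · exact mul_nonneg (Nat.cast_nonneg i) hq0
      · have hcast : (i:ℝ) ≤ n := Nat.cast_le.mpr hi
        calc (i:ℝ) * (t₀/n) ≤ n * (t₀/n) := mul_le_mul_of_nonneg_right hcast hq0
          _ = t₀ := by field_simp
    have hPsucc : ∀ i : ℕ, P (i+1) - P i = t₀ / n := by
      intro i; simp only [hPdef]; push_cast; ring
    have main : ∀ i : ℕ, i ≤ n →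
        Real.log (2 - Real.log a) - Real.log (2 - Real.log (φ (P i)))
          ≤ 2 * ∫ s in (0:ℝ)..(P i), γ s := by
      intro i
      induction i with
      | zero =>
        intro _
        have hP0 : P 0 = 0 := by simp [hPdef]
        rw [hP0, hφ0]
        simp
      | succ i ih =>
        intro hi1
        have hi : i ≤ n := Nat.le_of_succ_le hi1
        have hmi : P i ∈ Icc 0 t₀ := hPmem i hi
        have hmi1 : P (i+1) ∈ Icc 0 t₀ := hPmem (i+1) hi1
        have hMi : P i ∈ Icc 0 T := hIccsub hmi
        have hMi1 : P (i+1) ∈ Icc 0 T := hIccsub hmi1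
        have hPP : P i ≤ P (i+1) := by linarith [hPsucc i, hq0]
        have hax : a ≤ φ (P i) := hφa _ hMi
        have hx : 0 < φ (P i) := lt_of_lt_of_le ha hax
        have hxy : φ (P i) ≤ φ (P (i+1)) := hφmono _ _ hMi hMi1 hPP
        have hy1 : φ (P (i+1)) ≤ 1 := hle1 _ hmi1
        have hdistP : dist (P (i+1)) (P i) < d := by
          rw [Real.dist_eq, hPsucc i, abs_of_nonneg hq0]
          exact hmesh
        have hyx : φ (P (i+1)) - φ (P i) < a := by
          have hdist := hmod (P (i+1)) hmi1 (P i) hmi hdistP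
          rw [Real.dist_eq] at hdist
          calc φ (P (i+1)) - φ (P i) ≤ |φ (P (i+1)) - φ (P i)| := le_abs_self _
            _ < a := hdist
        have hy2 : φ (P (i+1)) ≤ 2 * φ (P i) := by linarith
        have hInn : 0 ≤ ∫ s in (P i)..(P (i+1)), γ s :=
          intervalIntegral.integral_nonneg hPP
            (fun u hu => hγnn u ⟨le_trans hMi.1 hu.1, le_trans hu.2 hMi1.2⟩)
        have hykey : φ (P (i+1)) - φ (P i)
            ≤ (∫ s in (P i)..(P (i+1)), γ s)
              * (φ (P (i+1)) * (2 - Real.log (φ (P (i+1))))) := by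
          have hyadd := intervalIntegral.integral_add_adjacent_intervals
            (hFii 0 (P i) h0mem hMi) (hFii (P i) (P (i+1)) hMi hMi1)
          have hyx' : φ (P (i+1)) - φ (P i) = ∫ s in (P i)..(P (i+1)), F s := by
            simp only [hφdef]; linarith [hyadd]
          rw [hyx']
          have hptwise : ∀ u ∈ Icc (P i) (P (i+1)),
              F u ≤ (φ (P (i+1)) * (2 - Real.log (φ (P (i+1))))) * γ u := by
            intro u hu
            have huT : u ∈ Icc 0 T := ⟨le_trans hMi.1 hu.1, le_trans hu.2 hMi1.2⟩
            have hut₀ : u ∈ Icc 0 t₀ := ⟨le_trans hmi.1 hu.1, le_trans hu.2 hmi1.2⟩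
            have hαu : 0 ≤ α u := hαnn u huT
            have hφu1 : φ u ≤ 1 := hle1 u hut₀
            have hαφu : α u ≤ φ u := hαφ u huT
            have hφuy : φ u ≤ φ (P (i+1)) := hφmono u (P (i+1)) huT hMi1 hu.2
            have hμα : α u * Real.log (Real.exp 1 + (α u)⁻¹)
                ≤ φ (P (i+1)) * (2 - Real.log (φ (P (i+1)))) := by
              have h1 : α u * Real.log (Real.exp 1 + (α u)⁻¹)
                  ≤ α u * (2 - Real.log (α u)) :=
                osg_mu_le_mtilde hαu (le_trans hαφu hφu1)
              rcases eq_or_lt_of_le hαu with heq | hpos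
              · rw [← heq]
                have hly : Real.log (φ (P (i+1))) ≤ 0 :=
                  Real.log_nonpos (hx.trans_le hxy).le hy1
                simp only [zero_mul]
                nlinarith [hx.trans_le hxy]
              · have h2 : α u * (2 - Real.log (α u))
                    ≤ φ (P (i+1)) * (2 - Real.log (φ (P (i+1)))) :=
                  osg_mtilde_mono hpos (le_trans hαφu hφuy) hy1
                exact h1.trans h2
            calc F u = γ u * (α u * Real.log (Real.exp 1 + (α u)⁻¹)) := rfl
              _ ≤ γ u * (φ (P (i+1)) * (2 - Real.log (φ (P (i+1))))) :=
                  mul_le_mul_of_nonneg_left hμα (hγnn u huT)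
              _ = (φ (P (i+1)) * (2 - Real.log (φ (P (i+1))))) * γ u := mul_comm _ _
          have hFi := hFii (P i) (P (i+1)) hMi hMi1
          have hγi := (hγii (P i) (P (i+1)) hMi hMi1).const_mul
            (φ (P (i+1)) * (2 - Real.log (φ (P (i+1)))))
          have hmono := intervalIntegral.integral_mono_on hPP hFi hγi hptwise
          rw [intervalIntegral.integral_const_mul] at hmono
          linarith [hmono]
        have hstep := osg_step hx hxy hy1 hy2 hInn hykey
        have hadd := intervalIntegral.integral_add_adjacent_intervals
          (hγii 0 (P i) h0mem hMi) (hγii (P i) (P (i+1)) hMi hMi1)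
        have ihi := ih hi
        rw [← hadd]
        linarith [ihi, hstep]
    have hPn : P n = t₀ := by
      simp only [hPdef]; field_simp
    have hmn := main n le_rfl
    rwa [hPn] at hmn
  -- integral of γ up to t₀ is at most G
  have hG_ge : ∀ t₀ ∈ Icc 0 T, (∫ s in (0:ℝ)..t₀, γ s) ≤ G := by
    intro t₀ ht₀
    rw [intervalIntegral.integral_of_le ht₀.1]
    apply setIntegral_mono_set hγint
    · exact (ae_restrict_iff' measurableSet_Icc).mpr (ae_of_all _ hγnn)
    · exact HasSubset.Subset.eventuallyLE
        (Ioc_subset_Icc_self.trans (Icc_subset_Icc le_rfl ht₀.2))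
  -- the quantitative bound
  have hbφ : ∀ t₀ ∈ Icc 0 T, (∀ s ∈ Icc 0 t₀, φ s ≤ 1) → φ t₀ ≤ ε' := by
    intro t₀ ht₀ hle1
    have hk := key t₀ ht₀ hle1
    have hφpos : 0 < φ t₀ := lt_of_lt_of_le ha (hφa t₀ ht₀)
    have hφ1 : φ t₀ ≤ 1 := hle1 t₀ ⟨ht₀.1, le_rfl⟩
    have hlφ : Real.log (φ t₀) ≤ 0 := Real.log_nonpos hφpos.le hφ1
    have hLφ : (0:ℝ) < 2 - Real.log (φ t₀) := by linarith
    have hla : Real.log a < 0 := Real.log_neg ha (by linarith)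
    have hLa : (0:ℝ) < 2 - Real.log a := by linarith
    have hIγ := hG_ge t₀ ht₀
    have h1 : Real.log (2 - Real.log a) - 2*G ≤ Real.log (2 - Real.log (φ t₀)) := by
      linarith
    have h2 : (2 - Real.log a) * Real.exp (-(2*G)) ≤ 2 - Real.log (φ t₀) := by
      have he := Real.exp_le_exp.mpr h1
      rw [Real.exp_sub, Real.exp_log hLa, Real.exp_log hLφ] at he
      rw [Real.exp_neg, ← div_eq_mul_inv]
      exact he
    have h3 : Real.log a ≤ Real.log δ := Real.log_le_log ha haδ
    have h4 : (2 - Real.log δ) * Real.exp (-(2*G)) ≤ (2 - Real.log a) * Real.exp (-(2*G)) :=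
      mul_le_mul_of_nonneg_right (by linarith) (Real.exp_pos _).le
    have h5 : (2 - Real.log δ) * Real.exp (-(2*G)) = 2 - Real.log ε' := by
      rw [hlogδ, Real.exp_neg]
      have hne : Real.exp (2*G) ≠ 0 := (Real.exp_pos _).ne'
      field_simp; ring
    rw [h5] at h4
    have h6 : Real.log (φ t₀) ≤ Real.log ε' := by linarith
    calc φ t₀ = Real.exp (Real.log (φ t₀)) := (Real.exp_log hφpos).symm
      _ ≤ Real.exp (Real.log ε') := Real.exp_le_exp.mpr h6
      _ = ε' := Real.exp_log hε'pos
  -- bootstrap: the set where φ ≤ 1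
  set S : Set ℝ := {t | t ∈ Icc 0 T ∧ φ t ≤ 1} with hSdef
  have hS0 : (0:ℝ) ∈ S := ⟨h0mem, by rw [hφ0]; linarith⟩
  have hSbdd : BddAbove S := ⟨T, fun t ht => ht.1.2⟩
  have hSne : S.Nonempty := ⟨0, hS0⟩
  set s₀ : ℝ := sSup S with hs₀def
  have hs₀0 : 0 ≤ s₀ := le_csSup hSbdd hS0
  have hs₀T : s₀ ≤ T := csSup_le hSne (fun t ht => ht.1.2)
  have hs₀mem : s₀ ∈ Icc 0 T := ⟨hs₀0, hs₀T⟩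
  have hlt1 : ∀ s, 0 ≤ s → s < s₀ → φ s ≤ 1 := by
    intro s hs hss
    obtain ⟨t, htS, hst⟩ := exists_lt_of_lt_csSup hSne hss
    exact le_trans (hφmono s t ⟨hs, le_trans hst.le htS.1.2⟩ htS.1 hst.le) htS.2
  have hstrict : ∀ s ∈ Ico 0 s₀, φ s ≤ ε' := by
    intro s hs
    apply hbφ s ⟨hs.1, le_trans hs.2.le hs₀T⟩
    intro u hu
    exact hlt1 u hu.1 (lt_of_le_of_lt hu.2 hs.2)
  have hφs₀ : φ s₀ ≤ ε' := by
    rcases eq_or_lt_of_le hs₀0 with heq | hpos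
    · rw [← heq, hφ0]; linarith
    · have hcw : ContinuousWithinAt φ (Ico 0 s₀) s₀ :=
        (hφcont s₀ hs₀mem).mono (fun u hu => ⟨hu.1, le_trans hu.2.le hs₀T⟩)
      haveI : (𝓝[Ico 0 s₀] s₀).NeBot := by
        rw [nhdsWithin_Ico_eq_nhdsLT hpos]
        infer_instance
      exact le_of_tendsto hcw (eventually_nhdsWithin_of_forall hstrict)
  have hs₀eq : s₀ = T := by
    by_contra hne'
    have hlt : s₀ < T := lt_of_le_of_ne hs₀T hne'
    have hcw : ContinuousWithinAt φ (Ioc s₀ T) s₀ :=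
      (hφcont s₀ hs₀mem).mono (fun u hu => ⟨le_trans hs₀0 hu.1.le, hu.2⟩)
    haveI : (𝓝[Ioc s₀ T] s₀).NeBot := by
      rw [nhdsWithin_Ioc_eq_nhdsGT hlt]
      infer_instance
    have hev : ∀ᶠ u in 𝓝[Ioc s₀ T] s₀, φ u < 1 :=
      hcw.eventually_lt_const (by linarith : φ s₀ < 1)
    obtain ⟨u, hu1, huIoc⟩ := (hev.and (eventually_mem_nhdsWithin)).exists
    have hule : u ≤ s₀ := le_csSup hSbdd ⟨⟨le_trans hs₀0 huIoc.1.le, huIoc.2⟩, hu1.le⟩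
    exact absurd hule (not_le.mpr huIoc.1)
  intro t ht
  have hφt1 : ∀ s ∈ Icc 0 T, φ s ≤ 1 := by
    intro s hs
    rcases lt_or_eq_of_le hs.2 with hlt | heq
    · exact hlt1 s hs.1 (hs₀eq ▸ hlt)
    · rw [heq, ← hs₀eq]; linarith
  calc α t ≤ φ t := hαφ t ht
    _ ≤ ε' := hbφ t ht (fun s hs => hφt1 s ⟨hs.1, le_trans hs.2 ht.2⟩)
    _ ≤ ε := min_le_left _ _
end

section
/- For all real numbers a ≥ 0 and b ≥ 0, one has log(e + a·b) ≤ log(e + a) · log(e + b). -/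
/-- For all `a, b ≥ 0`, `log(e + a·b) ≤ log(e + a) · log(e + b)`. -/
theorem log_add_mul_le_mul_log_add (a b : ℝ) (ha : 0 ≤ a) (hb : 0 ≤ b) :
    Real.log (Real.exp 1 + a * b) ≤ Real.log (Real.exp 1 + a) * Real.log (Real.exp 1 + b) := by
  set E := Real.exp 1 with hEdef
  have hE : 0 < E := Real.exp_pos 1
  have hEb : 0 < E + b := by linarith
  have hEa : 0 < E + a := by linarith
  set y := Real.log (E + b) with hydef
  have hy1 : 1 ≤ y := by
    have : Real.log E ≤ Real.log (E + b) := Real.log_le_log hE (by linarith)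
    simpa [hEdef, Real.log_exp] using this
  have hy0 : 0 ≤ y := by linarith
  -- key auxiliary inequality : E * b ≤ (E + b) * y
  have key : E * b ≤ (E + b) * y := by
    have h1 : Real.log (Real.exp (E - 1) / (E + b)) ≤ Real.exp (E - 1) / (E + b) - 1 :=
      Real.log_le_sub_one_of_pos (by positivity)
    rw [Real.log_div (Real.exp_ne_zero _) (ne_of_gt hEb), Real.log_exp] at h1
    -- (E - 1) - y ≤ exp (E-1)/(E+b) - 1
    have h2 : Real.exp (E - 1) ≤ E * E := by
      have hElt : E < 3 := by
        have := Real.exp_one_lt_d9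
        rw [hEdef]; linarith
      calc Real.exp (E - 1) ≤ Real.exp 2 := Real.exp_le_exp.2 (by linarith)
        _ = E * E := by rw [hEdef, ← Real.exp_add]; norm_num
    have h3 : E - Real.exp (E - 1) / (E + b) ≤ y := by linarith
    have h4 : (E - Real.exp (E - 1) / (E + b)) * (E + b) ≤ y * (E + b) :=
      mul_le_mul_of_nonneg_right h3 (le_of_lt hEb)
    have h5 : (E - Real.exp (E - 1) / (E + b)) * (E + b)
        = E * (E + b) - Real.exp (E - 1) := by
      field_simp
    nlinarith [h4, h5, h2]
  -- Bernoulli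
  have hber : 1 + y * (a / E) ≤ (1 + a / E) ^ y :=
    one_add_mul_self_le_rpow_one_add (by have := div_nonneg ha hE.le; linarith) hy1
  have hEy : (E : ℝ) ^ y = E + b := by
    rw [hEdef, Real.exp_one_rpow, hydef, Real.exp_log hEb]
  have hEay : (E + a) ^ y = E ^ y * (1 + a / E) ^ y := by
    rw [← Real.mul_rpow (le_of_lt hE) (by positivity)]
    congr 1
    field_simp
  have hmain : E + a * b ≤ (E + a) ^ y := by
    have h6 : (E + b) * (1 + y * (a / E)) ≤ (E + b) * (1 + a / E) ^ y :=
      mul_le_mul_of_nonneg_left hber (le_of_lt hEb)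
    have h7 : (E + b) * (1 + y * (a / E)) = (E + b) + a * ((E + b) * y) / E := by
      field_simp
    have h8 : a * (E * b) ≤ a * ((E + b) * y) := mul_le_mul_of_nonneg_left key ha
    have h8' : a * b ≤ a * ((E + b) * y) / E := by
      rw [le_div_iff₀ hE]; nlinarith [h8]
    have h9 : E + a * b ≤ (E + b) + a * ((E + b) * y) / E := by linarith
    calc E + a * b ≤ (E + b) + a * ((E + b) * y) / E := h9
      _ = (E + b) * (1 + y * (a / E)) := h7.symm
      _ ≤ (E + b) * (1 + a / E) ^ y := h6
      _ = (E + a) ^ y := by rw [hEay, hEy]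
  have hfin : Real.log (E + a * b) ≤ Real.log ((E + a) ^ y) :=
    Real.log_le_log (by positivity) hmain
  rw [Real.log_rpow hEa] at hfin
  linarith [hfin, mul_comm y (Real.log (E + a))]
end

section
/- Let d ≥ 1, β ∈ (0,1], and T > 0. Let u : [0,T] × ℝ^d → ℝ^d be continuous, continuously differentiable in the space variable, with s ↦ ‖D_x u(s,·)‖_{L^∞} and s ↦ [D_x u(s,·)]_{C^β} integrable on [0,T]. Let X : [0,T] × ℝ^d → ℝ^d satisfy X(0,ξ) = ξ and ∂_t X(t,ξ) = u(t, X(t,ξ)), assume ξ ↦ X(t,ξ) is differentiable for each t with spatial derivative ∇_ξ X satisfying the variational equation ∂_t ∇_ξ X(t,ξ) = D_x u(t, X(t,ξ)) ∘ ∇_ξ X(t,ξ), and assume t ↦ ∇_ξ X(t,ξ) is continuous. Then there exists a constant C depending only on β such that for every t ∈ [0,T], the β-Hölder seminorm of ξ ↦ ∇_ξ X(t,ξ) satisfies [∇_ξ X(t,·)]_{C^β} ≤ exp( C ∫_0^t ( ‖D_x u(s,·)‖_{L^∞} + [D_x u(s,·)]_{C^β} ) ds ). -/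
open MeasureTheory Set intervalIntegral Filter Topology

section Gronwall

variable {g : ℝ → ℝ}

private lemma G_mono (hg : Integrable g) (hg0 : ∀ s, 0 ≤ g s) :
    Monotone (fun s => ∫ τ in (0:ℝ)..s, g τ) := by
  intro a b hab
  have h1 : (∫ τ in (0:ℝ)..b, g τ) - (∫ τ in (0:ℝ)..a, g τ) = ∫ τ in a..b, g τ := by
    rw [integral_interval_sub_left hg.intervalIntegrable hg.intervalIntegrable]
  have h2 : 0 ≤ ∫ τ in a..b, g τ :=
    intervalIntegral.integral_nonneg hab (fun u _ => hg0 u)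
  linarith

private lemma G_cont (hg : Integrable g) :
    Continuous (fun s => ∫ τ in (0:ℝ)..s, g τ) :=
  intervalIntegral.continuous_primitive (fun a b => hg.intervalIntegrable) 0

private lemma G_zero : (∫ τ in (0:ℝ)..(0:ℝ), g τ) = 0 := by simp

private lemma G_bdd (hg : Integrable g) (hg0 : ∀ s, 0 ≤ g s) (s : ℝ) :
    (∫ τ in (0:ℝ)..s, g τ) ≤ ∫ τ, g τ := by
  rcases le_or_gt 0 s with hs | hs
  · rw [intervalIntegral.integral_of_le hs]
    exact setIntegral_le_integral hg (Filter.Eventually.of_forall hg0)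
  · rw [intervalIntegral.integral_of_ge hs.le]
    have : 0 ≤ ∫ τ in Set.Ioc s 0, g τ := by
      apply setIntegral_nonneg measurableSet_Ioc (fun x _ => hg0 x)
    have h2 : 0 ≤ ∫ τ, g τ := integral_nonneg hg0
    linarith

private lemma ge_int (hg : Integrable g) (hg0 : ∀ s, 0 ≤ g s) :
    Integrable (fun s => g s * Real.exp (∫ τ in (0:ℝ)..s, g τ)) := by
  apply Integrable.mono' (g := fun s => g s * Real.exp (∫ τ, g τ)) (hg.mul_const _)
    (hg.aestronglyMeasurable.mul ((Real.continuous_exp.comp (G_cont hg)).aestronglyMeasurable))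
  refine Filter.Eventually.of_forall (fun s => ?_)
  simp only [Pi.mul_apply, Function.comp_apply]
  rw [Real.norm_eq_abs, abs_mul, abs_of_nonneg (hg0 s), abs_of_nonneg (Real.exp_pos _).le]
  exact mul_le_mul_of_nonneg_left (Real.exp_le_exp.2 (G_bdd hg hg0 s)) (hg0 s)

private lemma piece_bound (hg : Integrable g) (hg0 : ∀ s, 0 ≤ g s)
    {a b : ℝ} (hab : a ≤ b) :
    (∫ s in a..b, g s * Real.exp (∫ τ in (0:ℝ)..s, g τ))
      ≤ Real.exp (∫ τ in (0:ℝ)..b, g τ) *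
          ((∫ τ in (0:ℝ)..b, g τ) - (∫ τ in (0:ℝ)..a, g τ)) := by
  set G : ℝ → ℝ := fun s => ∫ τ in (0:ℝ)..s, g τ with hG
  have h1 : (∫ s in a..b, g s * Real.exp (G s)) ≤ ∫ s in a..b, g s * Real.exp (G b) := by
    apply intervalIntegral.integral_mono_on hab ((ge_int hg hg0).intervalIntegrable)
      ((hg.mul_const _).intervalIntegrable)
    intro x hx
    exact mul_le_mul_of_nonneg_left (Real.exp_le_exp.2 (G_mono hg hg0 hx.2)) (hg0 x)
  have h2 : (∫ s in a..b, g s * Real.exp (G b)) = Real.exp (G b) * (G b - G a) := by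
    rw [intervalIntegral.integral_mul_const, hG]
    rw [integral_interval_sub_left hg.intervalIntegrable hg.intervalIntegrable]
    ring
  linarith

private lemma key_exp (hg : Integrable g) (hg0 : ∀ s, 0 ≤ g s) {r : ℝ} (hr : 0 ≤ r) :
    (∫ s in (0:ℝ)..r, g s * Real.exp (∫ τ in (0:ℝ)..s, g τ))
      ≤ Real.exp (∫ τ in (0:ℝ)..r, g τ) - 1 := by
  set G : ℝ → ℝ := fun s => ∫ τ in (0:ℝ)..s, g τ with hGdef
  have hG0 : G 0 = 0 := by simp [hGdef]
  have hGr0 : 0 ≤ G r := by rw [← hG0]; exact G_mono hg hg0 hr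
  have main : ∀ n : ℕ, 1 ≤ n →
      (∫ s in (0:ℝ)..r, g s * Real.exp (G s))
        ≤ Real.exp (G r / n) * (Real.exp (G r) - 1) := by
    intro n hn
    have hnR : (0:ℝ) < n := by exact_mod_cast hn
    set c : ℝ := G r / n with hc
    have hc0 : 0 ≤ c := div_nonneg hGr0 hnR.le
    have hnc : (n : ℝ) * c = G r := by rw [hc]; field_simp [hnR.ne']
    set t : ℕ → ℝ := fun i => sSup {s ∈ Icc 0 r | G s ≤ i * c} with ht
    have hSne : ∀ i : ℕ, ({s ∈ Icc 0 r | G s ≤ i * c}).Nonempty := by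
      intro i
      exact ⟨0, ⟨le_refl 0, hr⟩, by rw [hG0]; positivity⟩
    have hSbdd : ∀ i : ℕ, BddAbove {s ∈ Icc 0 r | G s ≤ i * c} :=
      fun i => bddAbove_Icc.mono (sep_subset _ _)
    have hSclosed : ∀ i : ℕ, IsClosed {s ∈ Icc 0 r | G s ≤ i * c} := by
      intro i
      have : {s ∈ Icc 0 r | G s ≤ i * c} = Icc 0 r ∩ G ⁻¹' (Iic (i * c)) := rfl
      rw [this]
      exact isClosed_Icc.inter (isClosed_Iic.preimage (G_cont hg))
    have htmem : ∀ i : ℕ, t i ∈ {s ∈ Icc 0 r | G s ≤ i * c} :=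
      fun i => (hSclosed i).csSup_mem (hSne i) (hSbdd i)
    have hGt : ∀ i : ℕ, i ≤ n → G (t i) = i * c := by
      intro i hi
      have hic : (i : ℝ) * c ∈ Icc (G 0) (G r) := by
        constructor
        · rw [hG0]; positivity
        · rw [← hnc]
          exact mul_le_mul_of_nonneg_right (by exact_mod_cast hi) hc0
      obtain ⟨s₀, hs₀mem, hs₀⟩ := intermediate_value_Icc hr (G_cont hg).continuousOn hic
      have h1 : s₀ ≤ t i := le_csSup (hSbdd i) ⟨hs₀mem, le_of_eq hs₀⟩
      have h2 : (i : ℝ) * c ≤ G (t i) := hs₀ ▸ G_mono hg hg0 h1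
      exact le_antisymm (htmem i).2 h2
    have htmono : ∀ i j : ℕ, i ≤ j → t i ≤ t j := by
      intro i j hij
      apply csSup_le_csSup (hSbdd j) (hSne i)
      intro s hs
      refine ⟨hs.1, hs.2.trans ?_⟩
      exact mul_le_mul_of_nonneg_right (by exact_mod_cast hij) hc0
    have hInt : Integrable (fun s => g s * Real.exp (G s)) := ge_int hg hg0
    -- split the integral
    have hsplit : (∫ s in (0:ℝ)..r, g s * Real.exp (G s))
        = (∫ s in (0:ℝ)..(t 0), g s * Real.exp (G s))
          + (∑ i ∈ Finset.range n, ∫ s in (t i)..(t (i+1)), g s * Real.exp (G s))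
          + (∫ s in (t n)..r, g s * Real.exp (G s)) := by
      have hsum_eq := sum_integral_adjacent_intervals (a := t) (n := n)
        (μ := volume) (f := fun s => g s * Real.exp (G s))
        (fun k _ => hInt.intervalIntegrable)
      beta_reduce at hsum_eq
      rw [hsum_eq,
        integral_add_adjacent_intervals hInt.intervalIntegrable hInt.intervalIntegrable,
        integral_add_adjacent_intervals hInt.intervalIntegrable hInt.intervalIntegrable]
    have hB0 : (∫ s in (0:ℝ)..(t 0), g s * Real.exp (G s)) ≤ 0 := by
      have hb : (∫ s in (0:ℝ)..(t 0), g s * Real.exp (G s))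
          ≤ Real.exp (G (t 0)) * (G (t 0) - G 0) := piece_bound hg hg0 (htmem 0).1.1
      have h0 : G (t 0) = 0 := by simpa using hGt 0 (Nat.zero_le n)
      rw [h0, hG0] at hb
      simpa using hb
    have hBn : (∫ s in (t n)..r, g s * Real.exp (G s)) ≤ 0 := by
      have hb : (∫ s in (t n)..r, g s * Real.exp (G s))
          ≤ Real.exp (G r) * (G r - G (t n)) := piece_bound hg hg0 (htmem n).1.2
      rw [hGt n le_rfl, hnc] at hb
      simpa using hb
    have hBi : ∀ i : ℕ, i < n →
        (∫ s in (t i)..(t (i+1)), g s * Real.exp (G s))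
          ≤ Real.exp c * (Real.exp ((i+1 : ℕ) * c) - Real.exp (i * c)) := by
      intro i hi
      have h1 : (∫ s in (t i)..(t (i+1)), g s * Real.exp (G s))
          ≤ Real.exp (G (t (i+1))) * (G (t (i+1)) - G (t i)) :=
        piece_bound hg hg0 (htmono i (i+1) (Nat.le_succ i))
      rw [hGt i hi.le, hGt (i+1) hi] at h1
      refine h1.trans ?_
      have hcast : ((i+1 : ℕ) : ℝ) * c = (i : ℝ) * c + c := by push_cast; ring
      rw [hcast, Real.exp_add]
      have hkey := Real.add_one_le_exp c
      have hpos : 0 ≤ Real.exp ((i:ℝ)*c) * Real.exp c * (Real.exp c - 1 - c) :=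
        mul_nonneg (mul_nonneg (Real.exp_pos _).le (Real.exp_pos _).le) (by linarith)
      nlinarith [hpos]
    have hsum : (∑ i ∈ Finset.range n, ∫ s in (t i)..(t (i+1)), g s * Real.exp (G s))
        ≤ Real.exp c * (Real.exp (G r) - 1) := by
      calc (∑ i ∈ Finset.range n, ∫ s in (t i)..(t (i+1)), g s * Real.exp (G s))
          ≤ ∑ i ∈ Finset.range n,
              Real.exp c * (Real.exp ((i+1 : ℕ) * c) - Real.exp ((i : ℕ) * c)) :=
            Finset.sum_le_sum (fun i hi => hBi i (Finset.mem_range.1 hi))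
        _ = Real.exp c * ∑ i ∈ Finset.range n,
              (Real.exp ((i+1 : ℕ) * c) - Real.exp ((i : ℕ) * c)) := by
            rw [Finset.mul_sum]
        _ = Real.exp c * (Real.exp ((n : ℕ) * c) - Real.exp ((0 : ℕ) * c)) := by
            rw [Finset.sum_range_sub (fun i : ℕ => Real.exp ((i : ℕ) * c))]
        _ = Real.exp c * (Real.exp (G r) - 1) := by
            rw [hnc]; norm_num
    rw [hsplit]
    have : Real.exp (G r / n) = Real.exp c := by rw [hc]
    rw [this]
    linarith
  -- take the limit n → ∞
  have hlim : Tendsto (fun n : ℕ => Real.exp (G r / n) * (Real.exp (G r) - 1))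
      atTop (𝓝 (Real.exp (G r) - 1)) := by
    have h1 : Tendsto (fun n : ℕ => G r / n) atTop (𝓝 0) :=
      tendsto_const_div_atTop_nhds_zero_nat (G r)
    have h2 : Tendsto (fun n : ℕ => Real.exp (G r / n)) atTop (𝓝 1) := by
      have := (Real.continuous_exp.tendsto 0).comp h1
      simpa [Function.comp_def] using this
    have := h2.mul_const (Real.exp (G r) - 1)
    simpa using this
  exact ge_of_tendsto hlim (Filter.eventually_atTop.2 ⟨1, fun n hn => main n hn⟩)

end Gronwall

section Gronwall2
variable {g : ℝ → ℝ}

private lemma gronwall_core {f : ℝ → ℝ} {a t : ℝ}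
    (hg : Integrable g) (hg0 : ∀ s, 0 ≤ g s)
    (ht : 0 ≤ t) (hf : ContinuousOn f (Icc 0 t)) (ha : 0 ≤ a)
    (hle : ∀ r ∈ Icc 0 t, f r ≤ a + ∫ s in (0:ℝ)..r, g s * f s) :
    ∀ r ∈ Icc 0 t, f r ≤ a * Real.exp (∫ s in (0:ℝ)..r, g s) := by
  set G : ℝ → ℝ := fun s => ∫ τ in (0:ℝ)..s, g τ with hGdef
  -- integrability of g * f on [0, t]
  obtain ⟨M, hM⟩ := (isCompact_Icc (a := (0:ℝ)) (b := t)).exists_bound_of_continuousOn hf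
  have hgf : IntegrableOn (fun s => g s * f s) (Icc 0 t) := by
    apply Integrable.mono' (g := fun s => g s * M) ((hg.restrict).mul_const M)
      ((hg.restrict.aestronglyMeasurable).mul (hf.aestronglyMeasurable measurableSet_Icc))
    rw [ae_restrict_iff' measurableSet_Icc]
    refine Filter.Eventually.of_forall (fun s hs => ?_)
    simp only [Pi.mul_apply]
    rw [Real.norm_eq_abs, abs_mul, abs_of_nonneg (hg0 s)]
    exact mul_le_mul_of_nonneg_left (hM s hs) (hg0 s)
  have hgfI : ∀ r ∈ Icc 0 t, IntervalIntegrable (fun s => g s * f s) volume 0 r := by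
    intro r hr
    rw [intervalIntegrable_iff_integrableOn_Ioc_of_le hr.1]
    exact (hgf.mono_set (Icc_subset_Icc le_rfl hr.2)).mono_set Ioc_subset_Icc_self
  -- main ε-claim
  have main : ∀ ε > 0, ∀ r ∈ Icc 0 t, f r ≤ (a + ε) * Real.exp (G r) := by
    intro ε hε
    by_contra hcon
    push_neg at hcon
    obtain ⟨r₁, hr₁, hr₁'⟩ := hcon
    set S : Set ℝ := {r ∈ Icc 0 t | (a + ε) * Real.exp (G r) < f r} with hS
    have hSne : S.Nonempty := ⟨r₁, hr₁, hr₁'⟩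
    have hSbdd : BddBelow S := ⟨0, fun x hx => hx.1.1⟩
    set r₀ : ℝ := sInf S with hr₀def
    have hFcont : ContinuousOn (fun r => f r - (a + ε) * Real.exp (G r)) (Icc 0 t) :=
      hf.sub ((continuous_const.mul (Real.continuous_exp.comp (G_cont hg))).continuousOn)
    have hAclosed : IsClosed (Icc 0 t ∩
        (fun r => f r - (a + ε) * Real.exp (G r)) ⁻¹' (Ici 0)) :=
      hFcont.preimage_isClosed_of_isClosed isClosed_Icc isClosed_Ici
    have hSsub : S ⊆ Icc 0 t ∩ (fun r => f r - (a + ε) * Real.exp (G r)) ⁻¹' (Ici 0) := by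
      intro x hx
      exact ⟨hx.1, by simp only [mem_preimage, mem_Ici]; linarith [hx.2]⟩
    have hr₀mem : r₀ ∈ Icc 0 t ∩ (fun r => f r - (a + ε) * Real.exp (G r)) ⁻¹' (Ici 0) :=
      hAclosed.closure_subset ((closure_mono hSsub) (csInf_mem_closure hSne hSbdd))
    have hr₀Icc : r₀ ∈ Icc 0 t := hr₀mem.1
    have hr₀ge : (a + ε) * Real.exp (G r₀) ≤ f r₀ := by
      have := hr₀mem.2
      simp only [mem_preimage, mem_Ici] at this
      linarith
    have hless : ∀ s ∈ Ico 0 r₀, f s ≤ (a + ε) * Real.exp (G s) := by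
      intro s hs
      have hns : s ∉ S := notMem_of_lt_csInf hs.2 hSbdd
      by_contra hcon2
      exact hns ⟨⟨hs.1, le_trans hs.2.le hr₀Icc.2⟩, lt_of_not_ge hcon2⟩
    -- integral comparison at r₀
    have hcomp : (∫ s in (0:ℝ)..r₀, g s * f s)
        ≤ ∫ s in (0:ℝ)..r₀, (a + ε) * (g s * Real.exp (G s)) := by
      apply intervalIntegral.integral_mono_ae_restrict hr₀Icc.1 (hgfI r₀ hr₀Icc)
        (((ge_int hg hg0).const_mul (a + ε)).intervalIntegrable)
      have h1 : ∀ᵐ s : ℝ, s ≠ r₀ := by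
        have h0 : (volume : Measure ℝ) {r₀} = 0 := measure_singleton r₀
        rw [ae_iff]
        convert h0 using 2
        ext x
        simp [not_ne_iff]
      refine (ae_restrict_iff' measurableSet_Icc).2 ?_
      filter_upwards [h1] with s hs hmem
      have hsI : s ∈ Ico 0 r₀ := ⟨hmem.1, lt_of_le_of_ne hmem.2 hs⟩
      have := hless s hsI
      calc g s * f s ≤ g s * ((a + ε) * Real.exp (G s)) :=
            mul_le_mul_of_nonneg_left this (hg0 s)
        _ = (a + ε) * (g s * Real.exp (G s)) := by ring
    have hkey : (∫ s in (0:ℝ)..r₀, (a + ε) * (g s * Real.exp (G s)))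
        ≤ (a + ε) * (Real.exp (G r₀) - 1) := by
      rw [intervalIntegral.integral_const_mul]
      exact mul_le_mul_of_nonneg_left (key_exp hg hg0 hr₀Icc.1) (by linarith)
    have := hle r₀ hr₀Icc
    have hfinal : f r₀ ≤ a + (a + ε) * (Real.exp (G r₀) - 1) := by linarith
    nlinarith [hr₀ge]
  -- conclude
  intro r hr
  have hexp : 0 < Real.exp (G r) := Real.exp_pos _
  refine le_of_forall_pos_le_add (fun ε hε => ?_)
  have := main (ε / Real.exp (G r)) (by positivity) r hr
  have h2 : (a + ε / Real.exp (G r)) * Real.exp (G r) = a * Real.exp (G r) + ε := by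
    field_simp
  linarith [this, h2 ▸ this]

end Gronwall2

section Helpers

private lemma integrableOn_mul_cont {g f : ℝ → ℝ} {t : ℝ}
    (hg : IntegrableOn g (Icc 0 t)) (hf : ContinuousOn f (Icc 0 t)) :
    IntegrableOn (fun s => g s * f s) (Icc 0 t) := by
  obtain ⟨M, hM⟩ := (isCompact_Icc (a := (0:ℝ)) (b := t)).exists_bound_of_continuousOn hf
  apply Integrable.mono' (g := fun s => ‖g s‖ * M) (hg.norm.mul_const M)
    (hg.aestronglyMeasurable.mul (hf.aestronglyMeasurable measurableSet_Icc))
  rw [ae_restrict_iff' measurableSet_Icc]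
  refine Filter.Eventually.of_forall (fun s hs => ?_)
  simp only [Pi.mul_apply]
  rw [norm_mul]
  exact mul_le_mul_of_nonneg_left (hM s hs) (norm_nonneg _)

private lemma deriv_integrableOn {F : Type*} [NormedAddCommGroup F] [NormedSpace ℝ F]
    [CompleteSpace F] {v w : ℝ → F} {t : ℝ}
    (hd : ∀ s ∈ Icc 0 t, HasDerivAt v (w s) s)
    {dom : ℝ → ℝ} (hdom : IntegrableOn dom (Icc 0 t))
    (hb : ∀ s ∈ Icc 0 t, ‖w s‖ ≤ dom s) :
    IntegrableOn w (Icc 0 t) := by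
  have hmeas : AEStronglyMeasurable w (volume.restrict (Icc 0 t)) := by
    have hae : ∀ᵐ s ∂(volume.restrict (Icc 0 t)), deriv v s = w s :=
      (ae_restrict_iff' measurableSet_Icc).2
        (Filter.Eventually.of_forall (fun s hs => (hd s hs).deriv))
    exact ((stronglyMeasurable_deriv v).aestronglyMeasurable).congr hae
  exact Integrable.mono' hdom hmeas
    ((ae_restrict_iff' measurableSet_Icc).2 (Filter.Eventually.of_forall hb))

private lemma norm_sub_le_integral_norm {F : Type*} [NormedAddCommGroup F] [NormedSpace ℝ F]
    [CompleteSpace F] {v w : ℝ → F} {t r : ℝ} (hr : r ∈ Icc 0 t)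
    (hd : ∀ s ∈ Icc 0 t, HasDerivAt v (w s) s)
    (hw : IntegrableOn w (Icc 0 t)) :
    ‖v r - v 0‖ ≤ ∫ s in (0:ℝ)..r, ‖w s‖ := by
  have hwi : IntervalIntegrable w volume 0 r := by
    rw [intervalIntegrable_iff_integrableOn_Ioc_of_le hr.1]
    exact (hw.mono_set (Icc_subset_Icc le_rfl hr.2)).mono_set Ioc_subset_Icc_self
  have heq : (∫ s in (0:ℝ)..r, w s) = v r - v 0 := by
    apply intervalIntegral.integral_eq_sub_of_hasDerivAt (fun s hs => ?_) hwi
    rw [uIcc_of_le hr.1] at hs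
    exact hd s ⟨hs.1, hs.2.trans hr.2⟩
  rw [← heq]
  exact intervalIntegral.norm_integral_le_integral_norm hr.1

end Helpers

private lemma intervalIntegrable_of_integrableOn_Icc {F : Type*} [NormedAddCommGroup F]
    {f : ℝ → F} {t r : ℝ} (hr : r ∈ Icc 0 t) (hf : IntegrableOn f (Icc 0 t)) :
    IntervalIntegrable f volume 0 r := by
  rw [intervalIntegrable_iff_integrableOn_Ioc_of_le hr.1]
  exact (hf.mono_set (Icc_subset_Icc le_rfl hr.2)).mono_set Ioc_subset_Icc_self

/-- The spatial derivative of the flow of a velocity field that is `C^{1,β}` in space,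
uniformly integrably in time, remains `β`-Hölder: there is a constant `C = C(β)` with
`[∇_ξ X(t,·)]_{C^β} ≤ exp(C ∫_0^t (‖D_x u(s)‖_∞ + [D_x u(s)]_{C^β}) ds)`. -/
theorem flow_derivative_holder (β : ℝ) (hβ : β ∈ Ioc (0:ℝ) 1) :
    ∃ C : ℝ, 0 < C ∧
      ∀ (d : ℕ), 1 ≤ d → ∀ (T : ℝ), 0 < T →
      ∀ (u X : ℝ → EuclideanSpace ℝ (Fin d) → EuclideanSpace ℝ (Fin d))
        (DX : ℝ → EuclideanSpace ℝ (Fin d) →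
          (EuclideanSpace ℝ (Fin d) →L[ℝ] EuclideanSpace ℝ (Fin d)))
        (h H : ℝ → ℝ),
        Continuous (fun p : ℝ × EuclideanSpace ℝ (Fin d) => u p.1 p.2) →
        (∀ s ∈ Icc 0 T, ContDiff ℝ 1 (u s)) →
        IntegrableOn h (Icc 0 T) →
        IntegrableOn H (Icc 0 T) →
        (∀ s ∈ Icc 0 T, ∀ x, ‖fderiv ℝ (u s) x‖ ≤ h s) →
        (∀ s ∈ Icc 0 T, ∀ x y, ‖fderiv ℝ (u s) x - fderiv ℝ (u s) y‖ ≤ H s * ‖x - y‖ ^ β) →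
        (∀ ξ, X 0 ξ = ξ) →
        (∀ ξ, ∀ t ∈ Icc 0 T, HasDerivAt (fun s => X s ξ) (u t (X t ξ)) t) →
        (∀ t ∈ Icc 0 T, ∀ ξ, HasFDerivAt (X t) (DX t ξ) ξ) →
        (∀ ξ, ∀ t ∈ Icc 0 T, HasDerivAt (fun s => DX s ξ)
            ((fderiv ℝ (u t) (X t ξ)).comp (DX t ξ)) t) →
        (∀ ξ, Continuous fun t => DX t ξ) →
        ∀ t ∈ Icc 0 T, ∀ x y,
          ‖DX t x - DX t y‖
            ≤ Real.exp (C * ∫ s in (0:ℝ)..t, (h s + H s)) * ‖x - y‖ ^ β := by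
  obtain ⟨hβ0, hβ1⟩ := hβ
  refine ⟨3, by norm_num, ?_⟩
  intro d hd T hT u X DX h H hucont hC1 hinth hintH hbdd hhol hX0 hflow hDXf hDXd hDXc t htI x y
  have ht0 : 0 ≤ t := htI.1
  have htT : t ≤ T := htI.2
  have hIccsub : Icc (0:ℝ) t ⊆ Icc 0 T := Icc_subset_Icc le_rfl htT
  -- nonnegativity of h and H on [0, T]
  have hh0 : ∀ s ∈ Icc 0 T, 0 ≤ h s := fun s hs => le_trans (norm_nonneg _) (hbdd s hs 0)
  have hH0 : ∀ s ∈ Icc 0 T, 0 ≤ H s := by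
    intro s hs
    have h1 := le_trans (norm_nonneg _) (hhol s hs (EuclideanSpace.single ⟨0, hd⟩ (1:ℝ)) 0)
    rwa [sub_zero, EuclideanSpace.norm_single, norm_one, Real.one_rpow, mul_one] at h1
  -- indicator versions, integrable on all of ℝ and nonnegative
  set g : ℝ → ℝ := (Icc 0 T).indicator h with hgdef
  set GH : ℝ → ℝ := (Icc 0 T).indicator H with hGHdef
  have hgInt : Integrable g := (integrable_indicator_iff measurableSet_Icc).2 hinth
  have hGHInt : Integrable GH := (integrable_indicator_iff measurableSet_Icc).2 hintH
  have hg0 : ∀ s, 0 ≤ g s := by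
    intro s
    by_cases hs : s ∈ Icc 0 T
    · rw [hgdef, indicator_of_mem hs]; exact hh0 s hs
    · rw [hgdef, indicator_of_notMem hs]
  have hGH0 : ∀ s, 0 ≤ GH s := by
    intro s
    by_cases hs : s ∈ Icc 0 T
    · rw [hGHdef, indicator_of_mem hs]; exact hH0 s hs
    · rw [hGHdef, indicator_of_notMem hs]
  have hgeq : ∀ s ∈ Icc 0 T, g s = h s := fun s hs => indicator_of_mem hs h
  have hGHeq : ∀ s ∈ Icc 0 T, GH s = H s := fun s hs => indicator_of_mem hs H
  -- continuity facts
  have f_cont : Continuous fun s => ‖DX s x - DX s y‖ := ((hDXc x).sub (hDXc y)).norm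
  have b_cont : Continuous fun s => ‖DX s y‖ := (hDXc y).norm
  have hXcont : ∀ ξ, ContinuousOn (fun s => X s ξ) (Icc 0 T) :=
    fun ξ s hs => ((hflow ξ s hs).continuousAt).continuousWithinAt
  have l_cont : ContinuousOn (fun s => ‖X s x - X s y‖) (Icc 0 T) :=
    ((hXcont x).sub (hXcont y)).norm
  -- mean value bound for u
  have humv : ∀ s ∈ Icc 0 T, ∀ p q : EuclideanSpace ℝ (Fin d),
      ‖u s p - u s q‖ ≤ h s * ‖p - q‖ := by
    intro s hs p q
    have := convex_univ.norm_image_sub_le_of_norm_fderiv_le (f := u s)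
      (fun z _ => ((hC1 s hs).differentiable one_ne_zero).differentiableAt)
      (fun z _ => hbdd s hs z) (mem_univ q) (mem_univ p)
    simpa using this
  -- Step 1 : bound on ‖X s x - X s y‖
  have hXd2 : ∀ s ∈ Icc 0 t, HasDerivAt (fun τ => X τ x - X τ y)
      (u s (X s x) - u s (X s y)) s :=
    fun s hs => (hflow x s (hIccsub hs)).sub (hflow y s (hIccsub hs))
  have hwX_cont : ContinuousOn (fun s => u s (X s x) - u s (X s y)) (Icc 0 T) := by
    have c1 : ContinuousOn (fun s => u s (X s x)) (Icc 0 T) :=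
      hucont.comp_continuousOn (f := fun s => (s, X s x)) (continuousOn_id.prodMk (hXcont x))
    have c2 : ContinuousOn (fun s => u s (X s y)) (Icc 0 T) :=
      hucont.comp_continuousOn (f := fun s => (s, X s y)) (continuousOn_id.prodMk (hXcont y))
    exact c1.sub c2
  have hwX_int : IntegrableOn (fun s => u s (X s x) - u s (X s y)) (Icc 0 t) :=
    (hwX_cont.mono hIccsub).integrableOn_compact isCompact_Icc
  have hlle : ∀ r ∈ Icc 0 t,
      ‖X r x - X r y‖ ≤ ‖x - y‖ + ∫ s in (0:ℝ)..r, g s * ‖X s x - X s y‖ := by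
    intro r hr
    have h1 := norm_sub_le_integral_norm hr hXd2 hwX_int
    have h0 : X 0 x - X 0 y = x - y := by rw [hX0, hX0]
    have h2 : (∫ s in (0:ℝ)..r, ‖u s (X s x) - u s (X s y)‖)
        ≤ ∫ s in (0:ℝ)..r, g s * ‖X s x - X s y‖ := by
      apply intervalIntegral.integral_mono_on hr.1
        (intervalIntegrable_of_integrableOn_Icc hr hwX_int.norm)
        (intervalIntegrable_of_integrableOn_Icc hr
          (integrableOn_mul_cont (hgInt.integrableOn) (l_cont.mono hIccsub)))
      intro s hs
      have hsT : s ∈ Icc 0 T := hIccsub ⟨hs.1, hs.2.trans hr.2⟩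
      rw [hgeq s hsT]
      exact humv s hsT _ _
    rw [h0] at h1
    have h4 := norm_sub_norm_le (X r x - X r y) (x - y)
    linarith
  have hlbound : ∀ r ∈ Icc 0 t,
      ‖X r x - X r y‖ ≤ ‖x - y‖ * Real.exp (∫ s in (0:ℝ)..r, g s) :=
    gronwall_core hgInt hg0 ht0 (l_cont.mono hIccsub) (norm_nonneg _) hlle
  -- Step 2 : bound on ‖DX s y‖
  have hDXdy : ∀ s ∈ Icc 0 t, HasDerivAt (fun τ => DX τ y)
      ((fderiv ℝ (u s) (X s y)).comp (DX s y)) s :=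
    fun s hs => hDXd y s (hIccsub hs)
  have hwb_bound : ∀ s ∈ Icc 0 t,
      ‖(fderiv ℝ (u s) (X s y)).comp (DX s y)‖ ≤ h s * ‖DX s y‖ := by
    intro s hs
    refine (ContinuousLinearMap.opNorm_comp_le _ _).trans ?_
    exact mul_le_mul_of_nonneg_right (hbdd s (hIccsub hs) _) (norm_nonneg _)
  have hwb_int : IntegrableOn (fun s => (fderiv ℝ (u s) (X s y)).comp (DX s y)) (Icc 0 t) :=
    deriv_integrableOn hDXdy
      (integrableOn_mul_cont (hinth.mono_set hIccsub) b_cont.continuousOn) hwb_bound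
  have hDX0 : ∀ ξ, DX 0 ξ = ContinuousLinearMap.id ℝ (EuclideanSpace ℝ (Fin d)) := by
    intro ξ
    have h1 : HasFDerivAt (X 0) (DX 0 ξ) ξ := hDXf 0 ⟨le_rfl, hT.le⟩ ξ
    have h2 : HasFDerivAt (X 0) (ContinuousLinearMap.id ℝ _) ξ := by
      have hid : X 0 = fun z => z := funext hX0
      rw [hid]
      exact hasFDerivAt_id ξ
    exact h1.unique h2
  have hble : ∀ r ∈ Icc 0 t, ‖DX r y‖ ≤ 1 + ∫ s in (0:ℝ)..r, g s * ‖DX s y‖ := by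
    intro r hr
    have h1 := norm_sub_le_integral_norm hr hDXdy hwb_int
    have h2 : (∫ s in (0:ℝ)..r, ‖(fderiv ℝ (u s) (X s y)).comp (DX s y)‖)
        ≤ ∫ s in (0:ℝ)..r, g s * ‖DX s y‖ := by
      apply intervalIntegral.integral_mono_on hr.1
        (intervalIntegrable_of_integrableOn_Icc hr hwb_int.norm)
        (intervalIntegrable_of_integrableOn_Icc hr
          (integrableOn_mul_cont (hgInt.integrableOn) b_cont.continuousOn))
      intro s hs
      have hst : s ∈ Icc 0 t := ⟨hs.1, hs.2.trans hr.2⟩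
      rw [hgeq s (hIccsub hst)]
      exact hwb_bound s hst
    have h3 : ‖DX 0 y‖ ≤ 1 := by rw [hDX0 y]; exact ContinuousLinearMap.norm_id_le
    have h4 := norm_sub_norm_le (DX r y) (DX 0 y)
    linarith
  have hbbound : ∀ r ∈ Icc 0 t, ‖DX r y‖ ≤ 1 * Real.exp (∫ s in (0:ℝ)..r, g s) :=
    gronwall_core hgInt hg0 ht0 b_cont.continuousOn zero_le_one hble
  -- Step 3 : bound on ‖DX s x - DX s y‖
  have hDXdiff : ∀ s ∈ Icc 0 t, HasDerivAt (fun τ => DX τ x - DX τ y)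
      ((fderiv ℝ (u s) (X s x)).comp (DX s x) - (fderiv ℝ (u s) (X s y)).comp (DX s y)) s :=
    fun s hs => (hDXd x s (hIccsub hs)).sub (hDXd y s (hIccsub hs))
  have hwf_bound : ∀ s ∈ Icc 0 t,
      ‖(fderiv ℝ (u s) (X s x)).comp (DX s x) - (fderiv ℝ (u s) (X s y)).comp (DX s y)‖
        ≤ h s * ‖DX s x - DX s y‖ + H s * (‖X s x - X s y‖ ^ β * ‖DX s y‖) := by
    intro s hs
    have hsT := hIccsub hs
    have hsplit : (fderiv ℝ (u s) (X s x)).comp (DX s x)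
          - (fderiv ℝ (u s) (X s y)).comp (DX s y)
        = (fderiv ℝ (u s) (X s x)).comp (DX s x - DX s y)
          + ((fderiv ℝ (u s) (X s x)) - (fderiv ℝ (u s) (X s y))).comp (DX s y) := by
      rw [ContinuousLinearMap.comp_sub, ContinuousLinearMap.sub_comp]
      abel
    rw [hsplit]
    refine (norm_add_le _ _).trans ?_
    have e1 : ‖(fderiv ℝ (u s) (X s x)).comp (DX s x - DX s y)‖
        ≤ h s * ‖DX s x - DX s y‖ :=
      (ContinuousLinearMap.opNorm_comp_le _ _).trans
        (mul_le_mul_of_nonneg_right (hbdd s hsT _) (norm_nonneg _))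
    have e2 : ‖(fderiv ℝ (u s) (X s x) - fderiv ℝ (u s) (X s y)).comp (DX s y)‖
        ≤ H s * (‖X s x - X s y‖ ^ β * ‖DX s y‖) := by
      refine (ContinuousLinearMap.opNorm_comp_le _ _).trans ?_
      rw [← mul_assoc]
      exact mul_le_mul_of_nonneg_right (hhol s hsT _ _) (norm_nonneg _)
    linarith
  have lb_cont : ContinuousOn (fun s => ‖X s x - X s y‖ ^ β * ‖DX s y‖) (Icc 0 t) :=
    ((l_cont.mono hIccsub).rpow_const (fun s _ => Or.inr hβ0.le)).mul b_cont.continuousOn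
  have hdom_int : IntegrableOn (fun s => h s * ‖DX s x - DX s y‖
      + H s * (‖X s x - X s y‖ ^ β * ‖DX s y‖)) (Icc 0 t) :=
    (integrableOn_mul_cont (hinth.mono_set hIccsub) f_cont.continuousOn).add
      (integrableOn_mul_cont (hintH.mono_set hIccsub) lb_cont)
  have hwf_int : IntegrableOn (fun s => (fderiv ℝ (u s) (X s x)).comp (DX s x)
      - (fderiv ℝ (u s) (X s y)).comp (DX s y)) (Icc 0 t) :=
    deriv_integrableOn hDXdiff hdom_int hwf_bound
  -- the constants
  set Gt : ℝ := ∫ s in (0:ℝ)..t, g s with hGtdef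
  set Bt : ℝ := ∫ s in (0:ℝ)..t, GH s with hBtdef
  have hGt0 : 0 ≤ Gt := intervalIntegral.integral_nonneg ht0 (fun s _ => hg0 s)
  have hBt0 : 0 ≤ Bt := intervalIntegral.integral_nonneg ht0 (fun s _ => hGH0 s)
  set K : ℝ := ‖x - y‖ ^ β * (Real.exp Gt * Real.exp Gt) with hKdef
  have hK0 : 0 ≤ K := by positivity
  have hstuff : ∀ s ∈ Icc 0 t, ‖X s x - X s y‖ ^ β * ‖DX s y‖ ≤ K := by
    intro s hs
    have hGmono : (∫ τ in (0:ℝ)..s, g τ) ≤ Gt := G_mono hgInt hg0 hs.2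
    have hGs0 : 0 ≤ ∫ τ in (0:ℝ)..s, g τ :=
      intervalIntegral.integral_nonneg hs.1 (fun τ _ => hg0 τ)
    have hA : ‖X s x - X s y‖ ^ β ≤ ‖x - y‖ ^ β * Real.exp Gt := by
      have h3 : ‖X s x - X s y‖ ^ β
          ≤ (‖x - y‖ * Real.exp (∫ τ in (0:ℝ)..s, g τ)) ^ β :=
        Real.rpow_le_rpow (norm_nonneg _) (hlbound s hs) hβ0.le
      rw [Real.mul_rpow (norm_nonneg _) (Real.exp_pos _).le] at h3
      refine h3.trans ?_
      have h4 : Real.exp (∫ τ in (0:ℝ)..s, g τ) ^ β ≤ Real.exp Gt := by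
        calc Real.exp (∫ τ in (0:ℝ)..s, g τ) ^ β
            ≤ Real.exp (∫ τ in (0:ℝ)..s, g τ) ^ (1:ℝ) :=
              Real.rpow_le_rpow_of_exponent_le (Real.one_le_exp hGs0) hβ1
          _ = Real.exp (∫ τ in (0:ℝ)..s, g τ) := Real.rpow_one _
          _ ≤ Real.exp Gt := Real.exp_le_exp.2 hGmono
      exact mul_le_mul_of_nonneg_left h4 (Real.rpow_nonneg (norm_nonneg _) β)
    have hB : ‖DX s y‖ ≤ Real.exp Gt := by
      have := hbbound s hs
      rw [one_mul] at this
      exact this.trans (Real.exp_le_exp.2 hGmono)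
    calc ‖X s x - X s y‖ ^ β * ‖DX s y‖
        ≤ (‖x - y‖ ^ β * Real.exp Gt) * Real.exp Gt :=
          mul_le_mul hA hB (norm_nonneg _) (by positivity)
      _ = K := by rw [hKdef]; ring
  have hfle : ∀ r ∈ Icc 0 t,
      ‖DX r x - DX r y‖ ≤ K * Bt + ∫ s in (0:ℝ)..r, g s * ‖DX s x - DX s y‖ := by
    intro r hr
    have h1 := norm_sub_le_integral_norm hr hDXdiff hwf_int
    have h0 : DX 0 x - DX 0 y = 0 := by rw [hDX0 x, hDX0 y, sub_self]
    rw [h0, sub_zero] at h1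
    have hII1 : IntervalIntegrable (fun s => g s * ‖DX s x - DX s y‖) volume 0 r :=
      intervalIntegrable_of_integrableOn_Icc hr
        (integrableOn_mul_cont hgInt.integrableOn f_cont.continuousOn)
    have hII2 : IntervalIntegrable (fun s => GH s * (‖X s x - X s y‖ ^ β * ‖DX s y‖)) volume 0 r :=
      intervalIntegrable_of_integrableOn_Icc hr
        (integrableOn_mul_cont hGHInt.integrableOn lb_cont)
    have h2 : (∫ s in (0:ℝ)..r,
          ‖(fderiv ℝ (u s) (X s x)).comp (DX s x) - (fderiv ℝ (u s) (X s y)).comp (DX s y)‖)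
        ≤ ∫ s in (0:ℝ)..r, (g s * ‖DX s x - DX s y‖
            + GH s * (‖X s x - X s y‖ ^ β * ‖DX s y‖)) := by
      apply intervalIntegral.integral_mono_on hr.1
        (intervalIntegrable_of_integrableOn_Icc hr hwf_int.norm) (hII1.add hII2)
      intro s hs
      have hst : s ∈ Icc 0 t := ⟨hs.1, hs.2.trans hr.2⟩
      rw [hgeq s (hIccsub hst), hGHeq s (hIccsub hst)]
      exact hwf_bound s hst
    have h3 : (∫ s in (0:ℝ)..r, (g s * ‖DX s x - DX s y‖
            + GH s * (‖X s x - X s y‖ ^ β * ‖DX s y‖)))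
        = (∫ s in (0:ℝ)..r, g s * ‖DX s x - DX s y‖)
          + ∫ s in (0:ℝ)..r, GH s * (‖X s x - X s y‖ ^ β * ‖DX s y‖) :=
      intervalIntegral.integral_add hII1 hII2
    have h4 : (∫ s in (0:ℝ)..r, GH s * (‖X s x - X s y‖ ^ β * ‖DX s y‖))
        ≤ ∫ s in (0:ℝ)..r, GH s * K := by
      apply intervalIntegral.integral_mono_on hr.1 hII2
        ((hGHInt.mul_const K).intervalIntegrable)
      intro s hs
      have hst : s ∈ Icc 0 t := ⟨hs.1, hs.2.trans hr.2⟩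
      exact mul_le_mul_of_nonneg_left (hstuff s hst) (hGH0 s)
    have h5 : (∫ s in (0:ℝ)..r, GH s * K) = (∫ s in (0:ℝ)..r, GH s) * K :=
      intervalIntegral.integral_mul_const _ _
    have h6 : (∫ s in (0:ℝ)..r, GH s) ≤ Bt := G_mono hGHInt hGH0 hr.2
    have h7 : (∫ s in (0:ℝ)..r, GH s) * K ≤ Bt * K :=
      mul_le_mul_of_nonneg_right h6 hK0
    nlinarith [h1, h2, h3, h4, h5, h7]
  have hfbound := gronwall_core hgInt hg0 ht0 f_cont.continuousOn
    (mul_nonneg hK0 hBt0) hfle t ⟨ht0, le_rfl⟩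
  -- final assembly
  have hsum : (∫ s in (0:ℝ)..t, (h s + H s)) = Gt + Bt := by
    have hEq : EqOn (fun s => h s + H s) (fun s => g s + GH s) (uIcc 0 t) := by
      intro s hs
      rw [uIcc_of_le ht0] at hs
      have hsT := hIccsub hs
      simp only
      rw [hgeq s hsT, hGHeq s hsT]
    rw [intervalIntegral.integral_congr hEq,
      intervalIntegral.integral_add hgInt.intervalIntegrable hGHInt.intervalIntegrable]
  rw [hsum]
  have hBle : Bt ≤ Real.exp (3 * Bt) := by
    have h1 := Real.add_one_le_exp Bt
    have h2 : Real.exp Bt ≤ Real.exp (3 * Bt) := Real.exp_le_exp.2 (by linarith)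
    linarith
  have hprod : (Real.exp Gt * Real.exp Gt * Real.exp Gt) * Real.exp (3 * Bt)
      = Real.exp (3 * (Gt + Bt)) := by
    rw [show (3:ℝ) * (Gt + Bt) = Gt + (Gt + (Gt + 3 * Bt)) by ring,
      Real.exp_add, Real.exp_add, Real.exp_add]
    ring
  calc ‖DX t x - DX t y‖ ≤ (K * Bt) * Real.exp Gt := hfbound
    _ = (‖x - y‖ ^ β * (Real.exp Gt * Real.exp Gt * Real.exp Gt)) * Bt := by
        rw [hKdef]; ring
    _ ≤ (‖x - y‖ ^ β * (Real.exp Gt * Real.exp Gt * Real.exp Gt)) * Real.exp (3 * Bt) := by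
        apply mul_le_mul_of_nonneg_left hBle (by positivity)
    _ = Real.exp (3 * (Gt + Bt)) * ‖x - y‖ ^ β := by rw [← hprod]; ring
end
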